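/- arXiv:1407.7476 — 6 statements merged into one kernel-verified Lean document; each statement's English description precedes it below -/
import Mathlib

section
/- Let A(Z,Z̄) be a bihomogeneous Hermitian polynomial in Z = (Z₀,Z₁,…,Zₙ) which is a sum of squares of rank p, i.e. A(Z,Z̄) = Σ_{i=1}^p |Fᵢ(Z)|² where F₁,…,F_p are linearly independent homogeneous polynomials of a common degree d. Suppose ‖Z‖²·A(Z,Z̄) = Σ_{j=1}^R |Hⱼ(Z)|² where H₁,…,H_R are linearly independent homogeneous polynomials of degree d+1 (so R is the rank of the SOS ‖Z‖²A). If p ≤ n+1, then (n+1)p − p(p−1)/2 ≤ R ≤ p(n+1). -/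
open scoped BigOperators

open MvPolynomial AddMonoidAlgebra

namespace GrHaAux

/-! ### Vanishing on real points -/

theorem realVanish_fin : ∀ (m : ℕ) (f : MvPolynomial (Fin m) ℂ),
    (∀ x : Fin m → ℝ, eval (fun i => (x i : ℂ)) f = 0) → f = 0 := by
  intro m
  induction m with
  | zero =>
    intro f h
    obtain ⟨c, rfl⟩ := C_surjective (Fin 0) f
    have := h (fun i => 0)
    rw [eval_C] at this; simp [this]
  | succ m ih =>
    intro f h
    have key : ∀ x : Fin m → ℝ,
        Polynomial.map (eval (fun i => (x i : ℂ))) (finSuccEquiv ℂ m f) = 0 := by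
      intro x
      apply Polynomial.eq_zero_of_infinite_isRoot
      apply Set.Infinite.mono (s := (fun r : ℝ => (r : ℂ)) '' Set.univ)
      · rintro z ⟨r, -, rfl⟩
        have := h (Fin.cons r x)
        rw [show (fun i => ((Fin.cons r x : Fin (m+1) → ℝ) i : ℂ)) = Fin.cons (r:ℂ) (fun i => (x i : ℂ)) from ?_] at this
        · exact (eval_eq_eval_mv_eval' _ _ f ▸ this : _)
        · funext i
          refine Fin.cases ?_ ?_ i <;> simp
      · exact Set.Infinite.image (fun a _ b _ hab => Complex.ofReal_injective hab) (Set.infinite_univ)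
    have hcoeff : ∀ k, (finSuccEquiv ℂ m f).coeff k = 0 := by
      intro k
      apply ih
      intro x
      have := key x
      have h2 := congrArg (fun q => Polynomial.coeff q k) this
      simpa using h2
    have : finSuccEquiv ℂ m f = 0 := Polynomial.ext (fun k => hcoeff k)
    have h0 := congrArg (finSuccEquiv ℂ m).symm this
    simpa using h0

theorem realVanish {σ : Type*} [Fintype σ] (f : MvPolynomial σ ℂ)
    (h : ∀ x : σ → ℝ, eval (fun i => (x i : ℂ)) f = 0) : f = 0 := by
  let e := Fintype.equivFin σ
  have hg : rename e f = 0 := by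
    apply realVanish_fin
    intro x
    rw [eval_rename]
    exact h (fun i => x (e i))
  exact (MvPolynomial.rename_injective e e.injective) (by simpa using hg)

/-! ### Polarization and span equality -/

noncomputable def conjP {m : ℕ} (f : MvPolynomial (Fin m) ℂ) : MvPolynomial (Fin m) ℂ :=
  MvPolynomial.map (starRingEnd ℂ) f

lemma eval_conjP {m : ℕ} (W : Fin m → ℂ) (f : MvPolynomial (Fin m) ℂ) :
    eval W (conjP f) = (starRingEnd ℂ) (eval (fun i => (starRingEnd ℂ) (W i)) f) := by
  rw [conjP, ← eval₂_eq_eval_map]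
  have h1 : eval (fun i => (starRingEnd ℂ) (W i)) f
      = eval₂ (RingHom.id ℂ) (fun i => (starRingEnd ℂ) (W i)) f := rfl
  rw [h1, eval₂_comp_left (starRingEnd ℂ) (RingHom.id ℂ) _ f]
  congr 1
  funext i
  simp

lemma eval_bind₁' {σ τ : Type*} (g : τ → ℂ) (f : σ → MvPolynomial τ ℂ) (φ : MvPolynomial σ ℂ) :
    eval g (bind₁ f φ) = eval (fun i => eval g (f i)) φ := by
  have := aeval_bind₁ (R := ℂ) g f φ
  simpa [aeval_eq_eval₂Hom] using this

theorem sos_span_le {m : ℕ} {ι κ : Type*} [Fintype ι] [Fintype κ]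
    (A : ι → MvPolynomial (Fin m) ℂ) (B : κ → MvPolynomial (Fin m) ℂ)
    (h : ∀ Z : Fin m → ℂ,
      ∑ i, eval Z (A i) * (starRingEnd ℂ) (eval Z (A i))
        = ∑ j, eval Z (B j) * (starRingEnd ℂ) (eval Z (B j))) :
    Submodule.span ℂ (Set.range B) ≤ Submodule.span ℂ (Set.range A) := by
  classical
  set c := starRingEnd ℂ with hc
  set P : MvPolynomial (Fin m ⊕ Fin m) ℂ :=
    (∑ i, rename Sum.inl (A i) * rename Sum.inr (conjP (A i)))
      - ∑ j, rename Sum.inl (B j) * rename Sum.inr (conjP (B j)) with hP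
  have evalP : ∀ Z W : Fin m → ℂ, eval (Sum.elim Z W) P
      = (∑ i, eval Z (A i) * eval W (conjP (A i)))
        - ∑ j, eval Z (B j) * eval W (conjP (B j)) := by
    intro Z W
    simp [hP, eval_rename, Sum.elim_comp_inl, Sum.elim_comp_inr]
  have diag : ∀ Z : Fin m → ℂ, eval (Sum.elim Z (fun i => c (Z i))) P = 0 := by
    intro Z
    rw [evalP, sub_eq_zero]
    have hZ : (fun i => (starRingEnd ℂ) (c (Z i))) = Z := by funext i; simp [hc]
    have e1 : ∀ f : MvPolynomial (Fin m) ℂ, eval (fun i => c (Z i)) (conjP f) = c (eval Z f) := by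
      intro f
      rw [eval_conjP, hZ]
    simp only [e1]
    exact h Z
  set sub : Fin m ⊕ Fin m → MvPolynomial (Fin m ⊕ Fin m) ℂ :=
    Sum.elim (fun k => X (Sum.inl k) + C Complex.I * X (Sum.inr k))
             (fun k => X (Sum.inl k) - C Complex.I * X (Sum.inr k)) with hsub
  have hQ : (bind₁ sub) P = 0 := by
    apply realVanish
    intro x
    rw [eval_bind₁']
    have hfun : (fun s => eval (fun i => (x i : ℂ)) (sub s))
        = Sum.elim (fun k => (x (Sum.inl k) : ℂ) + Complex.I * (x (Sum.inr k)))
            (fun i => c ((x (Sum.inl i) : ℂ) + Complex.I * (x (Sum.inr i)))) := by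
      funext s
      cases s with
      | inl k => simp [hsub]
      | inr k =>
        simp [hsub, hc, Complex.conj_ofReal, map_add, map_mul, Complex.conj_I]
        ring
    rw [hfun]
    exact diag _
  have key : ∀ Z W : Fin m → ℂ, eval (Sum.elim Z W) P = 0 := by
    intro Z W
    have h0 := congrArg (eval (Sum.elim (fun k => (Z k + W k)/2) (fun k => (W k - Z k) * Complex.I / 2))) hQ
    rw [eval_bind₁'] at h0
    simp only [map_zero] at h0
    have hfun : (fun s => eval (Sum.elim (fun k => (Z k + W k)/2) (fun k => (W k - Z k) * Complex.I / 2)) (sub s))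
        = Sum.elim Z W := by
      funext s
      cases s with
      | inl k =>
        simp only [hsub, Sum.elim_inl, Sum.elim_inr, map_add, map_mul, eval_X, eval_C]
        linear_combination ((W k - Z k)/2) * Complex.I_mul_I
      | inr k =>
        simp only [hsub, Sum.elim_inl, Sum.elim_inr, map_sub, map_mul, eval_X, eval_C]
        linear_combination (-(W k - Z k)/2) * Complex.I_mul_I
    rw [hfun] at h0
    exact h0
  have PW : ∀ W : Fin m → ℂ,
      (∑ i, eval W (conjP (A i)) • A i) = ∑ j, eval W (conjP (B j)) • B j := by
    intro W
    apply MvPolynomial.funext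
    intro Z
    have h1 := key Z W
    rw [evalP, sub_eq_zero] at h1
    simpa [smul_eval, mul_comm] using h1
  rw [Submodule.span_le]
  rintro _ ⟨j₀, rfl⟩
  by_contra hx
  have hfree : Module.Free ℂ (MvPolynomial (Fin m) ℂ ⧸ Submodule.span ℂ (Set.range A)) :=
    Module.Free.of_divisionRing _ _
  obtain ⟨φ, hφx, hφ0⟩ := Submodule.exists_dual_map_eq_bot_of_notMem hx (Module.Projective.of_free)
  have hker : ∀ v ∈ Submodule.span ℂ (Set.range A), φ v = 0 := by
    intro v hv
    have hmem : φ v ∈ (Submodule.span ℂ (Set.range A)).map φ := ⟨v, hv, rfl⟩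
    rw [hφ0] at hmem
    simpa using hmem
  have hBW : ∀ W : Fin m → ℂ, ∑ j, eval W (conjP (B j)) * φ (B j) = 0 := by
    intro W
    have h2 := congrArg φ (PW W)
    rw [map_sum, map_sum] at h2
    simp only [map_smul, smul_eq_mul] at h2
    rw [← h2]
    apply Finset.sum_eq_zero
    intro i _
    rw [hker (A i) (Submodule.subset_span ⟨i, rfl⟩), mul_zero]
  have hpoly : (∑ j, (c (φ (B j))) • B j) = (0 : MvPolynomial (Fin m) ℂ) := by
    apply MvPolynomial.funext
    intro Z
    have h3 := hBW (fun i => c (Z i))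
    have hZ : (fun i => (starRingEnd ℂ) (c (Z i))) = Z := by funext i; simp [hc]
    have e1 : ∀ f : MvPolynomial (Fin m) ℂ, eval (fun i => c (Z i)) (conjP f) = c (eval Z f) := by
      intro f
      rw [eval_conjP, hZ]
    simp only [e1] at h3
    have h4 := congrArg c h3
    simp only [map_sum, map_mul, map_zero, Complex.conj_conj, hc] at h4
    simp only [map_sum, smul_eval, map_zero, eval_zero]
    rw [← h4]
    apply Finset.sum_congr rfl
    intro j _
    ring
  have h5 := congrArg φ hpoly
  rw [map_sum, map_zero] at h5
  simp only [map_smul, smul_eq_mul] at h5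
  have h6 : ∑ j, Complex.normSq (φ (B j)) = 0 := by
    have h7 : ((∑ j, Complex.normSq (φ (B j)) : ℝ) : ℂ) = 0 := by
      push_cast
      rw [← h5]
      apply Finset.sum_congr rfl
      intro j _
      rw [mul_comm, Complex.mul_conj]
    exact_mod_cast h7
  have h8 : Complex.normSq (φ (B j₀)) = 0 := by
    have := (Finset.sum_eq_zero_iff_of_nonneg (fun j _ => Complex.normSq_nonneg (φ (B j)))).mp h6
    exact this j₀ (Finset.mem_univ j₀)
  exact hφx (Complex.normSq_eq_zero.mp h8)

/-! ### Leading monomials -/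

abbrev μtype (N : ℕ) := Fin N →₀ ℕ

noncomputable abbrev Dlex (N : ℕ) : μtype N → Lex (μtype N) := toLex

lemma Dlex_inj {N : ℕ} : Function.Injective (Dlex N) := fun _ _ h => h

lemma Dlex_add {N : ℕ} : ∀ a b : μtype N, Dlex N (a + b) = Dlex N a + Dlex N b := fun _ _ => rfl

lemma supDegree_smul {N : ℕ} {c : ℂ} (hc : c ≠ 0) (f : MvPolynomial (Fin N) ℂ) :
    AddMonoidAlgebra.supDegree (Dlex N) (c • f) = AddMonoidAlgebra.supDegree (Dlex N) f := by
  unfold AddMonoidAlgebra.supDegree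
  rw [AddMonoidAlgebra.coeff_smul, Finsupp.support_smul_eq hc]

lemma leadingCoeff_smul {N : ℕ} {c : ℂ} (hc : c ≠ 0) (f : MvPolynomial (Fin N) ℂ) :
    AddMonoidAlgebra.leadingCoeff (Dlex N) (c • f) = c * AddMonoidAlgebra.leadingCoeff (Dlex N) f := by
  unfold AddMonoidAlgebra.leadingCoeff
  rw [supDegree_smul hc]
  rfl

lemma li_of_inj_supDegree {N : ℕ} {ι : Type*} [Fintype ι] (w : ι → MvPolynomial (Fin N) ℂ)
    (h0 : ∀ i, w i ≠ 0)
    (hinj : Function.Injective (fun i => AddMonoidAlgebra.supDegree (Dlex N) (w i))) :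
    LinearIndependent ℂ w := by
  classical
  rw [Fintype.linearIndependent_iff]
  intro g hg
  by_contra hcon
  push_neg at hcon
  obtain ⟨i₀, hi₀⟩ := hcon
  set s : Finset ι := Finset.univ.filter (fun j => g j ≠ 0) with hs
  have hne : ∑ j ∈ s, g j • w j ≠ 0 := by
    apply AddMonoidAlgebra.sum_ne_zero_of_injOn_supDegree' (D := Dlex N)
    · exact ⟨i₀, by simp [hs, hi₀], smul_ne_zero hi₀ (h0 i₀)⟩
    · intro a ha b hb hab
      simp only [hs, Finset.coe_filter, Set.mem_setOf_eq] at ha hb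
      have ha' : AddMonoidAlgebra.supDegree (Dlex N) (g a • w a)
          = AddMonoidAlgebra.supDegree (Dlex N) (w a) := supDegree_smul ha.2 _
      have hb' : AddMonoidAlgebra.supDegree (Dlex N) (g b • w b)
          = AddMonoidAlgebra.supDegree (Dlex N) (w b) := supDegree_smul hb.2 _
      apply hinj
      simp only [Function.comp] at hab ⊢
      rw [← ha', ← hb']
      exact hab
  apply hne
  rw [← hg, hs, Finset.sum_filter_of_ne]
  intro x _ hx hgx
  exact hx (by rw [hgx, zero_smul])

lemma exists_LM_witness {N : ℕ} (p : ℕ) (F : Fin p → MvPolynomial (Fin N) ℂ)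
    (hFli : LinearIndependent ℂ F) :
    ∃ M : Finset (μtype N), M.card = p ∧
      ∀ m ∈ M, ∃ f ∈ Submodule.span ℂ (Set.range F), f ≠ 0 ∧
        AddMonoidAlgebra.supDegree (Dlex N) f = toLex m := by
  classical
  set W := Submodule.span ℂ (Set.range F) with hWdef
  set T₀ : Finset (μtype N) := Finset.univ.biUnion (fun i => (F i).support) with hT₀
  have hWsupp : ∀ f ∈ W, (f : MvPolynomial (Fin N) ℂ).support ⊆ T₀ := by
    intro f hf
    have hle : W ≤ AddMonoidAlgebra.supported ℂ ℂ (↑T₀ : Set (μtype N)) := by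
      rw [hWdef, Submodule.span_le]
      rintro _ ⟨i, rfl⟩
      rw [SetLike.mem_coe, AddMonoidAlgebra.mem_supported]
      intro x hx
      simp only [Finset.coe_biUnion, Finset.coe_univ, Set.mem_iUnion, hT₀]
      exact ⟨i, trivial, hx⟩
    have := hle hf
    rw [AddMonoidAlgebra.mem_supported] at this
    exact_mod_cast this
  set LMfil : Finset (μtype N) := T₀.filter (fun m => ∃ f, f ∈ W ∧ f ≠ 0 ∧
      AddMonoidAlgebra.supDegree (Dlex N) f = toLex m) with hLMfil
  have hex : ∀ m : μtype N, ∃ f, m ∈ LMfil → (f ∈ W ∧ f ≠ 0 ∧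
      AddMonoidAlgebra.supDegree (Dlex N) f = toLex m) := by
    intro m
    by_cases hm : m ∈ LMfil
    · rw [hLMfil, Finset.mem_filter] at hm
      obtain ⟨-, f, hf⟩ := hm
      exact ⟨f, fun _ => hf⟩
    · exact ⟨0, fun h => absurd h hm⟩
  choose wfn hwfn using hex
  set W' := Submodule.span ℂ (↑(LMfil.image wfn) : Set (MvPolynomial (Fin N) ℂ)) with hW'
  have hwf : WellFounded ((· < ·) : Lex (μtype N) → Lex (μtype N) → Prop) :=
    IsWellFounded.wf
  have main : ∀ b : Lex (μtype N), ∀ f, f ∈ W →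
      AddMonoidAlgebra.supDegree (Dlex N) f = b → f ∈ W' := by
    intro b
    refine hwf.induction
      (C := fun b => ∀ f, f ∈ W → AddMonoidAlgebra.supDegree (Dlex N) f = b → f ∈ W') b ?_
    intro x IH f hfW hfd
    by_cases hf0 : f = 0
    · rw [hf0]; exact Submodule.zero_mem _
    obtain ⟨a, ha, hda⟩ := AddMonoidAlgebra.exists_supDegree_mem_support (Dlex N) hf0
    have haLM : a ∈ LMfil := by
      rw [hLMfil, Finset.mem_filter]
      exact ⟨hWsupp f hfW ha, f, hfW, hf0, hda⟩
    obtain ⟨hw, hw0, hwd⟩ := hwfn a haLM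
    have hlcw0 : AddMonoidAlgebra.leadingCoeff (Dlex N) (wfn a) ≠ 0 :=
      (AddMonoidAlgebra.leadingCoeff_ne_zero Dlex_inj).mpr hw0
    have hlc0 : AddMonoidAlgebra.leadingCoeff (Dlex N) f ≠ 0 :=
      (AddMonoidAlgebra.leadingCoeff_ne_zero Dlex_inj).mpr hf0
    set cdiv := AddMonoidAlgebra.leadingCoeff (Dlex N) f / AddMonoidAlgebra.leadingCoeff (Dlex N) (wfn a) with hcdiv
    have hcdiv0 : cdiv ≠ 0 := div_ne_zero hlc0 hlcw0
    set q := cdiv • wfn a with hq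
    have hq_deg : AddMonoidAlgebra.supDegree (Dlex N) f = AddMonoidAlgebra.supDegree (Dlex N) q := by
      rw [hq, supDegree_smul hcdiv0, hwd, hda]
    have hq_lc : AddMonoidAlgebra.leadingCoeff (Dlex N) f = AddMonoidAlgebra.leadingCoeff (Dlex N) q := by
      rw [hq, leadingCoeff_smul hcdiv0, hcdiv, div_mul_cancel₀ _ hlcw0]
    have hqW' : q ∈ W' := by
      apply Submodule.smul_mem
      apply Submodule.subset_span
      rw [Finset.coe_image]
      exact Set.mem_image_of_mem _ haLM
    have hqW : q ∈ W := Submodule.smul_mem _ _ hw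
    rcases AddMonoidAlgebra.supDegree_sub_lt_of_leadingCoeff_eq Dlex_inj hq_deg hq_lc with hlt | heq
    · have hfq : f - q ∈ W' := by
        refine IH _ ?_ (f - q) (Submodule.sub_mem _ hfW hqW) rfl
        rw [← hfd]
        exact hlt
      have : f = (f - q) + q := by ring
      rw [this]
      exact Submodule.add_mem _ hfq hqW'
    · rw [heq]; exact hqW'
  have hle : W ≤ W' := fun f hf => main _ f hf rfl
  have hfdW' : FiniteDimensional ℂ W' :=
    FiniteDimensional.span_of_finite ℂ (LMfil.image wfn).finite_toSet
  have h1 : Module.finrank ℂ W = p := by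
    rw [hWdef, finrank_span_eq_card hFli, Fintype.card_fin]
  have h2 : Module.finrank ℂ W ≤ Module.finrank ℂ W' := Submodule.finrank_mono hle
  have h3 : Module.finrank ℂ W' ≤ LMfil.card := by
    refine le_trans (finrank_span_finset_le_card _) ?_
    exact Finset.card_image_le
  have hple : p ≤ LMfil.card := by omega
  obtain ⟨M, hMsub, hMcard⟩ := Finset.exists_subset_card_eq hple
  refine ⟨M, hMcard, ?_⟩
  intro m hm
  have := hMsub hm
  rw [hLMfil, Finset.mem_filter] at this
  obtain ⟨-, f, hf1, hf2, hf3⟩ := this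
  exact ⟨f, hf1, hf2, hf3⟩

lemma supDegree_X_mul {N : ℕ} {k : Fin N} {f : MvPolynomial (Fin N) ℂ} (hf : f ≠ 0) {m : μtype N}
    (hd : AddMonoidAlgebra.supDegree (Dlex N) f = toLex m) :
    AddMonoidAlgebra.supDegree (Dlex N) ((X k : MvPolynomial (Fin N) ℂ) * f)
      = toLex (Finsupp.single k 1 + m) := by
  have hX : (X k : MvPolynomial (Fin N) ℂ) = AddMonoidAlgebra.single (Finsupp.single k 1) (1 : ℂ) := by
    rw [MvPolynomial.single_eq_monomial]; rfl
  have hXlc : AddMonoidAlgebra.leadingCoeff (Dlex N) (X k : MvPolynomial (Fin N) ℂ) = 1 := by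
    rw [hX, AddMonoidAlgebra.leadingCoeff_single Dlex_inj]
  have hflc : AddMonoidAlgebra.leadingCoeff (Dlex N) f ≠ 0 :=
    (AddMonoidAlgebra.leadingCoeff_ne_zero Dlex_inj).mpr hf
  rw [AddMonoidAlgebra.supDegree_mul Dlex_inj Dlex_add
    (by rw [hXlc, one_mul]; exact hflc) (X_ne_zero k) hf]
  rw [hX, AddMonoidAlgebra.supDegree_single_ne_zero _ one_ne_zero, hd]
  rfl

lemma Ecard_le_finrank {N : ℕ} (p : ℕ) (M : Finset (μtype N)) (F : Fin p → MvPolynomial (Fin N) ℂ)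
    (SpanG : Submodule ℂ (MvPolynomial (Fin N) ℂ)) [Module.Finite ℂ SpanG]
    (hmul : ∀ f ∈ Submodule.span ℂ (Set.range F), ∀ k, (X k : MvPolynomial (Fin N) ℂ) * f ∈ SpanG)
    (hM : ∀ m ∈ M, ∃ f ∈ Submodule.span ℂ (Set.range F), f ≠ 0 ∧
      AddMonoidAlgebra.supDegree (Dlex N) f = toLex m) :
    ((Finset.univ ×ˢ M).image (fun km : Fin N × μtype N => Finsupp.single km.1 1 + km.2)).card
      ≤ Module.finrank ℂ SpanG := by
  classical
  set φ : Fin N × μtype N → μtype N := fun km => Finsupp.single km.1 1 + km.2 with hφ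
  set E := (Finset.univ ×ˢ M).image φ with hE
  have hexist : ∀ e : {x // x ∈ E}, ∃ g : MvPolynomial (Fin N) ℂ,
      g ∈ SpanG ∧ g ≠ 0 ∧ AddMonoidAlgebra.supDegree (Dlex N) g = toLex (e : μtype N) := by
    rintro ⟨e, he⟩
    rw [hE, Finset.mem_image] at he
    obtain ⟨km, hkm, hφe⟩ := he
    rw [Finset.mem_product] at hkm
    obtain ⟨f, hfW, hf0, hfd⟩ := hM km.2 hkm.2
    refine ⟨X km.1 * f, hmul f hfW km.1, mul_ne_zero (X_ne_zero km.1) hf0, ?_⟩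
    rw [supDegree_X_mul hf0 hfd]
    exact congrArg toLex hφe
  choose w hw1 hw2 hw3 using hexist
  have hli : LinearIndependent ℂ w := by
    apply li_of_inj_supDegree w hw2
    intro a b hab
    simp only [hw3] at hab
    exact Subtype.ext (Dlex_inj hab)
  have hli' : LinearIndependent ℂ (fun e => (⟨w e, hw1 e⟩ : SpanG)) := by
    apply LinearIndependent.of_comp SpanG.subtype
    exact hli
  have := hli'.fintype_card_le_finrank
  simpa [Fintype.card_coe] using this

/-! ### Counting -/

lemma uniq_lemma {N : ℕ} {k l k' l' : Fin N} {m m' : μtype N}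
    (h1 : Finsupp.single k 1 + m = Finsupp.single l 1 + m')
    (h2 : Finsupp.single k' 1 + m = Finsupp.single l' 1 + m')
    (hne : m ≠ m') : k = k' ∧ l = l' := by
  have hkl : k ≠ l := by
    rintro rfl
    exact hne (by apply add_left_cancel h1)
  have e3 : ∀ j, (if k = j then 1 else 0) + (if l' = j then (1:ℕ) else 0)
      = (if l = j then 1 else 0) + (if k' = j then 1 else 0) := by
    intro j
    have a := DFunLike.congr_fun h1 j
    have b := DFunLike.congr_fun h2 j
    simp only [Finsupp.add_apply, Finsupp.single_apply] at a b
    omega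
  have hk : k = k' := by
    by_cases hkk : k = k'
    · exact hkk
    · exfalso
      have h := e3 k
      rw [if_pos rfl, if_neg (Ne.symm hkl), if_neg (fun hh : k' = k => hkk hh.symm)] at h
      split_ifs at h <;> omega
  subst hk
  refine ⟨rfl, ?_⟩
  by_cases hll : l = l'
  · exact hll
  · exfalso
    have h := e3 l
    rw [if_neg hkl, if_pos rfl] at h
    split_ifs at h <;> omega

lemma three_mul_le (t : ℕ) (h : 1 ≤ t) : 3 * t ≤ 2 + t * t := by
  obtain ⟨s, rfl⟩ := Nat.exists_eq_add_of_le h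
  have hsq : s ≤ s * s := by
    cases s with
    | zero => simp
    | succ u => exact Nat.le_mul_of_pos_left _ (Nat.succ_pos u)
  have expand : (1 + s) * (1 + s) = 1 + 2 * s + s * s := by ring
  rw [expand]
  linarith

lemma count_lemma {N : ℕ} (M : Finset (μtype N)) :
    2 * ((Finset.univ ×ˢ M : Finset (Fin N × μtype N)).card)
      ≤ 2 * (((Finset.univ ×ˢ M).image
          (fun km : Fin N × μtype N => Finsupp.single km.1 1 + km.2)).card)
        + (M.card * M.card - M.card) := by
  classical
  set φ : Fin N × μtype N → μtype N := fun km => Finsupp.single km.1 1 + km.2 with hφ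
  set A := (Finset.univ ×ˢ M : Finset (Fin N × μtype N)) with hA
  set E := A.image φ with hE
  set Pairs := (A ×ˢ A).filter (fun ab => ab.1 ≠ ab.2 ∧ φ ab.1 = φ ab.2) with hPairs
  have hsingle_inj : ∀ (a b : Fin N), Finsupp.single a (1:ℕ) = Finsupp.single b 1 → a = b :=
    fun a b h => Finsupp.single_left_injective one_ne_zero h
  have hAcard : A.card = ∑ y ∈ E, (A.filter (fun a => φ a = y)).card :=
    Finset.card_eq_sum_card_fiberwise (fun a ha => Finset.mem_image_of_mem φ ha)
  have hPcard : Pairs.card = ∑ y ∈ E, ((A.filter (fun a => φ a = y)).offDiag).card := by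
    rw [Finset.card_eq_sum_card_fiberwise
      (f := fun ab : (Fin N × μtype N) × (Fin N × μtype N) => φ ab.1) (t := E) ?_]
    · apply Finset.sum_congr rfl
      intro y _
      congr 1
      ext ⟨a, b⟩
      simp only [hPairs, Finset.mem_filter, Finset.mem_product, Finset.mem_offDiag]
      constructor
      · rintro ⟨⟨⟨ha, hb⟩, hne, heq⟩, hy⟩
        exact ⟨⟨ha, hy⟩, ⟨hb, heq ▸ hy⟩, hne⟩
      · rintro ⟨⟨ha, hya⟩, ⟨hb, hyb⟩, hne⟩
        exact ⟨⟨⟨ha, hb⟩, hne, hya.trans hyb.symm⟩, hya⟩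
    · intro ab hab
      rw [Finset.mem_coe, hPairs, Finset.mem_filter, Finset.mem_product] at hab
      exact Finset.mem_image_of_mem φ hab.1.1
  have hfiber : ∀ y ∈ E, 2 * (A.filter (fun a => φ a = y)).card
      ≤ 2 + ((A.filter (fun a => φ a = y)).offDiag).card := by
    intro y hy
    rw [hE, Finset.mem_image] at hy
    obtain ⟨a, ha, hay⟩ := hy
    have hpos : 0 < (A.filter (fun a => φ a = y)).card := by
      rw [Finset.card_pos]
      exact ⟨a, Finset.mem_filter.mpr ⟨ha, hay⟩⟩
    rw [Finset.offDiag_card]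
    have key3 := three_mul_le _ hpos
    have h5 : (A.filter (fun a => φ a = y)).card
        ≤ (A.filter (fun a => φ a = y)).card * (A.filter (fun a => φ a = y)).card := by
      linarith
    rw [← Nat.add_sub_assoc h5 2]
    apply Nat.le_sub_of_add_le
    linarith
  have hsum : 2 * A.card ≤ 2 * E.card + Pairs.card := by
    rw [hAcard, Finset.mul_sum, hPcard]
    calc ∑ y ∈ E, 2 * (A.filter (fun a => φ a = y)).card
        ≤ ∑ y ∈ E, (2 + ((A.filter (fun a => φ a = y)).offDiag).card) :=
          Finset.sum_le_sum hfiber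
      _ = 2 * E.card + ∑ y ∈ E, ((A.filter (fun a => φ a = y)).offDiag).card := by
          rw [Finset.sum_add_distrib, Finset.sum_const, smul_eq_mul, mul_comm]
  have hPairsM : Pairs.card ≤ M.card * M.card - M.card := by
    rw [← Finset.offDiag_card]
    apply Finset.card_le_card_of_injOn (fun ab => (ab.1.2, ab.2.2))
    · intro ab hab
      rw [Finset.mem_coe, hPairs, Finset.mem_filter, Finset.mem_product] at hab
      obtain ⟨⟨habA, habB⟩, hne, heq⟩ := hab
      rw [hA, Finset.mem_product] at habA habB
      rw [Finset.mem_coe, Finset.mem_offDiag]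
      refine ⟨habA.2, habB.2, ?_⟩
      intro hmm
      apply hne
      have hmm' : ab.1.2 = ab.2.2 := hmm
      have heq' : Finsupp.single ab.1.1 1 + ab.1.2 = Finsupp.single ab.2.1 1 + ab.2.2 := heq
      rw [hmm'] at heq'
      have := add_right_cancel heq'
      have hk := hsingle_inj _ _ this
      exact Prod.ext hk hmm'
    · rintro ab hab cd hcd hpsi
      simp only [Finset.mem_coe, hPairs, Finset.mem_filter] at hab hcd
      obtain ⟨-, hne1, heq1⟩ := hab
      obtain ⟨-, hne2, heq2⟩ := hcd
      have hpsi' : (ab.1.2, ab.2.2) = (cd.1.2, cd.2.2) := hpsi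
      obtain ⟨hm1, hm2⟩ := Prod.mk.inj hpsi'
      have hmne : ab.1.2 ≠ ab.2.2 := by
        intro hmm
        apply hne1
        have heq' : Finsupp.single ab.1.1 1 + ab.1.2 = Finsupp.single ab.2.1 1 + ab.2.2 := heq1
        rw [hmm] at heq'
        have := add_right_cancel heq'
        exact Prod.ext (hsingle_inj _ _ this) hmm
      have heq1' : Finsupp.single ab.1.1 1 + ab.1.2 = Finsupp.single ab.2.1 1 + ab.2.2 := heq1
      have heq2' : Finsupp.single cd.1.1 1 + ab.1.2 = Finsupp.single cd.2.1 1 + ab.2.2 := by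
        rw [hm1, hm2]; exact heq2
      obtain ⟨hkk, hll⟩ := uniq_lemma heq1' heq2' hmne
      have hab1 : ab.1 = cd.1 := Prod.ext hkk hm1
      have hab2 : ab.2 = cd.2 := Prod.ext hll hm2
      exact Prod.ext hab1 hab2
  omega

end GrHaAux

open GrHaAux

/-- Proposition 3 of [GrHa13], lower/upper bound case `p ≤ n+1`:
If `A(Z,Z̄) = Σ_{i=1}^p |F_i(Z)|²` with `F_i` linearly independent homogeneous polynomials
of degree `d`, and `‖Z‖² A(Z,Z̄) = Σ_{j=1}^R |H_j(Z)|²` with `H_j` linearly independent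
homogeneous of degree `d+1`, and `p ≤ n+1`, then `(n+1)p - p(p-1)/2 ≤ R ≤ p(n+1)`. -/
theorem sos_rank_bihomogeneous_low_rank
    (n p R d : ℕ)
    (F : Fin p → MvPolynomial (Fin (n + 1)) ℂ)
    (H : Fin R → MvPolynomial (Fin (n + 1)) ℂ)
    (hFhom : ∀ i, (F i).IsHomogeneous d)
    (hHhom : ∀ j, (H j).IsHomogeneous (d + 1))
    (hFli : LinearIndependent ℂ F)
    (hHli : LinearIndependent ℂ H)
    (heq : ∀ Z : Fin (n + 1) → ℂ,
      (∑ j, ‖Z j‖ ^ 2) * (∑ i, ‖MvPolynomial.eval Z (F i)‖ ^ 2)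
        = ∑ j, ‖MvPolynomial.eval Z (H j)‖ ^ 2)
    (hpn : p ≤ n + 1) :
    (n + 1) * p - p * (p - 1) / 2 ≤ R ∧ R ≤ p * (n + 1) := by
  classical
  set c := starRingEnd ℂ with hc
  set G : Fin (n+1) × Fin p → MvPolynomial (Fin (n+1)) ℂ := fun ki => X ki.1 * F ki.2 with hG
  have hcast : ∀ z : ℂ, ((‖z‖ : ℂ)) ^ 2 = z * c z := by
    intro z
    rw [← Complex.ofReal_pow, hc, Complex.sq_norm, Complex.mul_conj]
  have hsos : ∀ Z : Fin (n+1) → ℂ,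
      (∑ j, eval Z (H j) * c (eval Z (H j))) = ∑ ki, eval Z (G ki) * c (eval Z (G ki)) := by
    intro Z
    have l1 : ((∑ j, ‖eval Z (H j)‖^2 : ℝ) : ℂ) = ∑ j, eval Z (H j) * c (eval Z (H j)) := by
      push_cast
      exact Finset.sum_congr rfl (fun j _ => hcast _)
    have l2 : ((∑ k, ‖Z k‖^2 : ℝ) : ℂ) = ∑ k, Z k * c (Z k) := by
      push_cast
      exact Finset.sum_congr rfl (fun j _ => hcast _)
    have l3 : ((∑ i, ‖eval Z (F i)‖^2 : ℝ) : ℂ) = ∑ i, eval Z (F i) * c (eval Z (F i)) := by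
      push_cast
      exact Finset.sum_congr rfl (fun j _ => hcast _)
    have hcastq := congrArg (fun r : ℝ => (r : ℂ)) (heq Z)
    simp only [Complex.ofReal_mul] at hcastq
    rw [l1, l2, l3] at hcastq
    rw [← hcastq, Finset.sum_mul_sum]
    rw [Fintype.sum_prod_type]
    apply Finset.sum_congr rfl
    intro k _
    apply Finset.sum_congr rfl
    intro i _
    have hev : eval Z (G (k, i)) = Z k * eval Z (F i) := by
      rw [hG]; simp
    rw [hev, map_mul]
    ring
  have hspan : Submodule.span ℂ (Set.range H) = Submodule.span ℂ (Set.range G) :=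
    le_antisymm (sos_span_le G H (fun Z => (hsos Z).symm)) (sos_span_le H G hsos)
  have hfinH : Module.finrank ℂ (Submodule.span ℂ (Set.range H)) = R := by
    rw [finrank_span_eq_card hHli, Fintype.card_fin]
  haveI instG : Module.Finite ℂ (Submodule.span ℂ (Set.range G)) :=
    FiniteDimensional.span_of_finite ℂ (Set.finite_range G)
  -- upper bound
  have hupper : R ≤ p * (n+1) := by
    rw [← hfinH, hspan]
    have h1 := finrank_span_le_card (R := ℂ) (Set.range G)
    rw [Set.toFinset_range] at h1
    refine le_trans h1 (le_trans Finset.card_image_le ?_)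
    rw [Finset.card_univ, Fintype.card_prod, Fintype.card_fin, Fintype.card_fin, mul_comm]
  -- lower bound
  obtain ⟨M, hMcard, hMw⟩ := exists_LM_witness (N := n+1) p F hFli
  have hmul : ∀ f ∈ Submodule.span ℂ (Set.range F), ∀ k,
      (X k : MvPolynomial (Fin (n+1)) ℂ) * f ∈ Submodule.span ℂ (Set.range G) := by
    intro f hf
    induction hf using Submodule.span_induction with
    | mem x hx =>
      obtain ⟨i, rfl⟩ := hx
      intro k
      exact Submodule.subset_span ⟨(k, i), rfl⟩
    | zero => intro k; rw [mul_zero]; exact Submodule.zero_mem _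
    | add x y hx hy ihx ihy =>
      intro k
      rw [mul_add]
      exact Submodule.add_mem _ (ihx k) (ihy k)
    | smul a x hx ihx =>
      intro k
      rw [mul_smul_comm]
      exact Submodule.smul_mem _ _ (ihx k)
  have hE := Ecard_le_finrank (N := n+1) p M F (Submodule.span ℂ (Set.range G)) hmul hMw
  rw [← hspan, hfinH] at hE
  have hcount := count_lemma (N := n+1) M
  have hAc : ((Finset.univ : Finset (Fin (n+1))) ×ˢ M).card = (n+1) * p := by
    rw [Finset.card_product, Finset.card_univ, Fintype.card_fin, hMcard]
  rw [hAc, hMcard] at hcount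
  have hb : p * p - p = p * (p-1) := by
    cases p with
    | zero => simp
    | succ q =>
      rw [Nat.succ_sub_one]
      have hexp : (q+1)*(q+1) = (q+1)*q + (q+1) := by ring
      rw [hexp, Nat.add_sub_cancel]
  have heven : Even (p * (p-1)) := by
    cases p with
    | zero => simp
    | succ q =>
      rw [Nat.succ_sub_one, mul_comm]
      exact Nat.even_mul_succ_self q
  obtain ⟨w, hw⟩ := heven
  have hdiv : p * (p-1) / 2 = w := by rw [hw]; omega
  rw [hb, hw] at hcount
  constructor
  · rw [hdiv]
    set a := (n+1) * p with hadef
    clear_value a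
    omega
  · exact hupper
end

section
/- Let A(Z,Z̄) be a bihomogeneous Hermitian polynomial in Z = (Z₀,Z₁,…,Zₙ) with A(Z,Z̄) = Σ_{i=1}^p |Fᵢ(Z)|², where F₁,…,F_p are linearly independent homogeneous polynomials of a common degree d. Suppose ‖Z‖²·A(Z,Z̄) = Σ_{j=1}^R |Hⱼ(Z)|² where H₁,…,H_R are linearly independent homogeneous polynomials of degree d+1. If p ≥ n+1, then R ≥ (n+1)(n+2)/2. -/
open scoped BigOperators
open MvPolynomial Module
open scoped ComplexOrder

lemma aux_real_vanish {ι : Type*} (Q : MvPolynomial ι ℂ)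
    (h : ∀ x : ι → ℝ, eval (fun i => (x i : ℂ)) Q = 0) : Q = 0 := by
  classical
  set A : MvPolynomial ι ℝ := Q.support.sum (fun d => monomial d (Q.coeff d).re) with hA
  set B : MvPolynomial ι ℝ := Q.support.sum (fun d => monomial d (Q.coeff d).im) with hB
  have hAc : ∀ d, A.coeff d = (Q.coeff d).re := by
    intro d
    rw [hA, coeff_sum]
    by_cases hd : d ∈ Q.support
    · rw [Finset.sum_eq_single d (fun b _ hb => by rw [coeff_monomial, if_neg hb])
        (fun hd' => absurd hd hd')]
      rw [coeff_monomial, if_pos rfl]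
    · rw [Finset.sum_eq_zero (fun b hb => by
        rw [coeff_monomial, if_neg (fun hbd => hd (by rwa [hbd] at hb))])]
      rw [MvPolynomial.notMem_support_iff.mp hd]
      simp
  have hBc : ∀ d, B.coeff d = (Q.coeff d).im := by
    intro d
    rw [hB, coeff_sum]
    by_cases hd : d ∈ Q.support
    · rw [Finset.sum_eq_single d (fun b _ hb => by rw [coeff_monomial, if_neg hb])
        (fun hd' => absurd hd hd')]
      rw [coeff_monomial, if_pos rfl]
    · rw [Finset.sum_eq_zero (fun b hb => by
        rw [coeff_monomial, if_neg (fun hbd => hd (by rwa [hbd] at hb))])]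
      rw [MvPolynomial.notMem_support_iff.mp hd]
      simp
  have hQ : Q = map (algebraMap ℝ ℂ) A + C Complex.I * map (algebraMap ℝ ℂ) B := by
    apply MvPolynomial.ext
    intro d
    rw [coeff_add, coeff_C_mul, coeff_map, coeff_map, hAc, hBc]
    simp [Complex.ext_iff]
  have hmapeval : ∀ (P : MvPolynomial ι ℝ) (x : ι → ℝ),
      eval (fun i => (x i : ℂ)) (map (algebraMap ℝ ℂ) P) = ((eval x P : ℝ) : ℂ) := by
    intro P x
    rw [eval_map]
    have h1 : ((eval x P : ℝ) : ℂ) = (algebraMap ℝ ℂ) (eval₂ (RingHom.id ℝ) x P) := rfl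
    rw [h1, MvPolynomial.eval₂_comp_left (algebraMap ℝ ℂ) (RingHom.id ℝ) x P]
    rfl
  have hAB : ∀ x : ι → ℝ, eval x A = 0 ∧ eval x B = 0 := by
    intro x
    have h0 := h x
    rw [hQ] at h0
    rw [map_add, map_mul, hmapeval, hmapeval, eval_C] at h0
    have : ((eval x A : ℝ) : ℂ).re + (Complex.I * ((eval x B : ℝ) : ℂ)).re = 0 ∧
        ((eval x A : ℝ) : ℂ).im + (Complex.I * ((eval x B : ℝ) : ℂ)).im = 0 := by
      constructor
      · simpa using congrArg Complex.re h0
      · simpa using congrArg Complex.im h0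
    simpa using this
  have hA0 : A = 0 := by
    apply MvPolynomial.funext (R := ℝ)
    intro x
    simpa using (hAB x).1
  have hB0 : B = 0 := by
    apply MvPolynomial.funext (R := ℝ)
    intro x
    simpa using (hAB x).2
  apply MvPolynomial.ext
  intro d
  have h1 := hAc d
  have h2 := hBc d
  rw [hA0] at h1
  rw [hB0] at h2
  simp only [coeff_zero] at h1 h2
  simp [Complex.ext_iff, ← h1, ← h2]

lemma aux_diag_vanish {ι : Type*} (E : MvPolynomial (ι ⊕ ι) ℂ)
    (h : ∀ Z : ι → ℂ, eval (Sum.elim Z (fun i => (starRingEnd ℂ) (Z i))) E = 0) : E = 0 := by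
  classical
  set f : ι ⊕ ι → MvPolynomial (ι ⊕ ι) ℂ :=
    Sum.elim (fun j => X (Sum.inl j) + C Complex.I * X (Sum.inr j))
      (fun j => X (Sum.inl j) - C Complex.I * X (Sum.inr j)) with hf
  set g : ι ⊕ ι → MvPolynomial (ι ⊕ ι) ℂ :=
    Sum.elim (fun j => C (1/2 : ℂ) * (X (Sum.inl j) + X (Sum.inr j)))
      (fun j => C (-Complex.I/2) * (X (Sum.inl j) - X (Sum.inr j))) with hg
  have hE' : bind₁ f E = 0 := by
    apply aux_real_vanish
    intro x
    have hb : eval (fun i => (x i : ℂ)) (bind₁ f E)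
        = eval (fun s => eval (fun i => (x i : ℂ)) (f s)) E :=
      MvPolynomial.eval₂Hom_bind₁ (RingHom.id ℂ) _ _ _
    rw [hb]
    set Z : ι → ℂ := fun j => (x (Sum.inl j) : ℂ) + Complex.I * (x (Sum.inr j) : ℂ) with hZ
    have : (fun i => eval (fun i => (x i : ℂ)) (f i))
        = Sum.elim Z (fun i => (starRingEnd ℂ) (Z i)) := by
      funext s
      cases s with
      | inl j => simp [hf, hZ]
      | inr j =>
        simp only [hf, hZ, Sum.elim_inr, map_sub, map_add, map_mul, eval_X, eval_C,
          Sum.elim_inr, map_add, Complex.ext_iff]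
        simp [Complex.ext_iff]
    rw [this]
    exact h Z
  have key1 : ∀ (a b : MvPolynomial (ι ⊕ ι) ℂ) (c₁ c₂ : ℂ),
      C c₁ * (a + b) + C Complex.I * (C c₂ * (a - b))
        = C (c₁ + Complex.I*c₂) * a + C (c₁ - Complex.I*c₂) * b := by
    intro a b c₁ c₂
    simp only [C_add, C_sub, C_mul]
    ring
  have key2 : ∀ (a b : MvPolynomial (ι ⊕ ι) ℂ) (c₁ c₂ : ℂ),
      C c₁ * (a + b) - C Complex.I * (C c₂ * (a - b))
        = C (c₁ - Complex.I*c₂) * a + C (c₁ + Complex.I*c₂) * b := by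
    intro a b c₁ c₂
    simp only [C_add, C_sub, C_mul]
    ring
  have hI : Complex.I * (-Complex.I/2) = 1/2 := by
    rw [mul_div_assoc', mul_neg, Complex.I_mul_I]
    norm_num
  have hcomp : (bind₁ g) (bind₁ f E) = E := by
    rw [MvPolynomial.bind₁_bind₁]
    have : (fun i => bind₁ g (f i)) = (X : ι ⊕ ι → MvPolynomial (ι ⊕ ι) ℂ) := by
      funext s
      cases s with
      | inl j =>
        simp only [hf, hg, Sum.elim_inl, map_add, map_mul, bind₁_X_right, algHom_C,
          MvPolynomial.algebraMap_eq, Sum.elim_inr]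
        rw [key1, hI]
        norm_num
      | inr j =>
        simp only [hf, hg, Sum.elim_inl, map_sub, map_add, map_mul, bind₁_X_right, algHom_C,
          MvPolynomial.algebraMap_eq, Sum.elim_inr]
        rw [key2, hI]
        norm_num
    rw [this, bind₁_X_left]
    rfl
  rw [hE'] at hcomp
  rw [← hcomp, map_zero]

lemma aux_star_coeff {σ ι κ : Type*} [Fintype ι] [Fintype κ]
    (G : ι → MvPolynomial σ ℂ) (H : κ → MvPolynomial σ ℂ)
    (hE : (∑ a, rename Sum.inl (G a) * rename Sum.inr (MvPolynomial.map (starRingEnd ℂ) (G a)))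
        = ∑ j, rename Sum.inl (H j) * rename Sum.inr (MvPolynomial.map (starRingEnd ℂ) (H j)))
    (α : σ →₀ ℕ) :
    (∑ a, (starRingEnd ℂ) (coeff α (G a)) • G a)
      = ∑ j, (starRingEnd ℂ) (coeff α (H j)) • H j := by
  classical
  have hinl : ∀ f : MvPolynomial σ ℂ,
      (sumAlgEquiv ℂ σ σ) (rename Sum.inl f) = MvPolynomial.map C f := by
    intro f
    have := AlgHom.congr_fun (sumAlgEquiv_comp_rename_inl ℂ σ σ) f
    simpa [MvPolynomial.algebraMap_eq] using this
  have hinr : ∀ f : MvPolynomial σ ℂ,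
      (sumAlgEquiv ℂ σ σ) (rename Sum.inr f) = C f := by
    intro f
    have := AlgHom.congr_fun (sumAlgEquiv_comp_rename_inr ℂ σ σ) f
    simpa [MvPolynomial.algebraMap_eq] using this
  have h2 := congrArg (coeff α) (congrArg (sumAlgEquiv ℂ σ σ) hE)
  simp only [map_sum, map_mul, hinl, hinr, coeff_sum] at h2
  have hterm : ∀ f : MvPolynomial σ ℂ,
      coeff α (MvPolynomial.map C f * C (MvPolynomial.map (starRingEnd ℂ) f))
        = MvPolynomial.map (starRingEnd ℂ) f * C (coeff α f) := by
    intro f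
    rw [mul_comm, coeff_C_mul, coeff_map, mul_comm]
  simp only [hterm] at h2
  have h3 := congrArg (MvPolynomial.map (starRingEnd ℂ)) h2
  have hmm : ∀ f : MvPolynomial σ ℂ,
      MvPolynomial.map (starRingEnd ℂ) (MvPolynomial.map (starRingEnd ℂ) f) = f := by
    intro f
    rw [MvPolynomial.map_map]
    have hcc : (starRingEnd ℂ).comp (starRingEnd ℂ) = RingHom.id ℂ :=
      RingHom.ext fun z => Complex.conj_conj z
    rw [hcc, MvPolynomial.map_id]
  simp only [map_sum, map_mul, hmm, MvPolynomial.map_C] at h3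
  have hsm : ∀ (f : MvPolynomial σ ℂ) (c : ℂ), f * C ((starRingEnd ℂ) c) = (starRingEnd ℂ) c • f := by
    intro f c
    rw [MvPolynomial.smul_eq_C_mul, mul_comm]
  simp only [hsm] at h3
  exact h3

section MatrixPart
open Matrix

lemma aux_matrix {m ι : Type*} [Fintype m] [Fintype ι] [DecidableEq m] (V : Matrix m ι ℂ) (b : ι) :
    Vᵀ b ∈ Submodule.span ℂ (Set.range (V * Vᴴ)ᵀ) := by
  have h1 : Submodule.span ℂ (Set.range (V * Vᴴ)ᵀ) ≤ Submodule.span ℂ (Set.range Vᵀ) := by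
    rw [Submodule.span_le]
    rintro _ ⟨t, rfl⟩
    have hcol : (V * Vᴴ)ᵀ t = ∑ a, (starRingEnd ℂ) (V t a) • Vᵀ a := by
      funext s
      simp [Matrix.mul_apply, Matrix.conjTranspose_apply, Matrix.transpose_apply, mul_comm]
    rw [hcol]
    exact Submodule.sum_mem _ fun a _ =>
      Submodule.smul_mem _ _ (Submodule.subset_span ⟨a, rfl⟩)
  have h2 : finrank ℂ (Submodule.span ℂ (Set.range Vᵀ))
      ≤ finrank ℂ (Submodule.span ℂ (Set.range (V * Vᴴ)ᵀ)) := by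
    show finrank ℂ (Submodule.span ℂ (Set.range V.col))
      ≤ finrank ℂ (Submodule.span ℂ (Set.range (V * Vᴴ).col))
    rw [← Matrix.rank_eq_finrank_span_cols, ← Matrix.rank_eq_finrank_span_cols,
      Matrix.rank_self_mul_conjTranspose]
  have heq := Submodule.eq_of_le_of_finrank_le h1 h2
  rw [heq]
  exact Submodule.subset_span ⟨b, rfl⟩

end MatrixPart

lemma aux_support {σ ι' : Type*} [DecidableEq (σ →₀ ℕ)] [Fintype ι'] (G : ι' → MvPolynomial σ ℂ)
    {f : MvPolynomial σ ℂ} (hf : f ∈ Submodule.span ℂ (Set.range G)) :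
    f.support ⊆ Finset.univ.biUnion (fun a => (G a).support) := by
  classical
  refine Submodule.span_induction ?_ ?_ ?_ ?_ hf
  · rintro x ⟨a, rfl⟩
    intro d hd
    exact Finset.mem_biUnion.mpr ⟨a, ⟨Finset.mem_univ a, hd⟩⟩
  · simp
  · intro x y _ _ hx hy
    intro d hd
    rw [MvPolynomial.mem_support_iff, coeff_add] at hd
    by_cases h1 : coeff d x = 0
    · have h2 : coeff d y ≠ 0 := fun h2 => hd (by rw [h1, h2, add_zero])
      exact hy (MvPolynomial.mem_support_iff.mpr h2)
    · exact hx (MvPolynomial.mem_support_iff.mpr h1)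
  · intro c x _ hx
    exact fun d hd => hx (Finsupp.support_smul hd)

section MatrixPart2
open Matrix

lemma aux_span {σ : Type*} [DecidableEq (σ →₀ ℕ)] {ι κ : Type*} [Fintype ι] [Fintype κ]
    (G : ι → MvPolynomial σ ℂ) (H : κ → MvPolynomial σ ℂ)
    (h : ∀ Z : σ → ℂ,
      (∑ a, eval Z (G a) * (starRingEnd ℂ) (eval Z (G a)))
        = ∑ j, eval Z (H j) * (starRingEnd ℂ) (eval Z (H j)))
    (b : ι) : G b ∈ Submodule.span ℂ (Set.range H) := by
  classical
  have hconj : ∀ (f : MvPolynomial σ ℂ) (Z : σ → ℂ),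
      eval (fun i => (starRingEnd ℂ) (Z i)) (MvPolynomial.map (starRingEnd ℂ) f)
        = (starRingEnd ℂ) (eval Z f) := by
    intro f Z
    rw [eval_map]
    exact (MvPolynomial.eval₂_comp_left (starRingEnd ℂ) (RingHom.id ℂ) Z f).symm
  -- the big polynomial identity
  have hE : (∑ a, rename Sum.inl (G a) * rename Sum.inr (MvPolynomial.map (starRingEnd ℂ) (G a)))
      = ∑ j, rename Sum.inl (H j) * rename Sum.inr (MvPolynomial.map (starRingEnd ℂ) (H j)) := by
    rw [← sub_eq_zero]
    apply aux_diag_vanish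
    intro Z
    rw [map_sub, map_sum, map_sum]
    have hterm : ∀ f : MvPolynomial σ ℂ,
        eval (Sum.elim Z (fun i => (starRingEnd ℂ) (Z i)))
          (rename Sum.inl f * rename Sum.inr (MvPolynomial.map (starRingEnd ℂ) f))
        = eval Z f * (starRingEnd ℂ) (eval Z f) := by
      intro f
      rw [_root_.map_mul, eval_rename, eval_rename]
      have h1 : (Sum.elim Z (fun i => (starRingEnd ℂ) (Z i))) ∘ Sum.inl = Z := rfl
      have h2 : (Sum.elim Z (fun i => (starRingEnd ℂ) (Z i))) ∘ Sum.inr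
          = fun i => (starRingEnd ℂ) (Z i) := rfl
      rw [h1, h2, hconj]
    simp only [hterm]
    rw [h Z, sub_self]
  have hstar := aux_star_coeff G H hE
  -- coefficient support
  set S : Finset (σ →₀ ℕ) := Finset.univ.biUnion (fun a => (G a).support) with hS
  set π : MvPolynomial σ ℂ →ₗ[ℂ] ({x // x ∈ S} → ℂ) :=
    { toFun := fun f s => coeff s.1 f
      map_add' := by intro x y; funext s; simp [coeff_add]
      map_smul' := by intro c x; funext s; simp [coeff_smul] } with hπ
  have hπinj : ∀ f ∈ Submodule.span ℂ (Set.range G), π f = 0 → f = 0 := by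
    intro f hf h0
    apply MvPolynomial.ext
    intro d
    by_cases hd : d ∈ S
    · have := congrFun h0 ⟨d, hd⟩
      simpa [hπ] using this
    · rw [coeff_zero]
      by_contra hne
      exact hd (aux_support G hf (MvPolynomial.mem_support_iff.mpr hne))
  set V : Matrix {x // x ∈ S} ι ℂ := fun s a => coeff s.1 (G a) with hV
  set u : {x // x ∈ S} → MvPolynomial σ ℂ :=
    fun t => ∑ a, (starRingEnd ℂ) (coeff t.1 (G a)) • G a with hu
  have hVb : Vᵀ b = π (G b) := rfl
  have hcolu : ∀ t, (V * Vᴴ)ᵀ t = π (u t) := by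
    intro t
    funext s
    have hrhs : π (u t) s = ∑ a, (starRingEnd ℂ) (coeff t.1 (G a)) * coeff s.1 (G a) := by
      simp [hπ, hu, MvPolynomial.coeff_sum, coeff_smul]
    rw [hrhs]
    simp only [Matrix.transpose_apply, Matrix.mul_apply, Matrix.conjTranspose_apply]
    simp [hV, mul_comm]
  have hmem := aux_matrix V b
  have hrange : Set.range (V * Vᴴ)ᵀ = π '' Set.range u := by
    have hfun : (V * Vᴴ)ᵀ = π ∘ u := funext hcolu
    rw [hfun, Set.range_comp]
  rw [hrange, ← Submodule.map_span] at hmem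
  rw [hVb] at hmem
  obtain ⟨w, hw, hww⟩ := hmem
  have huG : ∀ t, u t ∈ Submodule.span ℂ (Set.range G) := by
    intro t
    exact Submodule.sum_mem _ fun a _ =>
      Submodule.smul_mem _ _ (Submodule.subset_span ⟨a, rfl⟩)
  have huH : ∀ t, u t ∈ Submodule.span ℂ (Set.range H) := by
    intro t
    rw [hu]
    simp only []
    rw [hstar t.1]
    exact Submodule.sum_mem _ fun j _ =>
      Submodule.smul_mem _ _ (Submodule.subset_span ⟨j, rfl⟩)
  have hwG : w ∈ Submodule.span ℂ (Set.range G) := by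
    have : Submodule.span ℂ (Set.range u) ≤ Submodule.span ℂ (Set.range G) := by
      rw [Submodule.span_le]; rintro _ ⟨t, rfl⟩; exact huG t
    exact this hw
  have hwH : w ∈ Submodule.span ℂ (Set.range H) := by
    have : Submodule.span ℂ (Set.range u) ≤ Submodule.span ℂ (Set.range H) := by
      rw [Submodule.span_le]; rintro _ ⟨t, rfl⟩; exact huH t
    exact this hw
  have : G b = w := by
    have hsub : G b - w ∈ Submodule.span ℂ (Set.range G) :=
      Submodule.sub_mem _ (Submodule.subset_span ⟨b, rfl⟩) hwG
    have h0 : π (G b - w) = 0 := by rw [map_sub, hww, sub_self]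
    exact sub_eq_zero.mp (hπinj _ hsub h0)
  rw [this]
  exact hwH

end MatrixPart2

variable {σ : Type*} [LinearOrder σ]

/-- `μ` is the leading (Lex-maximal) exponent of `f`. -/
def IsLed (f : MvPolynomial σ ℂ) (μ : σ →₀ ℕ) : Prop :=
  μ ∈ f.support ∧ ∀ ν ∈ f.support, toLex ν ≤ toLex μ

lemma exists_led (f : MvPolynomial σ ℂ) (hf : f ≠ 0) : ∃ μ, IsLed f μ := by
  classical
  have hsupp : f.support.Nonempty := MvPolynomial.support_nonempty.mpr hf
  have himg : (f.support.image toLex).Nonempty := hsupp.image toLex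
  obtain ⟨ν, hν, hmax⟩ := Finset.mem_image.mp ((f.support.image toLex).max'_mem himg)
  refine ⟨ν, hν, fun ν' hν' => ?_⟩
  rw [hmax]
  exact Finset.le_max' _ _ (Finset.mem_image_of_mem toLex hν')

lemma IsLed.ne_zero {f : MvPolynomial σ ℂ} {μ} (h : IsLed f μ) : f ≠ 0 := by
  intro h0
  rw [h0] at h
  simpa using h.1

lemma IsLed.mul_X {f : MvPolynomial σ ℂ} {μ} (k : σ) (h : IsLed f μ) :
    IsLed (X k * f) (Finsupp.single k 1 + μ) := by
  constructor
  · rw [MvPolynomial.support_X_mul]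
    exact Finset.mem_map_of_mem _ h.1
  · intro ν' hν'
    rw [MvPolynomial.support_X_mul, Finset.mem_map] at hν'
    obtain ⟨ν, hν, rfl⟩ := hν'
    rw [addLeftEmbedding_apply]
    rw [toLex_add, toLex_add]
    exact add_le_add_right (h.2 ν hν) _

lemma aux_indep {ι : Type*} [Fintype ι] (g : ι → MvPolynomial σ ℂ) (m : ι → (σ →₀ ℕ))
    (hinj : Function.Injective m) (hled : ∀ i, IsLed (g i) (m i)) :
    LinearIndependent ℂ g := by
  classical
  rw [Fintype.linearIndependent_iff]
  intro c hc
  by_contra hex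
  push_neg at hex
  obtain ⟨i1, hi1⟩ := hex
  set t := Finset.univ.filter (fun i => c i ≠ 0) with ht
  have htne : t.Nonempty := ⟨i1, by simp [ht, hi1]⟩
  obtain ⟨i0, hi0t, hmax⟩ := Finset.exists_max_image t (fun i => toLex (m i)) htne
  have hcoeff := congrArg (MvPolynomial.coeff (m i0)) hc
  rw [MvPolynomial.coeff_sum, coeff_zero] at hcoeff
  rw [Finset.sum_eq_single i0] at hcoeff
  · have hne : coeff (m i0) (g i0) ≠ 0 := MvPolynomial.mem_support_iff.mp (hled i0).1
    rw [MvPolynomial.coeff_smul, smul_eq_mul] at hcoeff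
    have hci0 : c i0 ≠ 0 := (Finset.mem_filter.mp hi0t).2
    exact hci0 ((mul_eq_zero.mp hcoeff).resolve_right hne)
  · intro i _ hii0
    rw [MvPolynomial.coeff_smul, smul_eq_mul]
    by_cases hci : c i = 0
    · rw [hci, zero_mul]
    · have hit : i ∈ t := Finset.mem_filter.mpr ⟨Finset.mem_univ i, hci⟩
      have hc0 : coeff (m i0) (g i) = 0 := by
        by_contra habs
        have hmem : m i0 ∈ (g i).support := MvPolynomial.mem_support_iff.mpr habs
        have h1 : toLex (m i0) ≤ toLex (m i) := (hled i).2 _ hmem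
        have h2 : toLex (m i) ≤ toLex (m i0) := hmax i hit
        exact hii0 (hinj (toLex.injective (le_antisymm h2 h1)))
      rw [hc0, mul_zero]
  · intro h
    exact absurd (Finset.mem_univ i0) h

lemma aux_led_card {p : ℕ} (F : Fin p → MvPolynomial σ ℂ)
    (hFli : LinearIndependent ℂ F) :
    ∃ D : Finset (σ →₀ ℕ), D.card = p ∧
      ∀ μ ∈ D, ∃ f, f ∈ Submodule.span ℂ (Set.range F) ∧ IsLed f μ := by
  classical
  set V := Submodule.span ℂ (Set.range F) with hV
  haveI : FiniteDimensional ℂ V := FiniteDimensional.span_of_finite ℂ (Set.finite_range F)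
  have hfr : finrank ℂ V = p := by
    rw [hV, finrank_span_eq_card hFli, Fintype.card_fin]
  set SV : Finset (σ →₀ ℕ) := Finset.univ.biUnion (fun i => (F i).support) with hSV
  set D0 : Finset (σ →₀ ℕ) := SV.filter (fun μ => ∃ f, f ∈ V ∧ IsLed f μ) with hD0
  have hcard : p ≤ D0.card := by
    set Φ : V →ₗ[ℂ] ({μ // μ ∈ D0} → ℂ) :=
      { toFun := fun f μ => coeff μ.1 f.1
        map_add' := by intro x y; funext s; simp
        map_smul' := by intro c x; funext s; simp } with hΦ
    have hinj : Function.Injective Φ := by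
      rw [← LinearMap.ker_eq_bot, LinearMap.ker_eq_bot']
      intro f h0
      by_contra hne
      have hfne : (f : MvPolynomial σ ℂ) ≠ 0 := fun h => hne (Subtype.ext h)
      obtain ⟨μ, hled⟩ := exists_led f.1 hfne
      have hμD0 : μ ∈ D0 := by
        rw [hD0, Finset.mem_filter]
        exact ⟨aux_support F f.2 hled.1, ⟨f.1, f.2, hled⟩⟩
      have := congrFun h0 ⟨μ, hμD0⟩
      simp only [hΦ, LinearMap.coe_mk, AddHom.coe_mk, Pi.zero_apply] at this
      exact MvPolynomial.mem_support_iff.mp hled.1 this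
    have hle := LinearMap.finrank_le_finrank_of_injective hinj
    rw [hfr, Module.finrank_fintype_fun_eq_card, Fintype.card_coe] at hle
    exact hle
  obtain ⟨D, hDsub, hDcard⟩ := Finset.exists_subset_card_eq (s := D0) (n := p) hcard
  refine ⟨D, hDcard, fun μ hμ => ?_⟩
  have := hDsub hμ
  rw [hD0, Finset.mem_filter] at this
  exact this.2

lemma aux_comb (n : ℕ) (M : Finset (Fin (n+1) →₀ ℕ)) (hM : M.card = n + 1) :
    (n+1)*(n+2) ≤ 2 * ((Finset.univ ×ˢ M).image
      (fun km : Fin (n+1) × (Fin (n+1) →₀ ℕ) => Finsupp.single km.1 1 + km.2)).card := by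
  classical
  set φ : Fin (n+1) × (Fin (n+1) →₀ ℕ) → (Fin (n+1) →₀ ℕ) :=
    fun km => Finsupp.single km.1 1 + km.2 with hφ
  set T : Finset (Fin (n+1) × (Fin (n+1) →₀ ℕ)) := Finset.univ ×ˢ M with hT
  set P := T.image φ with hP
  have hTcard : T.card = (n+1) * (n+1) := by
    rw [hT, Finset.card_product, Finset.card_univ, Fintype.card_fin, hM]
  have key : ∀ k l k' l' : Fin (n+1), ∀ m m' : Fin (n+1) →₀ ℕ, m ≠ m' →
      Finsupp.single k 1 + m = Finsupp.single l 1 + m' →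
      Finsupp.single k' 1 + m = Finsupp.single l' 1 + m' → k = k' ∧ l = l' := by
    intro k l k' l' m m' hmm eq1 eq2
    have h3 : Finsupp.single k 1 + Finsupp.single l' 1 + (m + m')
        = Finsupp.single l 1 + Finsupp.single k' 1 + (m + m') := by
      calc Finsupp.single k 1 + Finsupp.single l' 1 + (m + m')
          = (Finsupp.single k 1 + m) + (Finsupp.single l' 1 + m') := by abel
        _ = (Finsupp.single l 1 + m') + (Finsupp.single k' 1 + m) := by rw [eq1, ← eq2]
        _ = Finsupp.single l 1 + Finsupp.single k' 1 + (m + m') := by abel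
    have h4 := add_right_cancel h3
    rcases (Finsupp.single_add_single_eq_single_add_single (one_ne_zero) (one_ne_zero)).mp h4 with
      ⟨hkl, hl'k'⟩ | ⟨-, hkk', hl'l⟩ | ⟨habs, -, -⟩
    · exfalso
      apply hmm
      rw [hkl] at eq1
      exact add_left_cancel eq1
    · exact ⟨hkk', hl'l.symm⟩
    · exact absurd habs (by simp)
  set fib : (Fin (n+1) →₀ ℕ) → Finset (Fin (n+1) × (Fin (n+1) →₀ ℕ)) :=
    fun ν => T.filter (fun km => φ km = ν) with hfib
  have hsum : ∑ ν ∈ P, (fib ν).card = T.card :=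
    (Finset.card_eq_sum_card_fiberwise (fun x hx => Finset.mem_image_of_mem φ hx)).symm
  set C2 := (T ×ˢ T).filter (fun pq => φ pq.1 = φ pq.2 ∧ pq.1 ≠ pq.2) with hC2
  have hC2card : C2.card ≤ (n+1) * n := by
    have hinj : ∀ pq ∈ C2, ∀ pq' ∈ C2,
        (fun pq : (Fin (n+1) × (Fin (n+1) →₀ ℕ)) × (Fin (n+1) × (Fin (n+1) →₀ ℕ)) =>
          (pq.1.2, pq.2.2)) pq = (fun pq => (pq.1.2, pq.2.2)) pq' → pq = pq' := by
      rintro ⟨⟨k, m⟩, ⟨l, m2⟩⟩ hpq ⟨⟨k', m3⟩, ⟨l', m4⟩⟩ hpq' hψ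
      simp only [Prod.mk.injEq] at hψ
      obtain ⟨rfl, rfl⟩ := hψ
      simp only [hC2, Finset.mem_filter, hφ, ne_eq, Prod.mk.injEq] at hpq hpq'
      have hmne : m ≠ m2 := by
        rintro rfl
        have := add_right_cancel hpq.2.1
        exact hpq.2.2 ⟨Finsupp.single_left_injective one_ne_zero this, rfl⟩
      obtain ⟨hk, hl⟩ := key k l k' l' m m2 hmne hpq.2.1 hpq'.2.1
      simp [hk, hl]
    have hmaps : ∀ pq ∈ C2, (pq.1.2, pq.2.2) ∈ M.offDiag := by
      rintro ⟨⟨k, m⟩, ⟨l, m2⟩⟩ hpq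
      simp only [hC2, Finset.mem_filter, Finset.mem_product, hT, hφ, ne_eq,
        Prod.mk.injEq, Finset.mem_offDiag] at hpq ⊢
      refine ⟨hpq.1.1.2, hpq.1.2.2, ?_⟩
      rintro rfl
      have := add_right_cancel hpq.2.1
      exact hpq.2.2 ⟨Finsupp.single_left_injective one_ne_zero this, rfl⟩
    have := Finset.card_le_card_of_injOn _ hmaps hinj
    have harith : (n + 1) * (n + 1) - (n + 1) = (n + 1) * n := by
      have h5 : (n+1)*(n+1) = (n+1)*n + (n+1) := by ring
      omega
    rwa [Finset.offDiag_card, hM, harith] at this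
  have hfibpos : ∀ ν ∈ P, 1 ≤ (fib ν).card := by
    intro ν hν
    rw [hP] at hν
    obtain ⟨km, hkm, hkmν⟩ := Finset.mem_image.mp hν
    exact Finset.card_pos.mpr ⟨km, Finset.mem_filter.mpr ⟨hkm, hkmν⟩⟩
  have hC2sum : C2.card = ∑ ν ∈ P, ((fib ν).card * (fib ν).card - (fib ν).card) := by
    have hmapsP : ∀ pq ∈ C2, φ pq.1 ∈ P := by
      rintro pq hpq
      rw [hC2, Finset.mem_filter] at hpq
      exact Finset.mem_image_of_mem φ (Finset.mem_product.mp hpq.1).1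
    rw [Finset.card_eq_sum_card_fiberwise hmapsP]
    refine Finset.sum_congr rfl fun ν hν => ?_
    have hfe : C2.filter (fun pq => φ pq.1 = ν) = (fib ν).offDiag := by
      apply Finset.ext
      rintro ⟨p, q⟩
      simp only [Finset.mem_filter, hC2, Finset.mem_product, Finset.mem_offDiag, hfib, ne_eq]
      constructor
      · rintro ⟨⟨⟨hpT, hqT⟩, hφeq, hne⟩, hφν⟩
        exact ⟨⟨hpT, hφν⟩, ⟨hqT, by rw [← hφeq]; exact hφν⟩, hne⟩
      · rintro ⟨⟨hpT, hφν⟩, ⟨hqT, hφν'⟩, hne⟩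
        exact ⟨⟨⟨hpT, hqT⟩, by rw [hφν, hφν'], hne⟩, hφν⟩
    rw [hfe, Finset.offDiag_card]
  have hpoint : ∀ ν ∈ P, 2 * (fib ν).card ≤ 2 + ((fib ν).card * (fib ν).card - (fib ν).card) := by
    intro ν hν
    obtain ⟨d, hd⟩ := Nat.exists_eq_add_of_le (hfibpos ν hν)
    rw [hd]
    have hdd : d ≤ d * d := by
      rcases Nat.eq_zero_or_pos d with h | h
      · simp [h]
      · exact Nat.le_mul_of_pos_left d h
    have hexp : (1 + d) * (1 + d) - (1 + d) = d * d + d := by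
      have : (1 + d) * (1 + d) = (d * d + d) + (1 + d) := by ring
      omega
    rw [hexp]
    omega
  have hmain : ∑ ν ∈ P, 2 * (fib ν).card ≤ ∑ ν ∈ P, (2 + ((fib ν).card * (fib ν).card - (fib ν).card)) :=
    Finset.sum_le_sum hpoint
  rw [← Finset.mul_sum, hsum, hTcard] at hmain
  rw [Finset.sum_add_distrib, ← hC2sum, Finset.sum_const, smul_eq_mul] at hmain
  have hfinal : 2 * ((n+1) * (n+1)) ≤ P.card * 2 + (n+1) * n := by
    calc 2 * ((n+1) * (n+1)) ≤ P.card * 2 + C2.card := hmain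
      _ ≤ P.card * 2 + (n+1) * n := by omega
  have hiden : 2 * ((n+1) * (n+1)) = (n+1)*(n+2) + (n+1)*n := by ring
  omega


set_option maxHeartbeats 1000000 in
/-- Proposition 3 of [GrHa13], case `p ≥ n+1`:
If `A(Z,Z̄) = Σ_{i=1}^p |F_i(Z)|²` with `F_i` linearly independent homogeneous polynomials
of degree `d`, and `‖Z‖² A(Z,Z̄) = Σ_{j=1}^R |H_j(Z)|²` with `H_j` linearly independent
homogeneous of degree `d+1`, and `p ≥ n+1`, then `R ≥ (n+1)(n+2)/2`. -/
theorem sos_rank_bihomogeneous_high_rank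
    (n p R d : ℕ)
    (F : Fin p → MvPolynomial (Fin (n + 1)) ℂ)
    (H : Fin R → MvPolynomial (Fin (n + 1)) ℂ)
    (hFhom : ∀ i, (F i).IsHomogeneous d)
    (hHhom : ∀ j, (H j).IsHomogeneous (d + 1))
    (hFli : LinearIndependent ℂ F)
    (hHli : LinearIndependent ℂ H)
    (heq : ∀ Z : Fin (n + 1) → ℂ,
      (∑ j, ‖Z j‖ ^ 2) * (∑ i, ‖MvPolynomial.eval Z (F i)‖ ^ 2)
        = ∑ j, ‖MvPolynomial.eval Z (H j)‖ ^ 2)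
    (hpn : n + 1 ≤ p) :
    (n + 1) * (n + 2) / 2 ≤ R := by
  classical
  set G : Fin (n+1) × Fin p → MvPolynomial (Fin (n+1)) ℂ := fun a => X a.1 * F a.2 with hG
  have hkey : ∀ w : ℂ, w * (starRingEnd ℂ) w = ((‖w‖^2 : ℝ) : ℂ) := by
    intro w
    rw [Complex.mul_conj]
    norm_cast
    rw [Complex.normSq_eq_norm_sq]
  have hpt : ∀ Z : Fin (n+1) → ℂ,
      (∑ a, eval Z (G a) * (starRingEnd ℂ) (eval Z (G a)))
        = ∑ j, eval Z (H j) * (starRingEnd ℂ) (eval Z (H j)) := by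
    intro Z
    have hL : (∑ a, eval Z (G a) * (starRingEnd ℂ) (eval Z (G a)))
        = (((∑ k, ‖Z k‖^2) * (∑ i, ‖eval Z (F i)‖^2) : ℝ) : ℂ) := by
      simp only [hkey]
      rw [← Complex.ofReal_sum]
      congr 1
      have hstep : ∀ a : Fin (n+1) × Fin p,
          ‖eval Z (G a)‖^2 = ‖Z a.1‖^2 * ‖eval Z (F a.2)‖^2 := by
        intro a
        rw [hG]
        simp only [_root_.map_mul, eval_X, norm_mul, mul_pow]
      simp only [hstep]
      rw [Finset.sum_mul_sum]
      simp [Fintype.sum_prod_type]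
    have hR : (∑ j, eval Z (H j) * (starRingEnd ℂ) (eval Z (H j)))
        = ((∑ j, ‖eval Z (H j)‖^2 : ℝ) : ℂ) := by
      simp only [hkey]
      rw [← Complex.ofReal_sum]
    rw [hL, hR, heq Z]
  have hspan : ∀ a, G a ∈ Submodule.span ℂ (Set.range H) := fun a => aux_span G H hpt a
  set spanH := Submodule.span ℂ (Set.range H) with hspanH
  haveI : FiniteDimensional ℂ spanH := FiniteDimensional.span_of_finite ℂ (Set.finite_range H)
  have hfrH : finrank ℂ spanH = R := by
    rw [hspanH, finrank_span_eq_card hHli, Fintype.card_fin]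
  have hmul_mem : ∀ (k : Fin (n+1)) (f : MvPolynomial (Fin (n+1)) ℂ),
      f ∈ Submodule.span ℂ (Set.range F) → X k * f ∈ spanH := by
    intro k f hf
    refine Submodule.span_induction ?_ ?_ ?_ ?_ hf
    · rintro x ⟨i, rfl⟩
      exact hspan (k, i)
    · rw [mul_zero]; exact Submodule.zero_mem _
    · intro x y _ _ hx hy
      rw [mul_add]; exact Submodule.add_mem _ hx hy
    · intro c x _ hx
      rw [mul_smul_comm]; exact Submodule.smul_mem _ _ hx
  obtain ⟨D, hDcard, hDled⟩ := aux_led_card F hFli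
  obtain ⟨M, hMsub, hMcard⟩ := Finset.exists_subset_card_eq (s := D) (n := n+1) (by omega)
  set PE := (Finset.univ ×ˢ M).image
    (fun km : Fin (n+1) × (Fin (n+1) →₀ ℕ) => Finsupp.single km.1 1 + km.2) with hPE
  have hcomb : (n+1)*(n+2) ≤ 2 * PE.card := aux_comb n M hMcard
  have hwit : ∀ ν ∈ PE, ∃ g, g ∈ spanH ∧ IsLed g ν := by
    intro ν hν
    obtain ⟨⟨k, μ⟩, hkμ, rfl⟩ := Finset.mem_image.mp hν
    have hμM : μ ∈ M := (Finset.mem_product.mp hkμ).2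
    obtain ⟨f, hf, hled⟩ := hDled μ (hMsub hμM)
    exact ⟨X k * f, hmul_mem k f hf, hled.mul_X k⟩
  choose gfun hg1 hg2 using hwit
  set g' : {ν // ν ∈ PE} → spanH := fun ν => ⟨gfun ν.1 ν.2, hg1 ν.1 ν.2⟩ with hg'
  have hli : LinearIndependent ℂ (fun ν : {ν // ν ∈ PE} => gfun ν.1 ν.2) :=
    aux_indep _ (fun ν => ν.1) Subtype.val_injective (fun ν => hg2 ν.1 ν.2)
  have hli' : LinearIndependent ℂ g' := by
    apply LinearIndependent.of_comp spanH.subtype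
    exact hli
  have hcardP : PE.card ≤ R := by
    have hcle := hli'.fintype_card_le_finrank
    rwa [Fintype.card_coe, hfrH] at hcle
  have hfin : (n+1) * (n+2) ≤ 2 * R := le_trans hcomb (by omega)
  generalize hq : (n+1) * (n+2) = q at hfin ⊢
  omega
end

section
/- Let f₁,…,f_p be linearly independent holomorphic functions on a connected open neighborhood Ω of 0 in ℂⁿ with fᵢ(0) = 0 for all i, and suppose (1 + ‖z‖²)·(1 + Σ_{i=1}^p |fᵢ(z)|²) = 1 + Σ_{k=1}^r |hₖ(z)|² on Ω, where h₁,…,h_r are linearly independent holomorphic functions on Ω. If p ≤ n, then n(p+1) − p(p−1)/2 ≤ r ≤ n(p+1) + p. -/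
open scoped BigOperators

open scoped BigOperators
open Asymptotics

noncomputable def conjCLM {n : ℕ} (L : (Fin n → ℂ) →L[ℂ] ℂ) : (Fin n → ℂ) →L[ℂ] ℂ :=
  LinearMap.mkContinuous
    { toFun := fun u => starRingEnd ℂ (L (star u))
      map_add' := by intro x y; simp [star_add, map_add]
      map_smul' := by intro c x; simp [star_smul, map_smul, smul_eq_mul] }
    ‖L‖ (by
      intro u
      simp only [LinearMap.coe_mk, AddHom.coe_mk]
      rw [RCLike.norm_conj]
      calc ‖L (star u)‖ ≤ ‖L‖ * ‖star u‖ := L.le_opNorm _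
        _ = ‖L‖ * ‖u‖ := by rw [norm_star])

theorem conj_differentiableAt {n : ℕ} {q : (Fin n → ℂ) → ℂ} {z : Fin n → ℂ}
    (h : DifferentiableAt ℂ q (star z)) :
    DifferentiableAt ℂ (fun w => starRingEnd ℂ (q (star w))) z := by
  obtain ⟨L, hL⟩ : ∃ L, HasFDerivAt q L (star z) := ⟨_, h.hasFDerivAt⟩
  refine (HasFDerivAt.differentiableAt (f' := conjCLM L) ?_)
  rw [hasFDerivAt_iff_isLittleO_nhds_zero] at hL ⊢
  have hcomp : (fun u : Fin n → ℂ => q (star z + star u) - q (star z) - L (star u))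
      =o[nhds 0] (fun u : Fin n → ℂ => star u) := by
    have hst : Filter.Tendsto (fun u : Fin n → ℂ => star u) (nhds 0) (nhds 0) := by
      simpa using (continuous_star.tendsto (0 : Fin n → ℂ))
    exact hL.comp_tendsto hst
  rw [isLittleO_iff] at hcomp ⊢
  intro c hc
  filter_upwards [hcomp hc] with u hu
  have : (fun w => starRingEnd ℂ (q (star w))) (z + u) - (starRingEnd ℂ) (q (star z))
      - conjCLM L u = starRingEnd ℂ (q (star z + star u) - q (star z) - L (star u)) := by
    simp [conjCLM, star_add, map_sub]
  rw [this, RCLike.norm_conj]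
  simpa [norm_star] using hu

set_option maxHeartbeats 2000000 in
open Metric in
theorem sos_polarization {n : ℕ} {Ω : Set (Fin n → ℂ)} (hΩo : IsOpen Ω)
    {ε : ℝ} (hε : 0 < ε) (hsub : ball (0 : Fin n → ℂ) (20*ε) ⊆ Ω)
    {ι κ : Type} [Fintype ι] [Fintype κ]
    (h : ι → (Fin n → ℂ) → ℂ) (g : κ → (Fin n → ℂ) → ℂ)
    (hh : ∀ k, DifferentiableOn ℂ (h k) Ω) (hg : ∀ m, DifferentiableOn ℂ (g m) Ω)
    (heq : ∀ z ∈ Ω, ∑ k, h k z * starRingEnd ℂ (h k z) = ∑ m, g m z * starRingEnd ℂ (g m z)) :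
    ∀ z ∈ ball (0 : Fin n → ℂ) ε, ∀ w ∈ ball (0 : Fin n → ℂ) ε,
      ∑ k, h k z * starRingEnd ℂ (h k w) = ∑ m, g m z * starRingEnd ℂ (g m w) := by
  intro z hz w hw
  set d : Fin n → ℂ := z - w with hd
  have hzn : ‖z‖ < ε := by simpa [dist_eq_norm] using hz
  have hwn : ‖w‖ < ε := by simpa [dist_eq_norm] using hw
  have hdn : ‖d‖ < 2*ε := by
    calc ‖d‖ ≤ ‖z‖ + ‖w‖ := norm_sub_le _ _
      _ < 2*ε := by linarith
  have hmem : ∀ lam : ℂ, ‖lam‖ < 5 → w + lam • d ∈ Ω := by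
    intro lam hlam
    apply hsub
    rw [mem_ball, dist_zero_right]
    have h1 := norm_nonneg lam
    have h2 := norm_nonneg d
    calc ‖w + lam • d‖ ≤ ‖w‖ + ‖lam‖ * ‖d‖ := by
          refine le_trans (norm_add_le _ _) ?_
          rw [norm_smul]
      _ < 20 * ε := by nlinarith
  set hcal : ι → (Fin n → ℂ) → ℂ := fun k ζ => starRingEnd ℂ (h k (star ζ)) with hhcal
  set gcal : κ → (Fin n → ℂ) → ℂ := fun m ζ => starRingEnd ℂ (g m (star ζ)) with hgcal
  set Q : ℂ × ℂ → ℂ := fun P =>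
    (∑ k, h k (w + P.1 • d) * hcal k (star w + P.2 • star d)) -
    (∑ m, g m (w + P.1 • d) * gcal m (star w + P.2 • star d)) with hQ
  have hstar_pt : ∀ nu : ℂ, star (star w + nu • star d) = w + (starRingEnd ℂ nu) • d := by
    intro nu
    funext j
    simp [Pi.star_apply, smul_eq_mul, map_mul]
  have hQd : ∀ P : ℂ × ℂ, ‖P.1‖ < 5 → ‖P.2‖ < 5 → DifferentiableAt ℂ Q P := by
    intro P hP1 hP2
    have hα : DifferentiableAt ℂ (fun P : ℂ × ℂ => w + P.1 • d) P :=
      (differentiableAt_const w).add (differentiableAt_fst.smul_const d)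
    have hβ : DifferentiableAt ℂ (fun P : ℂ × ℂ => star w + P.2 • star d) P :=
      (differentiableAt_const (star w)).add (differentiableAt_snd.smul_const (star d))
    have hpt2 : star (star w + P.2 • star d) ∈ Ω := by
      rw [hstar_pt]
      exact hmem _ (by simpa using hP2)
    apply DifferentiableAt.sub
    · apply DifferentiableAt.fun_sum
      intro k _
      apply DifferentiableAt.mul
      · exact ((hh k _ (hmem P.1 hP1)).differentiableAt
          (hΩo.mem_nhds (hmem P.1 hP1))).comp P hα
      · exact (conj_differentiableAt
          ((hh k _ hpt2).differentiableAt (hΩo.mem_nhds hpt2))).comp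
            (g := fun ζ => starRingEnd ℂ (h k (star ζ))) P hβ
    · apply DifferentiableAt.fun_sum
      intro m _
      apply DifferentiableAt.mul
      · exact ((hg m _ (hmem P.1 hP1)).differentiableAt
          (hΩo.mem_nhds (hmem P.1 hP1))).comp P hα
      · exact (conj_differentiableAt
          ((hg m _ hpt2).differentiableAt (hΩo.mem_nhds hpt2))).comp
            (g := fun ζ => starRingEnd ℂ (g m (star ζ))) P hβ
  have hdiag : ∀ lam : ℂ, ‖lam‖ < 5 → Q (lam, starRingEnd ℂ lam) = 0 := by
    intro lam hlam
    have hpt : w + lam • d ∈ Ω := hmem lam hlam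
    have hst : star w + (starRingEnd ℂ lam) • star d = star (w + lam • d) := by
      funext j
      simp [Pi.star_apply, smul_eq_mul, map_mul]
    rw [hQ]
    simp only
    rw [sub_eq_zero, hst]
    calc (∑ k, h k (w + lam • d) * hcal k (star (w + lam • d)))
        = ∑ k, h k (w + lam • d) * starRingEnd ℂ (h k (w + lam • d)) := by
          apply Finset.sum_congr rfl
          intro k _
          rw [hhcal]
          simp only [star_star]
      _ = ∑ m, g m (w + lam • d) * starRingEnd ℂ (g m (w + lam • d)) := heq _ hpt
      _ = ∑ m, g m (w + lam • d) * gcal m (star (w + lam • d)) := by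
          apply Finset.sum_congr rfl
          intro m _
          rw [hgcal]
          simp only [star_star]
  have hnormti : ∀ t : ℝ, ‖(t:ℂ) * Complex.I‖ = |t| := by
    intro t
    rw [norm_mul, Complex.norm_I, Complex.norm_real, Real.norm_eq_abs, mul_one]
  -- step A
  have hstepA : ∀ t : ℝ, |t| < 2 → ∀ s : ℂ, ‖s‖ < 2 →
      Q (s + (t:ℂ)*Complex.I, s - (t:ℂ)*Complex.I) = 0 := by
    intro t ht
    set φ : ℂ → ℂ := fun s => Q (s + (t:ℂ)*Complex.I, s - (t:ℂ)*Complex.I) with hφ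
    have hφd : DifferentiableOn ℂ φ (ball (0:ℂ) 2) := by
      intro s hs
      have hs2 : ‖s‖ < 2 := by simpa [dist_eq_norm] using hs
      have hb1 : ‖s + (t:ℂ)*Complex.I‖ < 5 := by
        calc ‖s + (t:ℂ)*Complex.I‖ ≤ ‖s‖ + ‖(t:ℂ)*Complex.I‖ := norm_add_le _ _
          _ < 5 := by rw [hnormti]; linarith
      have hb2 : ‖s - (t:ℂ)*Complex.I‖ < 5 := by
        calc ‖s - (t:ℂ)*Complex.I‖ ≤ ‖s‖ + ‖(t:ℂ)*Complex.I‖ := norm_sub_le _ _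
          _ < 5 := by rw [hnormti]; linarith
      apply DifferentiableAt.differentiableWithinAt
      exact (hQd (s + (t:ℂ)*Complex.I, s - (t:ℂ)*Complex.I) hb1 hb2).comp
        (f := fun s : ℂ => (s + (t:ℂ)*Complex.I, s - (t:ℂ)*Complex.I)) s
        ((differentiableAt_id.add_const _).prodMk (differentiableAt_id.sub_const _))
    have hreal : ∀ s' : ℝ, |s'| < 2 → φ (s':ℂ) = 0 := by
      intro s' hs'
      have hlam : ‖((s':ℂ) + (t:ℂ)*Complex.I)‖ < 5 := by
        calc ‖((s':ℂ) + (t:ℂ)*Complex.I)‖ ≤ ‖(s':ℂ)‖ + ‖(t:ℂ)*Complex.I‖ := norm_add_le _ _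
          _ < 5 := by
            rw [hnormti, Complex.norm_real, Real.norm_eq_abs]
            linarith
      have hconj : starRingEnd ℂ ((s':ℂ) + (t:ℂ)*Complex.I) = (s':ℂ) - (t:ℂ)*Complex.I := by
        simp [map_add, map_mul, Complex.conj_ofReal, Complex.conj_I]
        ring
      have := hdiag _ hlam
      rw [hconj] at this
      exact this
    have htend : Filter.Tendsto (fun m : ℕ => (((1:ℝ)/(m+1) : ℝ) : ℂ)) Filter.atTop
        (nhdsWithin (0:ℂ) {(0:ℂ)}ᶜ) := by
      rw [tendsto_nhdsWithin_iff]
      constructor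
      · have h0 : Filter.Tendsto (fun m : ℕ => (1:ℝ)/(m+1)) Filter.atTop (nhds 0) :=
          tendsto_one_div_add_atTop_nhds_zero_nat
        have h1 := (Complex.continuous_ofReal.tendsto 0).comp h0
        rw [show ((0:ℝ):ℂ) = (0:ℂ) from Complex.ofReal_zero] at h1
        exact h1
      · apply Filter.Eventually.of_forall
        intro m
        simp only [Set.mem_compl_iff, Set.mem_singleton_iff]
        intro hc
        have : (1:ℝ)/(m+1) = 0 := by exact_mod_cast hc
        have hm : (0:ℝ) < 1/(m+1) := by positivity
        linarith
    have hfreq : ∃ᶠ x in nhdsWithin (0:ℂ) {(0:ℂ)}ᶜ, φ x = 0 := by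
      apply htend.frequently
      apply Filter.Frequently.of_forall
      intro m
      apply hreal
      rw [abs_of_pos (by positivity : (0:ℝ) < 1/(m+1))]
      have : (1:ℝ)/(m+1) ≤ 1 := by
        rw [div_le_one (by positivity)]
        linarith [Nat.cast_nonneg (α := ℝ) m]
      linarith
    have hEq : Set.EqOn φ 0 (ball (0:ℂ) 2) :=
      (hφd.analyticOnNhd isOpen_ball).eqOn_zero_of_preconnected_of_frequently_eq_zero
        (convex_ball (0:ℂ) 2).isPreconnected (mem_ball_self (by norm_num)) hfreq
    intro s hs
    exact hEq (by simpa [mem_ball, dist_eq_norm] using hs)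
  -- step B with s = 1/2
  have hs0 : ‖(1/2 : ℂ)‖ < 2 := by norm_num
  set ψ : ℂ → ℂ := fun t => Q ((1/2:ℂ) + t*Complex.I, (1/2:ℂ) - t*Complex.I) with hψ
  have hψd : DifferentiableOn ℂ ψ (ball (0:ℂ) 2) := by
    intro t ht
    have ht2 : ‖t‖ < 2 := by simpa [dist_eq_norm] using ht
    have hti : ‖t * Complex.I‖ < 2 := by rw [norm_mul, Complex.norm_I, mul_one]; exact ht2
    have hb1 : ‖(1/2:ℂ) + t*Complex.I‖ < 5 := by
      calc ‖(1/2:ℂ) + t*Complex.I‖ ≤ ‖(1/2:ℂ)‖ + ‖t*Complex.I‖ := norm_add_le _ _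
        _ < 5 := by norm_num at *; linarith
    have hb2 : ‖(1/2:ℂ) - t*Complex.I‖ < 5 := by
      calc ‖(1/2:ℂ) - t*Complex.I‖ ≤ ‖(1/2:ℂ)‖ + ‖t*Complex.I‖ := norm_sub_le _ _
        _ < 5 := by norm_num at *; linarith
    apply DifferentiableAt.differentiableWithinAt
    exact (hQd ((1/2:ℂ) + t*Complex.I, (1/2:ℂ) - t*Complex.I) hb1 hb2).comp
      (f := fun t : ℂ => ((1/2:ℂ) + t*Complex.I, (1/2:ℂ) - t*Complex.I)) t
      ((differentiableAt_const _).add (differentiableAt_id.mul_const _)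
        |>.prodMk ((differentiableAt_const _).sub (differentiableAt_id.mul_const _)))
  have hψreal : ∀ t' : ℝ, |t'| < 2 → ψ (t':ℂ) = 0 := by
    intro t' ht'
    have : ((1/2:ℝ):ℂ) = (1/2:ℂ) := by norm_num
    have := hstepA t' ht' (1/2:ℂ) hs0
    simpa [hψ] using this
  have hψtend : Filter.Tendsto (fun m : ℕ => (((1:ℝ)/(m+1) : ℝ) : ℂ)) Filter.atTop
      (nhdsWithin (0:ℂ) {(0:ℂ)}ᶜ) := by
    rw [tendsto_nhdsWithin_iff]
    constructor
    · have h0 : Filter.Tendsto (fun m : ℕ => (1:ℝ)/(m+1)) Filter.atTop (nhds 0) :=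
        tendsto_one_div_add_atTop_nhds_zero_nat
      have h1 := (Complex.continuous_ofReal.tendsto 0).comp h0
      rw [show ((0:ℝ):ℂ) = (0:ℂ) from Complex.ofReal_zero] at h1
      exact h1
    · apply Filter.Eventually.of_forall
      intro m
      simp only [Set.mem_compl_iff, Set.mem_singleton_iff]
      intro hc
      have : (1:ℝ)/(m+1) = 0 := by exact_mod_cast hc
      have hm : (0:ℝ) < 1/(m+1) := by positivity
      linarith
  have hψfreq : ∃ᶠ x in nhdsWithin (0:ℂ) {(0:ℂ)}ᶜ, ψ x = 0 := by
    apply hψtend.frequently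
    apply Filter.Frequently.of_forall
    intro m
    apply hψreal
    rw [abs_of_pos (by positivity : (0:ℝ) < 1/(m+1))]
    have : (1:ℝ)/(m+1) ≤ 1 := by
      rw [div_le_one (by positivity)]
      linarith [Nat.cast_nonneg (α := ℝ) m]
    linarith
  have hψEq : Set.EqOn ψ 0 (ball (0:ℂ) 2) :=
    (hψd.analyticOnNhd isOpen_ball).eqOn_zero_of_preconnected_of_frequently_eq_zero
      (convex_ball (0:ℂ) 2).isPreconnected (mem_ball_self (by norm_num)) hψfreq
  have ht₀ : (-(Complex.I)/2) ∈ ball (0:ℂ) 2 := by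
    rw [mem_ball, dist_zero_right]
    rw [norm_div, norm_neg, Complex.norm_I]
    norm_num
  have hfinal := hψEq ht₀
  simp only [Pi.zero_apply] at hfinal
  have harg1 : (1/2:ℂ) + (-(Complex.I)/2)*Complex.I = 1 := by
    rw [div_mul_eq_mul_div, neg_mul, Complex.I_mul_I]
    norm_num
  have harg2 : (1/2:ℂ) - (-(Complex.I)/2)*Complex.I = 0 := by
    rw [div_mul_eq_mul_div, neg_mul, Complex.I_mul_I]
    norm_num
  rw [hψ] at hfinal
  simp only at hfinal
  rw [harg1, harg2] at hfinal
  rw [hQ] at hfinal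
  simp only at hfinal
  rw [sub_eq_zero] at hfinal
  have hw1 : w + (1:ℂ) • d = z := by
    funext j
    simp [hd]
  have hw0 : star w + (0:ℂ) • star d = star w := by
    funext j
    simp
  rw [hw1, hw0] at hfinal
  calc ∑ k, h k z * starRingEnd ℂ (h k w)
      = ∑ k, h k z * hcal k (star w) := by
        apply Finset.sum_congr rfl
        intro k _
        rw [hhcal]
        simp only [star_star]
    _ = ∑ m, g m z * gcal m (star w) := hfinal
    _ = ∑ m, g m z * starRingEnd ℂ (g m w) := by
        apply Finset.sum_congr rfl
        intro m _
        rw [hgcal]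
        simp only [star_star]
open Metric

theorem sos_aux_line {n : ℕ} {Ω : Set (Fin n → ℂ)} {F : (Fin n → ℂ) → ℂ}
    (hF : DifferentiableOn ℂ F Ω) {z u : Fin n → ℂ} {δ ρ : ℝ}
    (hball : ball z δ ⊆ Ω) (hu : u ∈ ball z (δ/8)) (hρ : 0 < ρ)
    (hzero : ∀ w ∈ ball u ρ, F w = 0) : ∀ y ∈ ball z (δ/8), F y = 0 := by
  have hδ : 0 < δ := by
    have := Metric.pos_of_mem_ball hu
    linarith
  intro y hy
  by_cases hyu : y = u
  · exact hyu ▸ hzero u (mem_ball_self hρ)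
  set d : Fin n → ℂ := y - u with hd
  have hdne : ‖d‖ ≠ 0 := by
    simpa [hd] using sub_ne_zero_of_ne hyu
  have hdpos : 0 < ‖d‖ := lt_of_le_of_ne (norm_nonneg _) (Ne.symm hdne)
  have hdnorm : ‖d‖ < δ/4 := by
    have h1 : dist y u ≤ dist y z + dist z u := dist_triangle _ _ _
    have h2 : dist y z < δ/8 := mem_ball.1 hy
    have h3 : dist z u < δ/8 := by rw [dist_comm]; exact mem_ball.1 hu
    have : dist y u < δ/4 := by linarith
    simpa [hd, dist_eq_norm] using this
  set φ : ℂ → ℂ := fun lam => F (u + lam • d) with hφ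
  have hmaps : ∀ lam ∈ ball (0:ℂ) 3, u + lam • d ∈ Ω := by
    intro lam hlam
    apply hball
    rw [mem_ball, dist_eq_norm] at hlam ⊢
    have : ‖u + lam • d - z‖ ≤ ‖u - z‖ + ‖lam‖ * ‖d‖ := by
      calc ‖u + lam • d - z‖ = ‖(u - z) + lam • d‖ := by ring_nf
        _ ≤ ‖u - z‖ + ‖lam • d‖ := norm_add_le _ _
        _ = ‖u - z‖ + ‖lam‖ * ‖d‖ := by rw [norm_smul]
    have huz : ‖u - z‖ < δ/8 := by rw [← dist_eq_norm]; exact mem_ball.1 hu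
    rw [sub_zero] at hlam
    have : ‖u + lam • d - z‖ < δ/8 + 3 * (δ/4) := by
      nlinarith [norm_nonneg lam, norm_nonneg d]
    linarith
  have hφd : DifferentiableOn ℂ φ (ball (0:ℂ) 3) := by
    apply DifferentiableOn.comp (t := Ω) hF
    · exact (differentiable_const u |>.add ((differentiable_id).smul_const d)).differentiableOn
    · intro lam hlam; exact hmaps lam hlam
  have hφa : AnalyticOnNhd ℂ φ (ball (0:ℂ) 3) := hφd.analyticOnNhd isOpen_ball
  have hfreq : ∃ᶠ lam in nhdsWithin (0:ℂ) {(0:ℂ)}ᶜ, φ lam = 0 := by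
    apply Filter.Eventually.frequently
    have hmem : ball (0:ℂ) (ρ / ‖d‖) ∈ nhdsWithin (0:ℂ) {(0:ℂ)}ᶜ := by
      apply mem_nhdsWithin_of_mem_nhds
      exact ball_mem_nhds _ (div_pos hρ hdpos)
    filter_upwards [hmem] with lam hlam
    apply hzero
    rw [mem_ball, dist_eq_norm] at hlam ⊢
    have : ‖u + lam • d - u‖ = ‖lam‖ * ‖d‖ := by simp [norm_smul]
    rw [this]
    rw [sub_zero] at hlam
    calc ‖lam‖ * ‖d‖ < (ρ / ‖d‖) * ‖d‖ := mul_lt_mul_of_pos_right hlam hdpos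
      _ = ρ := by field_simp
  have hEq : Set.EqOn φ 0 (ball (0:ℂ) 3) :=
    hφa.eqOn_zero_of_preconnected_of_frequently_eq_zero
      (convex_ball (0:ℂ) 3).isPreconnected (mem_ball_self (by norm_num)) hfreq
  have h1 : (1:ℂ) ∈ ball (0:ℂ) 3 := by norm_num [mem_ball]
  have := hEq h1
  simpa [hφ, hd] using this

/-- Identity theorem: holomorphic on open preconnected Ω, vanishing on a ball inside Ω,
vanishes on Ω. -/
theorem sos_id2 {n : ℕ} {Ω : Set (Fin n → ℂ)} (hΩo : IsOpen Ω) (hΩc : IsPreconnected Ω)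
    {F : (Fin n → ℂ) → ℂ} (hF : DifferentiableOn ℂ F Ω) {z₀ : Fin n → ℂ} {ρ : ℝ} (hρ : 0 < ρ)
    (hball : ball z₀ ρ ⊆ Ω) (hzero : ∀ w ∈ ball z₀ ρ, F w = 0) :
    ∀ z ∈ Ω, F z = 0 := by
  set S : Set (Fin n → ℂ) :=
    {z | ∃ δ : ℝ, 0 < δ ∧ ball z δ ⊆ Ω ∧ ∀ w ∈ ball z δ, F w = 0} with hS
  have hSopen : IsOpen S := by
    apply isOpen_iff_forall_mem_open.2
    rintro z ⟨δ, hδ, hsub, hz⟩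
    refine ⟨ball z (δ/2), ?_, isOpen_ball, mem_ball_self (by linarith)⟩
    intro y hy
    have hysub : ball y (δ/2) ⊆ ball z δ := by
      apply ball_subset_ball'
      have := mem_ball.1 hy
      linarith
    exact ⟨δ/2, by linarith, hysub.trans hsub, fun w hw => hz w (hysub hw)⟩
  have hclos : closure S ∩ Ω ⊆ S := by
    rintro z ⟨hzc, hzΩ⟩
    obtain ⟨δ, hδ, hsub⟩ : ∃ δ > 0, ball z δ ⊆ Ω := by
      obtain ⟨δ, hδ, hsub⟩ := Metric.isOpen_iff.1 hΩo z hzΩ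
      exact ⟨δ, hδ, hsub⟩
    obtain ⟨u, huS, hud⟩ : ∃ u ∈ S, dist z u < δ/8 := by
      have := Metric.mem_closure_iff.1 hzc (δ/8) (by linarith)
      simpa using this
    obtain ⟨ρu, hρu, _, huz⟩ := huS
    have hu : u ∈ ball z (δ/8) := by rw [mem_ball, dist_comm]; exact hud
    exact ⟨δ/8, by linarith, (ball_subset_ball (by linarith)).trans hsub,
      sos_aux_line hF hsub hu hρu huz⟩
  have hz₀S : z₀ ∈ S := ⟨ρ, hρ, hball, hzero⟩
  have hz₀Ω : z₀ ∈ Ω := hball (mem_ball_self hρ)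
  have hsubS : Ω ⊆ S := by
    apply hΩc.subset_of_closure_inter_subset hSopen ⟨z₀, hz₀Ω, hz₀S⟩
    intro x hx
    exact hclos ⟨hx.1, hx.2⟩
  intro z hz
  obtain ⟨δ, hδ, _, hzero'⟩ := hsubS hz
  exact hzero' z (mem_ball_self hδ)
open Metric Module

variable {n : ℕ}

/-- The space of syzygies `∑ z_j F_j = 0 on B` with components in `V`. -/
noncomputable def SyzMod (B : Set (Fin n → ℂ)) (V : Submodule ℂ ((Fin n → ℂ) → ℂ)) :
    Submodule ℂ (Fin n → ((Fin n → ℂ) → ℂ)) where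
  carrier := {F | (∀ j, F j ∈ V) ∧ ∀ z ∈ B, ∑ j, z j * F j z = 0}
  add_mem' := by
    rintro F G ⟨hF1, hF2⟩ ⟨hG1, hG2⟩
    refine ⟨fun j => V.add_mem (hF1 j) (hG1 j), fun z hz => ?_⟩
    simp only [Pi.add_apply, mul_add, Finset.sum_add_distrib]
    rw [hF2 z hz, hG2 z hz, add_zero]
  zero_mem' := by
    refine ⟨fun j => V.zero_mem, fun z hz => by simp⟩
  smul_mem' := by
    rintro c F ⟨hF1, hF2⟩
    refine ⟨fun j => V.smul_mem c (hF1 j), fun z hz => ?_⟩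
    have h := hF2 z hz
    simp only [Pi.smul_apply, smul_eq_mul]
    calc ∑ j, z j * (c * F j z) = c * ∑ j, z j * F j z := by
          rw [Finset.mul_sum]; congr 1; funext j; ring
      _ = 0 := by rw [h, mul_zero]

theorem mem_SyzMod {B : Set (Fin n → ℂ)} {V : Submodule ℂ ((Fin n → ℂ) → ℂ)}
    {F : Fin n → ((Fin n → ℂ) → ℂ)} :
    F ∈ SyzMod B V ↔ (∀ j, F j ∈ V) ∧ ∀ z ∈ B, ∑ j, z j * F j z = 0 := Iff.rfl

noncomputable def syzToPi {B : Set (Fin n → ℂ)} {V : Submodule ℂ ((Fin n → ℂ) → ℂ)} :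
    (SyzMod B V) →ₗ[ℂ] (Fin n → V) where
  toFun F := fun j => ⟨F.1 j, F.2.1 j⟩
  map_add' F G := rfl
  map_smul' c F := rfl

theorem syzToPi_inj {B : Set (Fin n → ℂ)} {V : Submodule ℂ ((Fin n → ℂ) → ℂ)} :
    Function.Injective (syzToPi (B := B) (V := V)) := by
  intro F G hFG
  apply Subtype.ext
  funext j
  have := congrFun hFG j
  exact congrArg Subtype.val this

theorem syz_finiteDimensional {B : Set (Fin n → ℂ)} {V : Submodule ℂ ((Fin n → ℂ) → ℂ)}
    [FiniteDimensional ℂ V] : FiniteDimensional ℂ (SyzMod B V) :=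
  FiniteDimensional.of_injective syzToPi syzToPi_inj

theorem tri_arith (q : ℕ) : q*(q-1)/2 + q = (q+1)*q/2 := by
  cases q with
  | zero => rfl
  | succ k =>
    have e1 : (k+1)*(k+1-1) = k*k+k := by simp; ring
    have e2 : (k+1+1)*(k+1) = k*k + 3*k + 2 := by ring
    rw [e1, e2]
    omega

theorem syz_bot {B : Set (Fin n → ℂ)} : SyzMod B (⊥ : Submodule ℂ ((Fin n → ℂ) → ℂ)) = ⊥ := by
  apply le_antisymm _ bot_le
  rintro F ⟨h1, _⟩
  have : F = 0 := by
    funext j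
    simpa using h1 j
  simp [this]

theorem lemC {B : Set (Fin n → ℂ)} (hB : IsOpen B) :
    ∀ q : ℕ, ∀ V : Submodule ℂ ((Fin n → ℂ) → ℂ), FiniteDimensional ℂ V →
    finrank ℂ V ≤ q →
    (∀ v ∈ V, DifferentiableOn ℂ v B) →
    (∀ v ∈ V, (∀ z ∈ B, v z = 0) → v = 0) →
    finrank ℂ (SyzMod B V) ≤ q*(q-1)/2 := by
  intro q
  induction q with
  | zero =>
    intro V hVfd hVrank _ _
    have : V = ⊥ := by
      haveI := hVfd
      exact Submodule.finrank_eq_zero.1 (Nat.le_zero.1 hVrank)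
    rw [this, syz_bot]
    simp
  | succ q IH =>
    intro V hVfd hVrank hdiff hnz
    haveI := hVfd
    by_cases hbot : V = ⊥
    · rw [hbot, syz_bot]; simp
    · obtain ⟨v₀, hv₀V, hv₀⟩ := Submodule.exists_mem_ne_zero_of_ne_bot hbot
      have hex : ∃ a ∈ B, v₀ a ≠ 0 := by
        by_contra hc
        push_neg at hc
        exact hv₀ (hnz v₀ hv₀V hc)
      obtain ⟨a, haB, hva⟩ := hex
      set eva : ((Fin n → ℂ) → ℂ) →ₗ[ℂ] ℂ := LinearMap.proj a with heva
      set Va : Submodule ℂ ((Fin n → ℂ) → ℂ) := V ⊓ LinearMap.ker eva with hVa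
      haveI : FiniteDimensional ℂ Va := Submodule.finiteDimensional_of_le inf_le_left
      have hValt : Va < V := by
        apply lt_of_le_of_ne inf_le_left
        intro hEq
        have : v₀ ∈ Va := by rw [hVa, hEq]; exact hv₀V
        exact hva (by simpa [heva] using this.2)
      have hVarank : finrank ℂ Va ≤ q := by
        have := Submodule.finrank_lt_finrank_of_lt hValt
        omega
      have hSyzVa : finrank ℂ (SyzMod B Va) ≤ q*(q-1)/2 :=
        IH Va inferInstance hVarank
          (fun v hv => hdiff v hv.1) (fun v hv hz => hnz v hv.1 hz)
      -- differentiability at a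
      have hdiffAt : ∀ v, v ∈ V → DifferentiableAt ℂ v a := fun v hv =>
        ((hdiff v hv) a haB).differentiableAt (hB.mem_nhds haB)
      -- the derivative map on Va
      set Ta : Va →ₗ[ℂ] (Fin n → ℂ) :=
        { toFun := fun v => fun j => fderiv ℂ v.1 a (Pi.single j 1)
          map_add' := by
            rintro u v
            funext j
            have h1 : fderiv ℂ (u.1 + v.1) a = fderiv ℂ u.1 a + fderiv ℂ v.1 a :=
              fderiv_add (hdiffAt _ u.2.1) (hdiffAt _ v.2.1)
            simp [h1]
          map_smul' := by
            rintro c v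
            funext j
            have h1 : fderiv ℂ (c • v.1) a = c • fderiv ℂ v.1 a :=
              fderiv_const_smul (hdiffAt _ v.2.1) c
            simp [h1] } with hTa
      set U : Submodule ℂ (Fin n → ℂ) := LinearMap.range Ta with hU
      have hUrank : finrank ℂ U ≤ q := le_trans (LinearMap.finrank_range_le Ta) hVarank
      -- the evaluation map on syzygies
      set Ψ : (SyzMod B V) →ₗ[ℂ] (Fin n → ℂ) :=
        { toFun := fun F => fun j => F.1 j a
          map_add' := fun F G => rfl
          map_smul' := fun c F => rfl } with hΨ
      haveI : FiniteDimensional ℂ (SyzMod B V) := syz_finiteDimensional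
      -- range of Ψ lands in U
      have hrange : LinearMap.range Ψ ≤ U := by
        rintro x ⟨F, rfl⟩
        -- the function vF
        set vF : (Fin n → ℂ) → ℂ := fun w => ∑ j, a j * F.1 j w with hvF
        have hvFV : vF ∈ V := by
          have : vF = ∑ j, a j • F.1 j := by
            funext w
            simp [hvF, Finset.sum_apply]
          rw [this]
          exact Submodule.sum_mem V (fun j _ => V.smul_mem _ (F.2.1 j))
        have hvFa : vF a = 0 := F.2.2 a haB
        have hvFVa : vF ∈ Va := ⟨hvFV, by simpa [heva] using hvFa⟩
        -- derivative computations
        have hD : ∀ j : Fin n, HasFDerivAt (F.1 j) (fderiv ℂ (F.1 j) a) a := fun j =>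
          (hdiffAt _ (F.2.1 j)).hasFDerivAt
        have hs : HasFDerivAt (fun w : Fin n → ℂ => ∑ j, w j * F.1 j w)
            (∑ j, (a j • fderiv ℂ (F.1 j) a + F.1 j a • (ContinuousLinearMap.proj j))) a := by
          apply HasFDerivAt.fun_sum
          intro j _
          exact ((ContinuousLinearMap.proj j).hasFDerivAt (x := a)).mul (hD j)
        have hzero : (fun w : Fin n → ℂ => ∑ j, w j * F.1 j w) =ᶠ[nhds a] (fun _ => (0:ℂ)) := by
          filter_upwards [hB.mem_nhds haB] with w hw using F.2.2 w hw
        have hs0 : HasFDerivAt (fun _ : Fin n → ℂ => (0:ℂ))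
            (∑ j, (a j • fderiv ℂ (F.1 j) a + F.1 j a • (ContinuousLinearMap.proj j))) a :=
          hs.congr_of_eventuallyEq hzero.symm
        have hL0 : (∑ j, (a j • fderiv ℂ (F.1 j) a + F.1 j a • (ContinuousLinearMap.proj j)))
            = 0 := hs0.unique (hasFDerivAt_const (0:ℂ) a)
        have hvD : HasFDerivAt vF (∑ j, a j • fderiv ℂ (F.1 j) a) a := by
          apply HasFDerivAt.fun_sum
          intro j _
          exact (hD j).const_mul (a j)
        -- conclude : Ψ F = - Ta ⟨vF, _⟩
        have key : Ψ F = - Ta ⟨vF, hvFVa⟩ := by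
          funext j₀
          have h1 : fderiv ℂ vF a = ∑ j, a j • fderiv ℂ (F.1 j) a := hvD.fderiv
          have h2 : (∑ j, a j • fderiv ℂ (F.1 j) a)
              = - ∑ j, F.1 j a • (ContinuousLinearMap.proj (R := ℂ) (φ := fun _ : Fin n => ℂ) j) := by
            rw [Finset.sum_add_distrib] at hL0
            linear_combination (norm := module) hL0
          have h3 : (∑ j, F.1 j a • (ContinuousLinearMap.proj (R := ℂ)
              (φ := fun _ : Fin n => ℂ) j)) (Pi.single j₀ 1) = F.1 j₀ a := by
            simp [ContinuousLinearMap.sum_apply, Pi.single_apply]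
          show F.1 j₀ a = - (fderiv ℂ vF a (Pi.single j₀ 1))
          rw [h1, h2]
          simp only [ContinuousLinearMap.neg_apply, neg_neg]
          exact h3.symm
        rw [key]
        exact U.neg_mem ⟨⟨vF, hvFVa⟩, rfl⟩
      have hrankrange : finrank ℂ (LinearMap.range Ψ) ≤ q :=
        le_trans (Submodule.finrank_mono hrange) hUrank
      -- kernel of Ψ embeds into SyzMod B Va
      have hker : finrank ℂ (LinearMap.ker Ψ) ≤ q*(q-1)/2 := by
        haveI : FiniteDimensional ℂ (SyzMod B Va) := syz_finiteDimensional
        set ι : (LinearMap.ker Ψ) →ₗ[ℂ] (SyzMod B Va) :=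
          { toFun := fun G => ⟨G.1.1, ⟨fun j => ⟨G.1.2.1 j,
              LinearMap.mem_ker.2 (congrFun (LinearMap.mem_ker.1 G.2) j)⟩, G.1.2.2⟩⟩
            map_add' := fun G H => rfl
            map_smul' := fun c G => rfl } with hι
        have hinj : Function.Injective ι := by
          intro G H hGH
          have h' := congrArg Subtype.val hGH
          exact Subtype.ext (Subtype.ext h')
        exact le_trans (LinearMap.finrank_le_finrank_of_injective hinj) hSyzVa
      have hrn := LinearMap.finrank_range_add_finrank_ker Ψ
      have harith : (q+1)*((q+1)-1)/2 = q*(q-1)/2 + q := by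
        have := tri_arith q
        simpa using this.symm
      omega
open Module

noncomputable def Smap {P : Type*} {ι : Type*} [Fintype ι] (u : ι → P → ℂ) :
    (EuclideanSpace ℂ ι) →ₗ[ℂ] (P → ℂ) where
  toFun c := ∑ m, c m • u m
  map_add' c c' := by
    simp only [PiLp.add_apply, add_smul, Finset.sum_add_distrib]
  map_smul' a c := by
    simp only [PiLp.smul_apply, smul_eq_mul, RingHom.id_apply, Finset.smul_sum, smul_smul]

theorem Smap_apply {P : Type*} {ι : Type*} [Fintype ι] (u : ι → P → ℂ)
    (c : EuclideanSpace ℂ ι) (x : P) : Smap u c x = ∑ m, c m * u m x := by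
  simp [Smap, Finset.sum_apply]

theorem Smap_single {P : Type*} {ι : Type*} [Fintype ι] [DecidableEq ι] (u : ι → P → ℂ)
    (m₀ : ι) : Smap u (EuclideanSpace.single m₀ 1) = u m₀ := by
  funext x
  rw [Smap_apply]
  simp [EuclideanSpace.single_apply]

theorem Smap_range_le {P : Type*} {ι κ : Type*} [Fintype ι] [Fintype κ]
    (u : ι → P → ℂ) (v : κ → P → ℂ)
    (hpol : ∀ x y : P, ∑ m, u m x * starRingEnd ℂ (u m y)
      = ∑ k, v k x * starRingEnd ℂ (v k y)) :
    LinearMap.range (Smap u) ≤ LinearMap.range (Smap v) := by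
  classical
  set uvec : P → EuclideanSpace ℂ ι := fun y => WithLp.toLp 2 (fun m => starRingEnd ℂ (u m y)) with huvec
  set W : Submodule ℂ (EuclideanSpace ℂ ι) := Submodule.span ℂ (Set.range uvec) with hW
  have hWop : Wᗮ ≤ LinearMap.ker (Smap u) := by
    intro c hc
    rw [LinearMap.mem_ker]
    funext y
    have h1 : inner (𝕜 := ℂ) (uvec y) c = 0 :=
      (Submodule.mem_orthogonal W c).1 hc _ (Submodule.subset_span ⟨y, rfl⟩)
    rw [Smap_apply]
    rw [PiLp.inner_apply] at h1
    simp only [huvec] at h1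
    simpa [RingHom.id_apply, starRingEnd_self_apply, mul_comm] using h1
  have hgen : ∀ y : P, Smap u (uvec y) ∈ LinearMap.range (Smap v) := by
    intro y
    refine ⟨WithLp.toLp 2 (fun k => starRingEnd ℂ (v k y)), ?_⟩
    funext x
    rw [Smap_apply, Smap_apply]
    calc ∑ k, starRingEnd ℂ (v k y) * v k x = ∑ k, v k x * starRingEnd ℂ (v k y) := by
          apply Finset.sum_congr rfl; intro k _; ring
      _ = ∑ m, u m x * starRingEnd ℂ (u m y) := (hpol x y).symm
      _ = ∑ m, starRingEnd ℂ (u m y) * u m x := by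
          apply Finset.sum_congr rfl; intro m _; ring
  have hsup : W ⊔ Wᗮ = ⊤ := Submodule.sup_orthogonal_of_hasOrthogonalProjection
  calc LinearMap.range (Smap u) = Submodule.map (Smap u) ⊤ := (Submodule.map_top _).symm
    _ = Submodule.map (Smap u) (W ⊔ Wᗮ) := by rw [hsup]
    _ = Submodule.map (Smap u) W ⊔ Submodule.map (Smap u) Wᗮ := Submodule.map_sup _ _ _
    _ ≤ LinearMap.range (Smap v) := by
        apply sup_le
        · rw [hW, Submodule.map_span, Submodule.span_le]
          rintro x ⟨x', ⟨y, rfl⟩, rfl⟩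
          exact hgen y
        · intro x hx
          obtain ⟨c, hc, rfl⟩ := hx
          have : Smap u c = 0 := LinearMap.mem_ker.1 (hWop hc)
          rw [this]
          exact Submodule.zero_mem _

set_option maxHeartbeats 4000000 in
/-- Theorem (nonhomogeneous SOS, low rank): if `f₁,…,f_p` are linearly independent holomorphic
functions near `0 ∈ ℂⁿ` vanishing at `0`, and
`(1+‖z‖²)(1+Σᵢ|fᵢ(z)|²) = 1+Σₖ|hₖ(z)|²` with `h₁,…,h_r` linearly independent holomorphic,
and `p ≤ n`, then `n(p+1) - p(p-1)/2 ≤ r ≤ n(p+1) + p`. -/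
theorem sos_rank_nonhomogeneous_low_rank
    (n p r : ℕ) (Ω : Set (Fin n → ℂ))
    (hΩo : IsOpen Ω) (hΩc : IsConnected Ω) (h0Ω : (0 : Fin n → ℂ) ∈ Ω)
    (f : Fin p → (Fin n → ℂ) → ℂ) (h : Fin r → (Fin n → ℂ) → ℂ)
    (hf : ∀ i, DifferentiableOn ℂ (f i) Ω)
    (hf0 : ∀ i, f i 0 = 0)
    (hh : ∀ k, DifferentiableOn ℂ (h k) Ω)
    (hfli : LinearIndependent ℂ (fun i => fun z : Ω => f i z.1))
    (hhli : LinearIndependent ℂ (fun k => fun z : Ω => h k z.1))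
    (heq : ∀ z ∈ Ω,
      (1 + ∑ j, ‖z j‖ ^ 2) * (1 + ∑ i, ‖f i z‖ ^ 2) = 1 + ∑ k, ‖h k z‖ ^ 2)
    (hpn : p ≤ n) :
    n * (p + 1) - p * (p - 1) / 2 ≤ r ∧ r ≤ n * (p + 1) + p := by
  classical
  obtain ⟨R, hRpos, hRsub⟩ := Metric.isOpen_iff.1 hΩo 0 h0Ω
  set ε : ℝ := R/21 with hεdef
  have hεpos : 0 < ε := by positivity
  have h20 : Metric.ball (0 : Fin n → ℂ) (20*ε) ⊆ Ω := by
    refine (Metric.ball_subset_ball ?_).trans hRsub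
    rw [hεdef]; linarith
  set B : Set (Fin n → ℂ) := Metric.ball (0 : Fin n → ℂ) ε with hBdef
  have hBo : IsOpen B := Metric.isOpen_ball
  have hBsub : B ⊆ Ω := by
    refine (Metric.ball_subset_ball ?_).trans h20
    linarith
  have h0B : (0 : Fin n → ℂ) ∈ B := Metric.mem_ball_self hεpos
  -- the combined family g
  set g : (Fin n ⊕ (Fin p ⊕ Fin n × Fin p)) → (Fin n → ℂ) → ℂ := fun m => match m with
    | Sum.inl j => fun z => z j
    | Sum.inr (Sum.inl i) => f i
    | Sum.inr (Sum.inr ji) => fun z => z ji.1 * f ji.2 z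
    with hgdef
  have hcoordD : ∀ (j : Fin n) (s : Set (Fin n → ℂ)),
      DifferentiableOn ℂ (fun z : Fin n → ℂ => z j) s := by
    intro j s
    exact ((ContinuousLinearMap.proj (R := ℂ) (φ := fun _ : Fin n => ℂ)
      j).differentiable.differentiableOn)
  have hgdiff : ∀ m, DifferentiableOn ℂ (g m) Ω := by
    rintro (j | i | ji)
    · exact hcoordD j Ω
    · exact hf i
    · exact (hcoordD ji.1 Ω).mul (hf ji.2)
  -- pointwise complex form of the identity
  have hCeq : ∀ z ∈ Ω, ∑ k, h k z * starRingEnd ℂ (h k z)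
      = ∑ m, g m z * starRingEnd ℂ (g m z) := by
    intro z hz
    have hmc : ∀ x : ℂ, x * starRingEnd ℂ x = ((‖x‖^2 : ℝ) : ℂ) := by
      intro x
      rw [Complex.mul_conj']
      push_cast
      ring
    have hrealid : ∑ k, ‖h k z‖^2
        = (∑ j, ‖z j‖^2) + ((∑ i, ‖f i z‖^2) + ∑ ji : Fin n × Fin p, ‖z ji.1 * f ji.2 z‖^2) := by
      have hprod : ∑ ji : Fin n × Fin p, ‖z ji.1 * f ji.2 z‖^2
          = (∑ j, ‖z j‖^2) * (∑ i, ‖f i z‖^2) := by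
        rw [Finset.sum_mul_sum]
        rw [Fintype.sum_prod_type]
        apply Finset.sum_congr rfl
        intro j _
        apply Finset.sum_congr rfl
        intro i _
        rw [norm_mul, mul_pow]
      have := heq z hz
      rw [hprod]
      nlinarith [this]
    calc ∑ k, h k z * starRingEnd ℂ (h k z) = ∑ k, ((‖h k z‖^2 : ℝ) : ℂ) := by
          apply Finset.sum_congr rfl; intro k _; rw [hmc]
      _ = ((∑ k, ‖h k z‖^2 : ℝ) : ℂ) := by rw [Complex.ofReal_sum]
      _ = (((∑ j, ‖z j‖^2) + ((∑ i, ‖f i z‖^2) + ∑ ji : Fin n × Fin p, ‖z ji.1 * f ji.2 z‖^2) : ℝ) : ℂ) := by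
          rw [hrealid]
      _ = ∑ m, g m z * starRingEnd ℂ (g m z) := by
          rw [Fintype.sum_sum_type, Fintype.sum_sum_type]
          push_cast
          congr 1
          · apply Finset.sum_congr rfl; intro j _; rw [hmc]; push_cast; ring
          congr 1
          · apply Finset.sum_congr rfl; intro i _; rw [hmc]; push_cast; ring
          · apply Finset.sum_congr rfl; intro ji _; rw [hmc]; push_cast; ring
  -- polarization on B
  have hpol := sos_polarization hΩo hεpos h20 h g hh hgdiff hCeq
  -- restricted families
  set hB : Fin r → (↥B → ℂ) := fun k => fun zz => h k zz.1 with hhBdef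
  set gB : (Fin n ⊕ (Fin p ⊕ Fin n × Fin p)) → (↥B → ℂ) := fun m => fun zz => g m zz.1 with hgBdef
  have hpolB : ∀ x y : ↥B, ∑ k, hB k x * starRingEnd ℂ (hB k y)
      = ∑ m, gB m x * starRingEnd ℂ (gB m y) := fun x y => hpol x.1 x.2 y.1 y.2
  have hrange_eq : LinearMap.range (Smap hB) = LinearMap.range (Smap gB) :=
    le_antisymm (Smap_range_le hB gB hpolB) (Smap_range_le gB hB (fun x y => (hpolB x y).symm))
  -- id2 transfer : a combination of the h's vanishing on B vanishes on Ω
  have hindepH : ∀ c : EuclideanSpace ℂ (Fin r), Smap hB c = 0 → c = 0 := by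
    intro c hc
    have hdiffc : DifferentiableOn ℂ (fun z => ∑ k, c k * h k z) Ω := by
      apply DifferentiableOn.fun_sum
      intro k _
      exact (hh k).const_mul (c k)
    have hzB : ∀ z ∈ B, (∑ k, c k * h k z) = 0 := by
      intro z hz
      have := congrFun hc ⟨z, hz⟩
      rw [Smap_apply] at this
      simpa [hhBdef] using this
    have hzΩ := sos_id2 hΩo hΩc.isPreconnected hdiffc hεpos hBsub hzB
    have hcoef := Fintype.linearIndependent_iff.1 hhli c ?_
    · exact PiLp.ext (fun k => by simpa using hcoef k)
    · funext zz
      have := hzΩ zz.1 zz.2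
      simpa [Finset.sum_apply] using this
  have hkerH : LinearMap.ker (Smap hB) = ⊥ := by
    rw [LinearMap.ker_eq_bot']
    intro c hc
    exact hindepH c hc
  have hr_rank : finrank ℂ (LinearMap.range (Smap hB)) = r := by
    have hrn := LinearMap.finrank_range_add_finrank_ker (Smap hB)
    rw [hkerH, finrank_bot] at hrn
    simpa [finrank_euclideanSpace] using hrn
  -- upper bound
  have hupper : r ≤ n * (p + 1) + p := by
    have h1 : finrank ℂ (LinearMap.range (Smap gB))
        ≤ finrank ℂ (EuclideanSpace ℂ (Fin n ⊕ (Fin p ⊕ Fin n × Fin p))) :=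
      LinearMap.finrank_range_le _
    rw [← hrange_eq, hr_rank] at h1
    have h2 : finrank ℂ (EuclideanSpace ℂ (Fin n ⊕ (Fin p ⊕ Fin n × Fin p)))
        = n + (p + n * p) := by
      simp [finrank_euclideanSpace]
    have h3 : n * (p + 1) + p = n + (p + n * p) := by ring
    omega
  -- lower bound
  -- the subfamily u (coordinates and products)
  set uB : (Fin n ⊕ Fin n × Fin p) → (↥B → ℂ) := fun m => match m with
    | Sum.inl j => fun zz => zz.1 j
    | Sum.inr ji => fun zz => zz.1 ji.1 * f ji.2 zz.1
    with huBdef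
  have husub : LinearMap.range (Smap uB) ≤ LinearMap.range (Smap gB) := by
    rintro x ⟨c, rfl⟩
    refine ⟨WithLp.toLp 2 (fun m : Fin n ⊕ (Fin p ⊕ Fin n × Fin p) => match m with
      | Sum.inl j => c (Sum.inl j)
      | Sum.inr (Sum.inl _) => 0
      | Sum.inr (Sum.inr ji) => c (Sum.inr ji)), ?_⟩
    funext zz
    rw [Smap_apply, Smap_apply]
    rw [Fintype.sum_sum_type, Fintype.sum_sum_type, Fintype.sum_sum_type]
    simp [hgBdef, huBdef, hgdef]
  -- the span of the f's, as a range
  set V : Submodule ℂ ((Fin n → ℂ) → ℂ) := LinearMap.range (Smap f) with hVdef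
  haveI hVfd : FiniteDimensional ℂ V := inferInstance
  have hVrank : finrank ℂ V ≤ p := by
    have := LinearMap.finrank_range_le (Smap f)
    simpa [finrank_euclideanSpace] using this
  have hVdiff : ∀ v ∈ V, DifferentiableOn ℂ v B := by
    rintro v ⟨c, rfl⟩
    have hfc : (Smap f c : (Fin n → ℂ) → ℂ) = fun z => ∑ i, c i * f i z := by
      funext z; rw [Smap_apply]
    rw [hfc]
    apply DifferentiableOn.fun_sum
    intro i _
    exact ((hf i).const_mul (c i)).mono hBsub
  have hfcoefzero : ∀ c : EuclideanSpace ℂ (Fin p), (∀ z ∈ Ω, ∑ i, c i * f i z = 0) → c = 0 := by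
    intro c hzero
    have hcoef := Fintype.linearIndependent_iff.1 hfli c ?_
    · exact PiLp.ext (fun i => by simpa using hcoef i)
    · funext zz
      have := hzero zz.1 zz.2
      simpa [Finset.sum_apply] using this
  have hVnz : ∀ v ∈ V, (∀ z ∈ B, v z = 0) → v = 0 := by
    rintro v ⟨c, rfl⟩ hz
    have hdiffc : DifferentiableOn ℂ (fun z => ∑ i, c i * f i z) Ω := by
      apply DifferentiableOn.fun_sum
      intro i _
      exact (hf i).const_mul (c i)
    have hzB : ∀ z ∈ B, (∑ i, c i * f i z) = 0 := by
      intro z hzm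
      have := hz z hzm
      rw [Smap_apply] at this
      exact this
    have hzΩ := sos_id2 hΩo hΩc.isPreconnected hdiffc hεpos hBsub hzB
    have : c = 0 := hfcoefzero c hzΩ
    rw [this, map_zero]
  have hSyzRank : finrank ℂ (SyzMod B V) ≤ p * (p-1) / 2 :=
    lemC hBo p V hVfd hVrank hVdiff hVnz
  -- every kernel element of Smap uB has vanishing coordinate part
  have hker_coord : ∀ c : EuclideanSpace ℂ (Fin n ⊕ Fin n × Fin p), Smap uB c = 0 →
      ∀ j, c (Sum.inl j) = 0 := by
    intro c hc j₀
    -- the global function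
    have hs0 : ∀ z ∈ B, (∑ j, c (Sum.inl j) * z j)
        + (∑ ji : Fin n × Fin p, c (Sum.inr ji) * (z ji.1 * f ji.2 z)) = 0 := by
      intro z hz
      have := congrFun hc ⟨z, hz⟩
      rw [Smap_apply] at this
      rw [Fintype.sum_sum_type] at this
      simpa [huBdef] using this
    have hDf : ∀ i : Fin p, HasFDerivAt (f i) (fderiv ℂ (f i) 0) 0 := by
      intro i
      exact ((hf i 0 h0Ω).differentiableAt (hΩo.mem_nhds h0Ω)).hasFDerivAt
    have hterm2 : ∀ ji : Fin n × Fin p, HasFDerivAt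
        (fun z : Fin n → ℂ => c (Sum.inr ji) * (z ji.1 * f ji.2 z))
        (0 : (Fin n → ℂ) →L[ℂ] ℂ) 0 := by
      intro ji
      have hmul : HasFDerivAt (fun z : Fin n → ℂ => z ji.1 * f ji.2 z)
          ((0 : Fin n → ℂ) ji.1 • fderiv ℂ (f ji.2) 0 + f ji.2 0 •
            (ContinuousLinearMap.proj (R := ℂ) (φ := fun _ : Fin n => ℂ) ji.1)) 0 :=
        ((ContinuousLinearMap.proj (R := ℂ) (φ := fun _ : Fin n => ℂ)
          ji.1).hasFDerivAt (x := (0 : Fin n → ℂ))).mul (hDf ji.2)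
      have e0 : ((0 : Fin n → ℂ) ji.1 • fderiv ℂ (f ji.2) 0 + f ji.2 0 •
          (ContinuousLinearMap.proj (R := ℂ) (φ := fun _ : Fin n => ℂ) ji.1))
          = (0 : (Fin n → ℂ) →L[ℂ] ℂ) := by
        rw [hf0 ji.2]
        ext x
        simp
      rw [e0] at hmul
      have h2 := hmul.const_mul (c (Sum.inr ji))
      exact h2.congr_fderiv (by ext x; simp)
    have hterm1 : HasFDerivAt (fun z : Fin n → ℂ => ∑ j, c (Sum.inl j) * z j)
        (∑ j, c (Sum.inl j) • (ContinuousLinearMap.proj (R := ℂ) (φ := fun _ : Fin n => ℂ) j)) 0 := by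
      apply HasFDerivAt.fun_sum
      intro j _
      exact ((ContinuousLinearMap.proj (R := ℂ) (φ := fun _ : Fin n => ℂ)
        j).hasFDerivAt (x := (0 : Fin n → ℂ))).const_mul (c (Sum.inl j))
    have hsum2 : HasFDerivAt
        (fun z : Fin n → ℂ => ∑ ji : Fin n × Fin p, c (Sum.inr ji) * (z ji.1 * f ji.2 z))
        (0 : (Fin n → ℂ) →L[ℂ] ℂ) 0 := by
      have := HasFDerivAt.fun_sum (fun ji (_ : ji ∈ Finset.univ) => hterm2 ji)
      simpa using this
    have htot : HasFDerivAt
        (fun z : Fin n → ℂ => (∑ j, c (Sum.inl j) * z j)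
          + (∑ ji : Fin n × Fin p, c (Sum.inr ji) * (z ji.1 * f ji.2 z)))
        (∑ j, c (Sum.inl j) • (ContinuousLinearMap.proj (R := ℂ) (φ := fun _ : Fin n => ℂ) j)) 0 := by
      have := hterm1.fun_add hsum2
      simpa using this
    have hev : (fun z : Fin n → ℂ => (∑ j, c (Sum.inl j) * z j)
          + (∑ ji : Fin n × Fin p, c (Sum.inr ji) * (z ji.1 * f ji.2 z)))
        =ᶠ[nhds (0 : Fin n → ℂ)] (fun _ => (0:ℂ)) := by
      filter_upwards [hBo.mem_nhds h0B] with z hz using hs0 z hz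
    have h0d : HasFDerivAt (fun _ : Fin n → ℂ => (0:ℂ))
        (∑ j, c (Sum.inl j) • (ContinuousLinearMap.proj (R := ℂ) (φ := fun _ : Fin n => ℂ) j)) 0 :=
      htot.congr_of_eventuallyEq hev.symm
    have hL0 : (∑ j, c (Sum.inl j) • (ContinuousLinearMap.proj (R := ℂ)
        (φ := fun _ : Fin n => ℂ) j)) = 0 := h0d.unique (hasFDerivAt_const (0:ℂ) 0)
    have := congrArg (fun (L : (Fin n → ℂ) →L[ℂ] ℂ) => L (Pi.single j₀ 1)) hL0
    simpa [ContinuousLinearMap.sum_apply, Pi.single_apply] using this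
  -- embed the kernel of Smap uB into the syzygy module
  have hkerU : finrank ℂ (LinearMap.ker (Smap uB)) ≤ p * (p-1) / 2 := by
    haveI : FiniteDimensional ℂ (SyzMod B V) := syz_finiteDimensional
    set Θ : (LinearMap.ker (Smap uB)) →ₗ[ℂ] (SyzMod B V) :=
      { toFun := fun c => ⟨fun j => Smap f (WithLp.toLp 2 fun i => c.1 (Sum.inr (j,i))),
          by
            refine ⟨fun j => ⟨_, rfl⟩, ?_⟩
            intro z hz
            have hc := congrFun (LinearMap.mem_ker.1 c.2) ⟨z, hz⟩
            rw [Smap_apply] at hc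
            rw [Fintype.sum_sum_type] at hc
            have hzero1 : ∀ j, c.1 (Sum.inl j) = 0 := hker_coord c.1 (LinearMap.mem_ker.1 c.2)
            calc ∑ j, z j * (Smap f (WithLp.toLp 2 fun i => c.1 (Sum.inr (j,i)))) z
                = ∑ j, z j * ∑ i, c.1 (Sum.inr (j,i)) * f i z := by
                  apply Finset.sum_congr rfl
                  intro j _
                  rw [Smap_apply]
              _ = ∑ ji : Fin n × Fin p, c.1 (Sum.inr ji) * (z ji.1 * f ji.2 z) := by
                  rw [Fintype.sum_prod_type]
                  apply Finset.sum_congr rfl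
                  intro j _
                  rw [Finset.mul_sum]
                  apply Finset.sum_congr rfl
                  intro i _
                  ring
              _ = 0 := by
                  have h1 : ∑ j, c.1 (Sum.inl j) * z j = 0 := by
                    apply Finset.sum_eq_zero
                    intro j _
                    rw [hzero1 j, zero_mul]
                  rw [h1] at hc
                  simpa [huBdef] using hc⟩
        map_add' := by
          intro c c'
          apply Subtype.ext
          funext j
          show Smap f (WithLp.toLp 2 fun i => (c.1 + c'.1) (Sum.inr (j,i))) =
            Smap f (WithLp.toLp 2 fun i => c.1 (Sum.inr (j,i))) + Smap f (WithLp.toLp 2 fun i => c'.1 (Sum.inr (j,i)))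
          rw [← map_add]
          rfl
        map_smul' := by
          intro a c
          apply Subtype.ext
          funext j
          show Smap f (WithLp.toLp 2 fun i => (a • c.1) (Sum.inr (j,i))) = a • Smap f (WithLp.toLp 2 fun i => c.1 (Sum.inr (j,i)))
          rw [← map_smul]
          rfl } with hΘdef
    have hΘinj : Function.Injective Θ := by
      rw [← LinearMap.ker_eq_bot]
      rw [Submodule.eq_bot_iff]
      intro c hcker
      have hc0 : ∀ j, Smap f (WithLp.toLp 2 fun i => c.1 (Sum.inr (j,i))) = 0 := by
        intro j
        have := congrArg Subtype.val hcker
        exact congrFun this j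
      have hinr : ∀ j i, c.1 (Sum.inr (j,i)) = 0 := by
        intro j i
        have hzΩ : ∀ z ∈ Ω, ∑ i', (fun i' => c.1 (Sum.inr (j,i'))) i' * f i' z = 0 := by
          intro z hz
          have := congrFun (hc0 j) z
          rw [Smap_apply] at this
          exact this
        have := hfcoefzero (WithLp.toLp 2 fun i' => c.1 (Sum.inr (j,i'))) hzΩ
        exact congrArg (fun v : EuclideanSpace ℂ (Fin p) => v i) this
      have hinl : ∀ j, c.1 (Sum.inl j) = 0 := hker_coord c.1 (LinearMap.mem_ker.1 c.2)
      apply Subtype.ext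
      refine PiLp.ext (fun m => ?_)
      match m with
      | Sum.inl j => exact hinl j
      | Sum.inr ji => exact hinr ji.1 ji.2
    exact le_trans (LinearMap.finrank_le_finrank_of_injective hΘinj) hSyzRank
  -- rank-nullity for Smap uB
  have hrnU := LinearMap.finrank_range_add_finrank_ker (Smap uB)
  have hcardU : finrank ℂ (EuclideanSpace ℂ (Fin n ⊕ Fin n × Fin p)) = n + n * p := by
    simp [finrank_euclideanSpace]
  rw [hcardU] at hrnU
  haveI : FiniteDimensional ℂ (LinearMap.range (Smap hB)) := inferInstance
  have hrangeU_le : finrank ℂ (LinearMap.range (Smap uB)) ≤ r := by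
    have hle : LinearMap.range (Smap uB) ≤ LinearMap.range (Smap hB) := by
      rw [hrange_eq]; exact husub
    calc finrank ℂ (LinearMap.range (Smap uB)) ≤ finrank ℂ (LinearMap.range (Smap hB)) :=
          Submodule.finrank_mono hle
      _ = r := hr_rank
  have hlower : n * (p + 1) - p * (p - 1) / 2 ≤ r := by
    have h3 : n * (p + 1) = n + n * p := by ring
    omega
  exact ⟨hlower, hupper⟩
end

section
/- Let f₁,…,f_p be linearly independent holomorphic functions on a connected open neighborhood Ω of 0 in ℂⁿ with fᵢ(0) = 0 for all i, let t be a positive integer, and suppose (1 + Σ_{i=1}^p |fᵢ(z)|²)^t = 1 + Σ_{k=1}^r |hₖ(z)|² on Ω, where h₁,…,h_r are linearly independent holomorphic functions on Ω. Then r ≤ Σ_{k=1}^t C(p+k−1, k), where C(·,·) denotes the binomial coefficient. -/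
open scoped BigOperators

open Complex Filter Set

noncomputable section

namespace SOSAux

/-- Splitting step: differentiate the hermitian-type identity and keep the holomorphic part. -/
lemma split_step {ι : Type*} [Fintype ι] {U : Set ℂ} (hU : IsOpen U)
    (P a : ι → ℂ → ℂ) (ε : ι → ℝ)
    (hP : ∀ j, AnalyticOnNhd ℂ (P j) U) (ha : ∀ j, AnalyticOnNhd ℂ (a j) U)
    (hzero : ∀ x ∈ U, ∑ j, (ε j : ℂ) * (P j x * (starRingEnd ℂ) (a j x)) = 0) :
    ∀ x ∈ U, ∑ j, (ε j : ℂ) * (deriv (P j) x * (starRingEnd ℂ) (a j x)) = 0 := by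
  intro x hx
  -- derivatives
  set C : ℂ →L[ℝ] ℂ := Complex.conjCLE.toContinuousLinearMap with hC
  have hterm : ∀ j : ι, HasFDerivAt (fun y => (ε j : ℂ) * (P j y * (starRingEnd ℂ) (a j y)))
      ((ε j : ℂ) • ((P j x) • (C.comp (((ContinuousLinearMap.smulRight (1 : ℂ →L[ℂ] ℂ)
          (deriv (a j) x))).restrictScalars ℝ))
        + ((starRingEnd ℂ) (a j x)) • (((ContinuousLinearMap.smulRight (1 : ℂ →L[ℂ] ℂ)
          (deriv (P j) x))).restrictScalars ℝ))) x := by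
    intro j
    have hPd : HasFDerivAt (P j)
        (((ContinuousLinearMap.smulRight (1 : ℂ →L[ℂ] ℂ) (deriv (P j) x))).restrictScalars ℝ) x :=
      (((hP j x hx).differentiableAt.hasDerivAt).hasFDerivAt).restrictScalars ℝ
    have had : HasFDerivAt (a j)
        (((ContinuousLinearMap.smulRight (1 : ℂ →L[ℂ] ℂ) (deriv (a j) x))).restrictScalars ℝ) x :=
      (((ha j x hx).differentiableAt.hasDerivAt).hasFDerivAt).restrictScalars ℝ
    have hconj : HasFDerivAt (fun y => (starRingEnd ℂ) (a j y))
        (C.comp (((ContinuousLinearMap.smulRight (1 : ℂ →L[ℂ] ℂ)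
          (deriv (a j) x))).restrictScalars ℝ)) x := by
      exact (C.hasFDerivAt).comp x had
    exact ((hPd.mul hconj).const_mul _)
  have htotal : HasFDerivAt (fun y => ∑ j, (ε j : ℂ) * (P j y * (starRingEnd ℂ) (a j y)))
      (∑ j, ((ε j : ℂ) • ((P j x) • (C.comp (((ContinuousLinearMap.smulRight (1 : ℂ →L[ℂ] ℂ)
          (deriv (a j) x))).restrictScalars ℝ))
        + ((starRingEnd ℂ) (a j x)) • (((ContinuousLinearMap.smulRight (1 : ℂ →L[ℂ] ℂ)
          (deriv (P j) x))).restrictScalars ℝ)))) x :=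
    HasFDerivAt.fun_sum (fun j _ => hterm j)
  have hev : (fun y => ∑ j, (ε j : ℂ) * (P j y * (starRingEnd ℂ) (a j y)))
      =ᶠ[nhds x] (fun _ => (0 : ℂ)) :=
    Filter.eventually_of_mem (hU.mem_nhds hx) hzero
  have hzero' : HasFDerivAt (fun _ : ℂ => (0:ℂ))
      (∑ j, ((ε j : ℂ) • ((P j x) • (C.comp (((ContinuousLinearMap.smulRight (1 : ℂ →L[ℂ] ℂ)
          (deriv (a j) x))).restrictScalars ℝ))
        + ((starRingEnd ℂ) (a j x)) • (((ContinuousLinearMap.smulRight (1 : ℂ →L[ℂ] ℂ)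
          (deriv (P j) x))).restrictScalars ℝ)))) x :=
    hev.hasFDerivAt_iff.mp htotal
  have hL : (∑ j, ((ε j : ℂ) • ((P j x) • (C.comp (((ContinuousLinearMap.smulRight (1 : ℂ →L[ℂ] ℂ)
          (deriv (a j) x))).restrictScalars ℝ))
        + ((starRingEnd ℂ) (a j x)) • (((ContinuousLinearMap.smulRight (1 : ℂ →L[ℂ] ℂ)
          (deriv (P j) x))).restrictScalars ℝ)))) = (0 : ℂ →L[ℝ] ℂ) :=
    hzero'.unique (hasFDerivAt_const 0 x)
  have h1 := congrArg (fun (L : ℂ →L[ℝ] ℂ) => L 1) hL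
  have hI := congrArg (fun (L : ℂ →L[ℝ] ℂ) => L Complex.I) hL
  simp only [ContinuousLinearMap.sum_apply, ContinuousLinearMap.smul_apply,
    ContinuousLinearMap.add_apply, ContinuousLinearMap.comp_apply,
    ContinuousLinearMap.coe_restrictScalars', ContinuousLinearMap.smulRight_apply,
    ContinuousLinearMap.one_apply, hC, ContinuousLinearEquiv.coe_coe,
    ContinuousLinearMap.zero_apply, smul_eq_mul, one_mul,
    Complex.conjCLE_apply] at h1 hI
  -- h1 : ∑ j, ε j * (P j x * conj (deriv (a j) x) + conj (a j x) * deriv (P j) x) = 0 (roughly)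
  have e1 : (∑ j, (ε j : ℂ) * (P j x * (starRingEnd ℂ) (deriv (a j) x)))
      + (∑ j, (ε j : ℂ) * ((starRingEnd ℂ) (a j x) * deriv (P j) x)) = 0 := by
    rw [← Finset.sum_add_distrib, ← h1]
    apply Finset.sum_congr rfl
    intro j _
    ring
  have e2 : (∑ j, (ε j : ℂ) * (P j x * (starRingEnd ℂ) (deriv (a j) x)))
      = (∑ j, (ε j : ℂ) * ((starRingEnd ℂ) (a j x) * deriv (P j) x)) := by
    have hterm2 : ∀ j : ι, (ε j : ℂ) * (P j x * (starRingEnd ℂ) (Complex.I * deriv (a j) x)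
          + (starRingEnd ℂ) (a j x) * (Complex.I * deriv (P j) x))
        = Complex.I * ((ε j : ℂ) * ((starRingEnd ℂ) (a j x) * deriv (P j) x))
          - Complex.I * ((ε j : ℂ) * (P j x * (starRingEnd ℂ) (deriv (a j) x))) := by
      intro j
      simp only [map_mul, Complex.conj_I]
      ring
    rw [Finset.sum_congr rfl (fun j _ => hterm2 j), Finset.sum_sub_distrib,
      ← Finset.mul_sum, ← Finset.mul_sum, sub_eq_zero] at hI
    exact (mul_left_cancel₀ Complex.I_ne_zero hI).symm
  have : (∑ j, (ε j : ℂ) * ((starRingEnd ℂ) (a j x) * deriv (P j) x)) = 0 := by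
    linear_combination e1/2 - e2/2
  rw [← this]
  apply Finset.sum_congr rfl
  intro j _
  ring


/-- All holomorphic-side derivatives annihilate: induction on `split_step`. -/
lemma iter_vanish {ι : Type*} [Fintype ι] {U : Set ℂ} (hU : IsOpen U)
    (a : ι → ℂ → ℂ) (ε : ι → ℝ) (ha : ∀ j, AnalyticOnNhd ℂ (a j) U)
    (hdiag : ∀ x ∈ U, ∑ j, (ε j : ℂ) * (a j x * (starRingEnd ℂ) (a j x)) = 0) :
    ∀ m : ℕ, ∀ x ∈ U, ∑ j, (ε j : ℂ) *
      (iteratedDeriv m (a j) x * (starRingEnd ℂ) (a j x)) = 0 := by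
  have hiterAn : ∀ m : ℕ, ∀ j, AnalyticOnNhd ℂ (iteratedDeriv m (a j)) U := by
    intro m
    induction m with
    | zero => simpa [iteratedDeriv_zero] using ha
    | succ m ih =>
      intro j
      have := (ih j).deriv
      simpa [iteratedDeriv_succ] using this
  intro m
  induction m with
  | zero => simpa [iteratedDeriv_zero] using hdiag
  | succ m ih =>
    have := split_step hU (fun j => iteratedDeriv m (a j)) a ε
      (fun j => hiterAn m j) ha ih
    intro x hx
    have h2 := this x hx
    simpa [iteratedDeriv_succ] using h2

/-- One-variable polarization of a vanishing hermitian combination. -/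
lemma kernel_1d {ι : Type*} [Fintype ι] {U : Set ℂ} (hU : IsOpen U)
    (hUc : IsPreconnected U) (a : ι → ℂ → ℂ) (ε : ι → ℝ)
    (ha : ∀ j, DifferentiableOn ℂ (a j) U)
    (hdiag : ∀ x ∈ U, ∑ j, (ε j : ℂ) * (a j x * (starRingEnd ℂ) (a j x)) = 0) :
    ∀ x ∈ U, ∀ μ ∈ U, ∑ j, (ε j : ℂ) * (a j x * (starRingEnd ℂ) (a j μ)) = 0 := by
  have haA : ∀ j, AnalyticOnNhd ℂ (a j) U := fun j => (ha j).analyticOnNhd hU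
  have hiterAn : ∀ m : ℕ, ∀ j, AnalyticOnNhd ℂ (iteratedDeriv m (a j)) U := by
    intro m
    induction m with
    | zero => simpa [iteratedDeriv_zero] using haA
    | succ m ih =>
      intro j
      have := (ih j).deriv
      simpa [iteratedDeriv_succ] using this
  have hS := iter_vanish hU a ε haA hdiag
  intro x hxU μ hμ
  set G : ℂ → ℂ := fun y => ∑ j, (ε j : ℂ) * (a j y * (starRingEnd ℂ) (a j μ)) with hG
  have hGd : DifferentiableOn ℂ G U := by
    apply DifferentiableOn.fun_sum
    intro j _
    exact (((ha j).mul_const _).const_mul _)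
  -- iterated derivatives of G on U
  have hGiter : ∀ m : ℕ, ∀ y ∈ U, iteratedDeriv m G y
      = ∑ j, (ε j : ℂ) * (iteratedDeriv m (a j) y * (starRingEnd ℂ) (a j μ)) := by
    intro m
    induction m with
    | zero => intro y hy; simp [iteratedDeriv_zero, hG]
    | succ m ih =>
      intro y hy
      have hev : iteratedDeriv m G =ᶠ[nhds y]
          (fun x => ∑ j, (ε j : ℂ) * (iteratedDeriv m (a j) x * (starRingEnd ℂ) (a j μ))) :=
        Filter.eventually_of_mem (hU.mem_nhds hy) ih
      rw [iteratedDeriv_succ, hev.deriv_eq, deriv_fun_sum]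
      · apply Finset.sum_congr rfl
        intro j _
        rw [deriv_const_mul _ (((hiterAn m j) y hy).differentiableAt.mul_const _),
          deriv_mul_const (((hiterAn m j) y hy).differentiableAt), ← iteratedDeriv_succ]
      · intro j _
        exact ((((hiterAn m j) y hy).differentiableAt.mul_const _).const_mul _)
  have hiter0 : ∀ m : ℕ, iteratedDeriv m G μ = 0 := by
    intro m
    rw [hGiter m μ hμ]
    exact hS m μ hμ
  -- G vanishes near μ via Taylor series
  obtain ⟨ρ, hρ, hball⟩ := Metric.isOpen_iff.mp hU μ hμ
  have hGzero : ∀ z ∈ Metric.ball μ ρ, G z = 0 := by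
    intro z hz
    have hsum := Complex.hasSum_taylorSeries_on_ball (hGd.mono hball) hz
    have : (fun m : ℕ => (m.factorial : ℂ)⁻¹ • (z - μ) ^ m • iteratedDeriv m G μ)
        = fun _ => (0 : ℂ) := by
      funext m; simp [hiter0 m]
    rw [this] at hsum
    exact hsum.unique hasSum_zero
  have hev0 : G =ᶠ[nhds μ] 0 :=
    Filter.eventually_of_mem (Metric.ball_mem_nhds μ hρ) hGzero
  have := (hGd.analyticOnNhd hU).eqOn_zero_of_preconnected_of_eventuallyEq_zero hUc hμ hev0
  exact this hxU


variable {m : ℕ}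

/-- Identity theorem for complex-differentiable functions on a connected open subset of ℂⁿ,
proved by restriction to complex lines. -/
lemma eqOn_zero_of_diff {Ω : Set (Fin m → ℂ)} (hΩo : IsOpen Ω) (hΩc : IsPreconnected Ω)
    {φ : (Fin m → ℂ) → ℂ} (hφ : DifferentiableOn ℂ φ Ω) {x₀ : Fin m → ℂ} (hx₀ : x₀ ∈ Ω)
    (hev : ∀ᶠ z in nhds x₀, φ z = 0) : Set.EqOn φ 0 Ω := by
  classical
  set S : Set (Fin m → ℂ) := {x | ∀ᶠ z in nhds x, φ z = 0} with hSdef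
  have hSopen : IsOpen S := isOpen_setOf_eventually_nhds
  -- the key local propagation: if φ vanishes near y and the ball around x contains y,q then φ q = 0
  have hline : ∀ (x : Fin m → ℂ) (ρ : ℝ), Metric.ball x ρ ⊆ Ω → ∀ y ∈ Metric.ball x ρ,
      y ∈ S → ∀ q ∈ Metric.ball x ρ, φ q = 0 := by
    intro x ρ hball y hy hyS q hq
    set c : ℂ → (Fin m → ℂ) := fun lam => y + lam • (q - y) with hc
    have hcdiff : Differentiable ℂ c := by
      apply Differentiable.const_add
      exact differentiable_id.smul_const (q - y)
    set U : Set ℂ := c ⁻¹' (Metric.ball x ρ) with hUdef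
    have hUo : IsOpen U := Metric.isOpen_ball.preimage hcdiff.continuous
    have h0U : (0 : ℂ) ∈ U := by
      simp only [hUdef, Set.mem_preimage, hc]
      simpa using hy
    have h1U : (1 : ℂ) ∈ U := by
      simp only [hUdef, Set.mem_preimage, hc]
      simpa using hq
    have hconv : Convex ℝ U := by
      intro l1 h1 l2 h2 s1 s2 hs1 hs2 hsum
      simp only [hUdef, Set.mem_preimage, hc] at h1 h2 ⊢
      have key : y + (s1 • l1 + s2 • l2) • (q - y)
          = s1 • (y + l1 • (q - y)) + s2 • (y + l2 • (q - y)) := by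
        have hy' : y = s1 • y + s2 • y := by
          rw [← add_smul, hsum, one_smul]
        nth_rewrite 1 [hy']
        rw [← algebraMap_smul ℂ s1 y, ← algebraMap_smul ℂ s2 y,
          ← algebraMap_smul ℂ s1 (y + l1 • (q - y)), ← algebraMap_smul ℂ s2 (y + l2 • (q - y)),
          ← algebraMap_smul ℂ s1 l1, ← algebraMap_smul ℂ s2 l2]
        simp only [Complex.coe_algebraMap]
        match_scalars <;> (simp only [smul_eq_mul]; push_cast; ring)
      rw [key]
      exact (convex_ball x ρ) h1 h2 hs1 hs2 hsum
    have hψd : DifferentiableOn ℂ (φ ∘ c) U := by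
      intro lam hlam
      have h1 : DifferentiableAt ℂ φ (c lam) :=
        hφ.differentiableAt (hΩo.mem_nhds (hball hlam))
      exact (h1.comp lam (hcdiff lam)).differentiableWithinAt
    have hψ0 : (φ ∘ c) =ᶠ[nhds (0 : ℂ)] 0 := by
      have hc0 : c 0 = y := by simp [hc]
      have htend : Filter.Tendsto c (nhds 0) (nhds y) := by
        rw [← hc0]
        exact hcdiff.continuous.continuousAt
      exact htend.eventually hyS
    have hEq := ((hψd.analyticOnNhd hUo).eqOn_zero_of_preconnected_of_eventuallyEq_zero
      hconv.isPreconnected h0U hψ0) h1U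
    have hc1 : c 1 = q := by simp [hc]
    simpa [hc1] using hEq
  have hsub : Ω ⊆ S := by
    apply hΩc.subset_of_closure_inter_subset hSopen ⟨x₀, hx₀, hev⟩
    intro x hx
    obtain ⟨hxcl, hxΩ⟩ := hx
    obtain ⟨ρ, hρ, hball⟩ := Metric.isOpen_iff.mp hΩo x hxΩ
    obtain ⟨y, hyS, hyd⟩ := Metric.mem_closure_iff.mp hxcl (ρ/2) (by linarith)
    have hyb : y ∈ Metric.ball x ρ := by
      rw [Metric.mem_ball, dist_comm]
      linarith
    show x ∈ S
    have : ∀ q ∈ Metric.ball x (ρ/2), φ q = 0 := by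
      intro q hq
      exact hline x ρ hball y hyb hyS q (Metric.ball_subset_ball (by linarith) hq)
    exact Filter.eventually_of_mem (Metric.ball_mem_nhds x (by linarith)) this
  intro x hx
  exact ((hsub hx).self_of_nhds : φ x = 0)

/-- Kernel polarization on a ball in ℂⁿ. -/
lemma kernel_ball {ι : Type*} [Fintype ι] {Ω : Set (Fin m → ℂ)} (hΩo : IsOpen Ω)
    (u : ι → (Fin m → ℂ) → ℂ) (ε : ι → ℝ)
    (hu : ∀ j, DifferentiableOn ℂ (u j) Ω)
    (hdiag : ∀ z ∈ Ω, ∑ j, (ε j : ℂ) * (u j z * (starRingEnd ℂ) (u j z)) = 0)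
    {x : Fin m → ℂ} {ρ : ℝ} (hball : Metric.ball x ρ ⊆ Ω) :
    ∀ z ∈ Metric.ball x ρ, ∀ w ∈ Metric.ball x ρ,
      ∑ j, (ε j : ℂ) * (u j z * (starRingEnd ℂ) (u j w)) = 0 := by
  intro z hz w hw
  set c : ℂ → (Fin m → ℂ) := fun lam => z + lam • (w - z) with hc
  have hcdiff : Differentiable ℂ c := by
    apply Differentiable.const_add
    exact differentiable_id.smul_const (w - z)
  set U : Set ℂ := c ⁻¹' (Metric.ball x ρ) with hUdef
  have hUo : IsOpen U := Metric.isOpen_ball.preimage hcdiff.continuous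
  have h0U : (0 : ℂ) ∈ U := by
    simp only [hUdef, Set.mem_preimage, hc]
    simpa using hz
  have h1U : (1 : ℂ) ∈ U := by
    simp only [hUdef, Set.mem_preimage, hc]
    simpa using hw
  have hconv : Convex ℝ U := by
    intro l1 h1 l2 h2 s1 s2 hs1 hs2 hsum
    simp only [hUdef, Set.mem_preimage, hc] at h1 h2 ⊢
    have key : z + (s1 • l1 + s2 • l2) • (w - z)
        = s1 • (z + l1 • (w - z)) + s2 • (z + l2 • (w - z)) := by
      have hz' : z = s1 • z + s2 • z := by
        rw [← add_smul, hsum, one_smul]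
      nth_rewrite 1 [hz']
      rw [← algebraMap_smul ℂ s1 z, ← algebraMap_smul ℂ s2 z,
        ← algebraMap_smul ℂ s1 (z + l1 • (w - z)), ← algebraMap_smul ℂ s2 (z + l2 • (w - z)),
        ← algebraMap_smul ℂ s1 l1, ← algebraMap_smul ℂ s2 l2]
      simp only [Complex.coe_algebraMap]
      match_scalars <;> (simp only [smul_eq_mul]; push_cast; ring)
    rw [key]
    exact (convex_ball x ρ) h1 h2 hs1 hs2 hsum
  have ha : ∀ j, DifferentiableOn ℂ (fun lam => u j (c lam)) U := by
    intro j lam hlam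
    have h1 : DifferentiableAt ℂ (u j) (c lam) :=
      (hu j).differentiableAt (hΩo.mem_nhds (hball hlam))
    exact (h1.comp lam (hcdiff lam)).differentiableWithinAt
  have hdiag' : ∀ lam ∈ U, ∑ j, (ε j : ℂ) *
      ((fun lam => u j (c lam)) lam * (starRingEnd ℂ) ((fun lam => u j (c lam)) lam)) = 0 := by
    intro lam hlam
    exact hdiag (c lam) (hball hlam)
  have := kernel_1d hUo hconv.isPreconnected (fun j lam => u j (c lam)) ε ha hdiag'
    0 h0U 1 h1U
  have hc0 : c 0 = z := by simp [hc]
  have hc1 : c 1 = w := by simp [hc]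
  simpa [hc0, hc1] using this


lemma diffOn_prod {m : ℕ} {Ω : Set (Fin m → ℂ)} {ι' : Type*} (s : Finset ι')
    (g : ι' → (Fin m → ℂ) → ℂ) (hg : ∀ i, DifferentiableOn ℂ (g i) Ω) :
    DifferentiableOn ℂ (fun z => ∏ i ∈ s, g i z) Ω := by
  classical
  induction s using Finset.induction with
  | empty => simpa using differentiableOn_const 1
  | @insert x s hx ih =>
    have : (fun z => ∏ i ∈ insert x s, g i z) = fun z => g x z * ∏ i ∈ s, g i z := by
      funext z
      rw [Finset.prod_insert hx]
    rw [this]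
    exact (hg x).mul ih

end SOSAux



/-- Proposition (rank of powers, upper bound): if `f₁,…,f_p` are linearly independent
holomorphic functions near `0 ∈ ℂⁿ` vanishing at `0`, `t ≥ 1`, and
`(1+Σᵢ|fᵢ(z)|²)^t = 1+Σₖ|hₖ(z)|²` with `h₁,…,h_r` linearly independent holomorphic,
then `r ≤ Σ_{k=1}^t C(p+k-1, k)`. -/
theorem sos_rank_power_upper_bound
    (n p r t : ℕ) (ht : 0 < t) (Ω : Set (Fin n → ℂ))
    (hΩo : IsOpen Ω) (hΩc : IsConnected Ω) (h0Ω : (0 : Fin n → ℂ) ∈ Ω)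
    (f : Fin p → (Fin n → ℂ) → ℂ) (h : Fin r → (Fin n → ℂ) → ℂ)
    (hf : ∀ i, DifferentiableOn ℂ (f i) Ω)
    (hf0 : ∀ i, f i 0 = 0)
    (hh : ∀ k, DifferentiableOn ℂ (h k) Ω)
    (hfli : LinearIndependent ℂ (fun i => fun z : Ω => f i z.1))
    (hhli : LinearIndependent ℂ (fun k => fun z : Ω => h k z.1))
    (heq : ∀ z ∈ Ω,
      (1 + ∑ i, ‖f i z‖ ^ 2) ^ t = 1 + ∑ k, ‖h k z‖ ^ 2) :
    r ≤ ∑ k ∈ Finset.Icc 1 t, (p + k - 1).choose k := by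
  classical
  set ι₁ := Σ k : Fin t, (Fin (k.1+1) → Fin p) with hι₁
  set u : ι₁ ⊕ Fin r → (Fin n → ℂ) → ℂ :=
    Sum.elim (fun km => fun z => ∏ j, f (km.2 j) z) h with hu_def
  set ε : ι₁ ⊕ Fin r → ℝ :=
    Sum.elim (fun km => (t.choose (km.1.1+1) : ℝ)) (fun _ => (-1 : ℝ)) with hε_def
  have hu : ∀ j, DifferentiableOn ℂ (u j) Ω := by
    rintro (⟨k, m⟩ | k)
    · simp only [hu_def, Sum.elim_inl]
      exact SOSAux.diffOn_prod Finset.univ (fun j => f (m j)) (fun j => hf (m j))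
    · exact hh k
  have key : ∀ c : ℂ, c * (starRingEnd ℂ) c = ((‖c‖^2 : ℝ) : ℂ) := by
    intro c
    rw [Complex.mul_conj]
    norm_cast
    rw [Complex.normSq_eq_norm_sq]
  have hdiag : ∀ z ∈ Ω, ∑ j, (ε j : ℂ) * (u j z * (starRingEnd ℂ) (u j z)) = 0 := by
    intro z hz
    have hre : ∑ km : ι₁, (t.choose (km.1.1+1) : ℝ) * ‖u (Sum.inl km) z‖^2
        = ∑ k, ‖h k z‖^2 := by
      have hX := heq z hz
      set X : ℝ := ∑ i, ‖f i z‖^2 with hXdef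
      have h1 : ∑ km : ι₁, (t.choose (km.1.1+1) : ℝ) * ‖u (Sum.inl km) z‖^2
          = ∑ k : Fin t, (t.choose (k.1+1) : ℝ) * X^(k.1+1) := by
        rw [← Finset.univ_sigma_univ, Finset.sum_sigma]
        apply Finset.sum_congr rfl
        intro k _
        dsimp only
        rw [← Finset.mul_sum]
        congr 1
        rw [hXdef, Fintype.sum_pow]
        apply Finset.sum_congr rfl
        intro m _
        simp only [hu_def, Sum.elim_inl]
        rw [norm_prod, ← Finset.prod_pow]
      have h2 : (1 + X)^t = ∑ k ∈ Finset.range t, X^(k+1) * (t.choose (k+1) : ℝ) + 1 := by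
        rw [add_comm (1:ℝ) X, add_pow]
        rw [Finset.sum_range_succ']
        simp
      rw [h1]
      have h3 : ∑ k : Fin t, (t.choose (k.1+1) : ℝ) * X^(k.1+1)
          = ∑ k ∈ Finset.range t, X^(k+1) * (t.choose (k+1) : ℝ) := by
        rw [Finset.sum_range fun k => X^(k+1) * (t.choose (k+1) : ℝ)]
        apply Finset.sum_congr rfl
        intro k _
        ring
      rw [h3]
      have := heq z hz
      rw [← hXdef] at this
      rw [h2] at this
      linarith
    rw [Fintype.sum_sum_type]
    simp only [key]
    have hL : ∑ km : ι₁, (ε (Sum.inl km) : ℂ) * ((‖u (Sum.inl km) z‖^2 : ℝ) : ℂ)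
        = ((∑ km : ι₁, (t.choose (km.1.1+1) : ℝ) * ‖u (Sum.inl km) z‖^2 : ℝ) : ℂ) := by
      push_cast
      apply Finset.sum_congr rfl
      intro km _
      simp [hε_def]
    have hR : ∑ k : Fin r, (ε (Sum.inr k) : ℂ) * ((‖u (Sum.inr k) z‖^2 : ℝ) : ℂ)
        = -((∑ k, ‖h k z‖^2 : ℝ) : ℂ) := by
      push_cast
      rw [← Finset.sum_neg_distrib]
      apply Finset.sum_congr rfl
      intro k _
      simp [hε_def, hu_def]
    rw [hL, hR, hre]
    ring
  -- Step B: kernel identity on a ball around 0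
  obtain ⟨ρ, hρ, hball⟩ := Metric.isOpen_iff.mp hΩo 0 h0Ω
  have hker := SOSAux.kernel_ball hΩo u ε hu hdiag hball
  -- Step C: extend in the first variable to all of Ω
  have hkerΩ : ∀ w ∈ Metric.ball (0 : Fin n → ℂ) ρ, ∀ z ∈ Ω,
      ∑ j, (ε j : ℂ) * (u j z * (starRingEnd ℂ) (u j w)) = 0 := by
    intro w hw
    have hφd : DifferentiableOn ℂ
        (fun z => ∑ j, (ε j : ℂ) * (u j z * (starRingEnd ℂ) (u j w))) Ω :=
      DifferentiableOn.fun_sum (fun j _ => ((hu j).mul_const _).const_mul _)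
    have hev : ∀ᶠ z in nhds (0 : Fin n → ℂ),
        (fun z => ∑ j, (ε j : ℂ) * (u j z * (starRingEnd ℂ) (u j w))) z = 0 :=
      Filter.eventually_of_mem (Metric.ball_mem_nhds _ hρ) (fun z hz => hker z hz w hw)
    intro z hz
    exact SOSAux.eqOn_zero_of_diff hΩo hΩc.isPreconnected hφd h0Ω hev hz
  -- vanishing on the ball forces trivial coefficients on h
  have hvanish : ∀ (ψ : Fin r → ℂ),
      (∀ w ∈ Metric.ball (0 : Fin n → ℂ) ρ, ∑ k, ψ k * h k w = 0) → ψ = 0 := by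
    intro ψ hψ
    have hφd : DifferentiableOn ℂ (fun z => ∑ k, ψ k * h k z) Ω :=
      DifferentiableOn.fun_sum (fun k _ => (hh k).const_mul _)
    have hzero : Set.EqOn (fun z => ∑ k, ψ k * h k z) 0 Ω :=
      SOSAux.eqOn_zero_of_diff hΩo hΩc.isPreconnected hφd h0Ω
        (Filter.eventually_of_mem (Metric.ball_mem_nhds _ hρ) hψ)
    funext k
    refine Fintype.linearIndependent_iff.mp hhli ψ ?_ k
    funext z
    have := hzero z.2
    simpa [Finset.sum_apply] using this
  -- Step E: span structure
  set Hfun : Fin r → (↥Ω → ℂ) := fun k => fun z => h k z.1 with hHfun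
  set Gm : ((k : Fin t) × Sym (Fin p) (k.1+1)) → (↥Ω → ℂ) :=
    fun ks => fun z => (ks.2.1.map (fun i => f i z.1)).prod with hGm
  set W : Submodule ℂ (↥Ω → ℂ) := Submodule.span ℂ (Set.range Gm) with hW
  have hGmval : ∀ km : ι₁, (fun z : Ω => u (Sum.inl km) z.1) ∈ Set.range Gm := by
    intro km
    refine ⟨⟨km.1, ⟨Finset.univ.val.map km.2, by simp⟩⟩, ?_⟩
    funext z
    simp only [hGm, hu_def, Sum.elim_inl]
    rw [Multiset.map_map, ← Finset.prod_eq_multiset_prod]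
    rfl
  have hcomb : ∀ w ∈ Metric.ball (0 : Fin n → ℂ) ρ,
      (fun z : Ω => ∑ k, (starRingEnd ℂ) (h k w) * h k z.1) ∈ W := by
    intro w hw
    have hkey : (fun z : Ω => ∑ k, (starRingEnd ℂ) (h k w) * h k z.1)
        = ∑ km : ι₁, (((t.choose (km.1.1+1) : ℂ)) * (starRingEnd ℂ) (u (Sum.inl km) w))
            • (fun z : Ω => u (Sum.inl km) z.1) := by
      funext z
      rw [Finset.sum_apply]
      simp only [Pi.smul_apply, smul_eq_mul]
      have h0 := hkerΩ w hw z.1 z.2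
      rw [Fintype.sum_sum_type] at h0
      have hL2 : ∑ km : ι₁, (ε (Sum.inl km) : ℂ) *
            (u (Sum.inl km) z.1 * (starRingEnd ℂ) (u (Sum.inl km) w))
          = ∑ km : ι₁, ((t.choose (km.1.1+1) : ℂ)) * (starRingEnd ℂ) (u (Sum.inl km) w)
              * u (Sum.inl km) z.1 := by
        apply Finset.sum_congr rfl
        intro km _
        simp only [hε_def, Sum.elim_inl]
        push_cast
        ring
      have hR2 : ∑ k : Fin r, (ε (Sum.inr k) : ℂ) *
            (u (Sum.inr k) z.1 * (starRingEnd ℂ) (u (Sum.inr k) w))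
          = - ∑ k, (starRingEnd ℂ) (h k w) * h k z.1 := by
        rw [← Finset.sum_neg_distrib]
        apply Finset.sum_congr rfl
        intro k _
        simp only [hε_def, hu_def, Sum.elim_inr]
        push_cast
        ring
      rw [hL2, hR2] at h0
      linear_combination -h0
    rw [hkey]
    exact Submodule.sum_mem _ (fun km _ => Submodule.smul_mem _ _
      (Submodule.subset_span (hGmval km)))
  -- Step D: every h k restricted lies in W
  have hHW : ∀ k, Hfun k ∈ W := by
    set K : Submodule ℂ (Fin r → ℂ) := Submodule.span ℂ
      {x : Fin r → ℂ | ∃ w ∈ Metric.ball (0 : Fin n → ℂ) ρ,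
        x = fun k => (starRingEnd ℂ) (h k w)} with hK
    have hKtop : K = ⊤ := by
      by_contra hKne
      obtain ⟨φ, hφne, hφbot⟩ := Submodule.exists_dual_map_eq_bot_of_lt_top
        (lt_top_iff_ne_top.mpr hKne) inferInstance
      set d : Fin r → ℂ := fun k => φ (fun j => if k = j then 1 else 0) with hd
      have hφx : ∀ x : Fin r → ℂ, φ x = ∑ k, x k * d k := by
        intro x
        conv_lhs => rw [pi_eq_sum_univ x]
        rw [map_sum]
        apply Finset.sum_congr rfl
        intro k _
        rw [map_smul, smul_eq_mul]
      have hdzero : (fun k => (starRingEnd ℂ) (d k)) = 0 := by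
        apply hvanish
        intro w hw
        have hx : (fun k => (starRingEnd ℂ) (h k w)) ∈ K :=
          Submodule.subset_span ⟨w, hw, rfl⟩
        have : φ (fun k => (starRingEnd ℂ) (h k w)) = 0 := by
          have hmem : φ (fun k => (starRingEnd ℂ) (h k w)) ∈ K.map φ :=
            Submodule.mem_map_of_mem hx
          rw [hφbot] at hmem
          simpa using hmem
        rw [hφx] at this
        have := congrArg (starRingEnd ℂ) this
        rw [map_sum, map_zero] at this
        rw [← this]
        apply Finset.sum_congr rfl
        intro k _
        rw [map_mul]
        simp [mul_comm]
      have hdz : d = 0 := by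
        funext k
        have := congrFun hdzero k
        simpa using this
      apply hφne
      apply LinearMap.ext
      intro x
      rw [hφx, hdz]
      simp
    set Φ : (Fin r → ℂ) →ₗ[ℂ] ((↥Ω → ℂ) ⧸ W) :=
      ∑ k : Fin r, (LinearMap.proj k).smulRight (W.mkQ (Hfun k)) with hΦ
    have hΦapply : ∀ x : Fin r → ℂ, Φ x = ∑ k, x k • W.mkQ (Hfun k) := by
      intro x
      rw [hΦ]
      simp [LinearMap.sum_apply, LinearMap.smulRight_apply, LinearMap.proj_apply]
    have hKker : K ≤ LinearMap.ker Φ := by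
      rw [hK]
      apply Submodule.span_le.mpr
      rintro x ⟨w, hw, rfl⟩
      rw [SetLike.mem_coe, LinearMap.mem_ker, hΦapply]
      have : ∑ k, (starRingEnd ℂ) (h k w) • W.mkQ (Hfun k)
          = W.mkQ (∑ k, (starRingEnd ℂ) (h k w) • Hfun k) := by
        rw [map_sum]
        apply Finset.sum_congr rfl
        intro k _
        rw [map_smul]
      rw [this]
      rw [Submodule.mkQ_apply, Submodule.Quotient.mk_eq_zero]
      have hfun : (∑ k, (starRingEnd ℂ) (h k w) • Hfun k)
          = (fun z : Ω => ∑ k, (starRingEnd ℂ) (h k w) * h k z.1) := by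
        funext z
        rw [Finset.sum_apply]
        simp [hHfun]
      rw [hfun]
      exact hcomb w hw
    intro k
    have hsing : Φ (Pi.single k 1) = 0 := by
      have : (Pi.single k (1:ℂ)) ∈ K := by
        rw [hKtop]
        exact Submodule.mem_top
      exact hKker this
    rw [hΦapply] at hsing
    have : W.mkQ (Hfun k) = 0 := by
      rw [← hsing]
      rw [Finset.sum_eq_single k]
      · simp
      · intro b _ hbk
        simp [Pi.single_apply, hbk]
      · intro hk
        exact absurd (Finset.mem_univ k) hk
    rwa [Submodule.mkQ_apply, Submodule.Quotient.mk_eq_zero] at this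
  -- Step F: counting
  have hfd : FiniteDimensional ℂ W := FiniteDimensional.span_of_finite ℂ (Set.finite_range Gm)
  have hHWli : LinearIndependent ℂ (fun k => (⟨Hfun k, hHW k⟩ : W)) := by
    apply LinearIndependent.of_comp W.subtype
    exact hhli
  have h1 : r ≤ Module.finrank ℂ W := by
    simpa using hHWli.fintype_card_le_finrank
  have h2 : Module.finrank ℂ W ≤ Fintype.card ((k : Fin t) × Sym (Fin p) (k.1+1)) := by
    rw [hW]
    exact finrank_range_le_card Gm
  have hcard : Fintype.card ((k : Fin t) × Sym (Fin p) (k.1+1))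
      = ∑ k ∈ Finset.Icc 1 t, (p + k - 1).choose k := by
    rw [Fintype.card_sigma]
    have hsym : ∀ k : Fin t, Fintype.card (Sym (Fin p) (k.1+1))
        = (p + (k.1+1) - 1).choose (k.1+1) := by
      intro k
      rw [Sym.card_sym_eq_multichoose, Fintype.card_fin, Nat.multichoose_eq]
    rw [Finset.sum_congr rfl (fun k _ => hsym k)]
    rw [Fin.sum_univ_eq_sum_range (fun k => (p + (k+1) - 1).choose (k+1)) t]
    rw [show Finset.Icc 1 t = Finset.Ico 1 (t+1) by rw [Finset.Ico_add_one_right_eq_Icc]]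
    rw [Finset.sum_Ico_eq_sum_range]
    simp only [Nat.add_sub_cancel]
    apply Finset.sum_congr rfl
    intro i _
    rw [Nat.add_comm 1 i]
  calc r ≤ Module.finrank ℂ W := h1
    _ ≤ _ := h2
    _ = _ := hcard
end
end

section
/- Let p and t be positive integers and let s₁ < s₂ < … < s_p be positive integers. Then the set { α₁s₁ + α₂s₂ + … + α_p s_p : α ∈ ℕ^p, 1 ≤ α₁+…+α_p ≤ t } has cardinality at least tp. -/
open scoped BigOperators

/-- Counting step in the proof of Proposition 2.5: for positive integers `p`, `t` and
strictly increasing positive integers `s₁ < … < s_p`, the set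
`{ α₁s₁ + ⋯ + α_p s_p : α ∈ ℕ^p, 1 ≤ |α| ≤ t }` has at least `tp` elements. -/
theorem card_weighted_sums_ge (p t : ℕ) (hp : 0 < p) (ht : 0 < t)
    (s : Fin p → ℕ) (hs0 : ∀ i, 0 < s i) (hmono : StrictMono s) :
    t * p ≤ Set.ncard {q : ℕ | ∃ α : Fin p → ℕ,
      1 ≤ ∑ i, α i ∧ ∑ i, α i ≤ t ∧ q = ∑ i, α i * s i} := by
  set S : Set ℕ := {q : ℕ | ∃ α : Fin p → ℕ,
      1 ≤ ∑ i, α i ∧ ∑ i, α i ≤ t ∧ q = ∑ i, α i * s i} with hS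
  set i0 : Fin p := ⟨p - 1, by omega⟩ with hi0
  set M : ℕ := s i0 with hM
  have hle : ∀ i : Fin p, s i ≤ M := by
    intro i
    exact hmono.monotone (show i ≤ i0 from by
      simp only [Fin.le_def, hi0]; omega)
  have hMpos : 0 < M := hs0 i0
  -- S is finite
  have hfin : S.Finite := by
    apply Set.Finite.subset (Set.finite_Iic (t * M))
    rintro q ⟨α, h1, h2, rfl⟩
    simp only [Set.mem_Iic]
    calc ∑ i, α i * s i ≤ ∑ i, α i * M :=
          Finset.sum_le_sum fun i _ => Nat.mul_le_mul_left _ (hle i)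
      _ = (∑ i, α i) * M := (Finset.sum_mul _ _ _).symm
      _ ≤ t * M := Nat.mul_le_mul_right _ h2
  -- the injection
  set f : Fin t × Fin p → ℕ := fun x => x.1.val * M + s x.2 with hf
  have hlt : ∀ (a b : Fin t) (i j : Fin p), a.val < b.val → f (a, i) < f (b, j) := by
    intro a b i j hab
    simp only [hf]
    have h1 : a.val * M + s i ≤ a.val * M + M := by
      exact Nat.add_le_add_left (hle i) _
    have h2 : a.val * M + M = (a.val + 1) * M := by ring
    have h3 : (a.val + 1) * M ≤ b.val * M := Nat.mul_le_mul_right _ (by omega)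
    have h4 : b.val * M < b.val * M + s j := Nat.lt_add_of_pos_right (hs0 j)
    omega
  have hinj : Function.Injective f := by
    rintro ⟨a, i⟩ ⟨b, j⟩ h
    rcases lt_trichotomy a.val b.val with hab | hab | hab
    · exact absurd h (Nat.ne_of_lt (hlt a b i j hab))
    · have ha : a = b := Fin.ext hab
      subst ha
      simp only [hf] at h
      have : s i = s j := by omega
      have : i = j := hmono.injective this
      simp [this]
    · exact absurd h.symm (Nat.ne_of_lt (hlt b a j i hab))
  -- range of f is in S
  have hsub : Set.range f ⊆ S := by
    rintro q ⟨⟨a, i⟩, rfl⟩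
    refine ⟨fun j => (if j = i then 1 else 0) + (if j = i0 then a.val else 0), ?_, ?_, ?_⟩
    · rw [Finset.sum_add_distrib, Finset.sum_ite_eq' _ i, Finset.sum_ite_eq' _ i0]
      simp
    · rw [Finset.sum_add_distrib, Finset.sum_ite_eq' _ i, Finset.sum_ite_eq' _ i0]
      simp only [Finset.mem_univ, if_true]
      have := a.isLt
      omega
    · simp only [hf, add_mul, ite_mul, one_mul, zero_mul]
      rw [Finset.sum_add_distrib, Finset.sum_ite_eq' _ i, Finset.sum_ite_eq' _ i0]
      simp only [Finset.mem_univ, if_true]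
      rw [hM]
      omega
  calc t * p = Nat.card (Fin t × Fin p) := by simp
    _ = Set.ncard (Set.range f) := by
        rw [← Nat.card_coe_set_eq, Nat.card_range_of_injective hinj]
    _ ≤ Set.ncard S := Set.ncard_le_ncard hsub hfin
end

section
/- Let h = (h₁,…,h_m) and h̃ = (h̃₁,…,h̃_m) be holomorphic mappings from a connected open set Ω ⊆ ℂⁿ to ℂ^m, each with linearly independent components, such that Σ_{k=1}^m |hₖ(z)|² = Σ_{k=1}^m |h̃ₖ(z)|² for all z ∈ Ω. Then there exists a unitary m×m matrix U such that h(z) = U·h̃(z) for all z ∈ Ω. -/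
open scoped BigOperators

open Complex ComplexConjugate Finset
open scoped Nat

/-- Derivative trick: from a vanishing holomorphic×antiholomorphic pairing on an open set,
the pairing with the derivatives of the holomorphic part also vanishes. -/
lemma deriv_pairing_zero {ι : Type*} [Fintype ι] {D : Set ℂ} (hD : IsOpen D)
    {g β : ι → ℂ → ℂ}
    (hg : ∀ j, DifferentiableOn ℂ (g j) D) (hβ : ∀ j, DifferentiableOn ℂ (β j) D)
    (hzero : ∀ l ∈ D, ∑ j, g j l * conj (β j l) = 0) :
    ∀ l ∈ D, ∑ j, deriv (g j) l * conj (β j l) = 0 := by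
  intro l hl
  have hgj : ∀ j, DifferentiableAt ℂ (g j) l := fun j =>
    (hg j).differentiableAt (hD.mem_nhds hl)
  have hβj : ∀ j, DifferentiableAt ℂ (β j) l := fun j =>
    (hβ j).differentiableAt (hD.mem_nhds hl)
  -- the real Fréchet derivative of each product term
  set T : ι → (ℂ →L[ℝ] ℂ) := fun j =>
    g j l • (Complex.conjCLE.toContinuousLinearMap.comp
        ((fderiv ℂ (β j) l).restrictScalars ℝ)) +
      conj (β j l) • ((fderiv ℂ (g j) l).restrictScalars ℝ) with hT
  have hterm : ∀ j, HasFDerivAt (fun z => g j z * conj (β j z)) (T j) l := by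
    intro j
    have h1 : HasFDerivAt (g j) ((fderiv ℂ (g j) l).restrictScalars ℝ) l :=
      ((hgj j).hasFDerivAt).restrictScalars ℝ
    have h2 : HasFDerivAt (fun z => conj (β j z))
        (Complex.conjCLE.toContinuousLinearMap.comp
          ((fderiv ℂ (β j) l).restrictScalars ℝ)) l := by
      exact (Complex.conjCLE.toContinuousLinearMap.hasFDerivAt).comp l
        (((hβj j).hasFDerivAt).restrictScalars ℝ)
    simpa using h1.fun_mul h2
  have hsum : HasFDerivAt (fun z => ∑ j, g j z * conj (β j z)) ((∑ j, T j : ℂ →L[ℝ] ℂ)) l :=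
    by exact HasFDerivAt.fun_sum (u := Finset.univ) fun j _ => hterm j
  have hzero' : HasFDerivAt (fun z => ∑ j, g j z * conj (β j z)) (0 : ℂ →L[ℝ] ℂ) l := by
    have : (fun z : ℂ => ∑ j, g j z * conj (β j z)) =ᶠ[nhds l] (fun _ => 0) := by
      filter_upwards [hD.mem_nhds hl] with x hx using hzero x hx
    exact (hasFDerivAt_const (0:ℂ) l).congr_of_eventuallyEq this
  have hT0 : (∑ j, T j) = 0 := hsum.unique hzero'
  -- evaluate at 1 and I
  have e1 : ∑ j, (g j l * conj (deriv (β j) l) + conj (β j l) * deriv (g j) l) = 0 := by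
    have := congrArg (fun (L : ℂ →L[ℝ] ℂ) => L 1) hT0
    simpa [ContinuousLinearMap.sum_apply, hT, ContinuousLinearMap.add_apply,
      ContinuousLinearMap.smul_apply, ContinuousLinearMap.coe_restrictScalars',
      fderiv_apply_one_eq_deriv, smul_eq_mul] using this
  have eI : ∑ j, (g j l * conj (I * deriv (β j) l) + conj (β j l) * (I * deriv (g j) l)) = 0 := by
    have := congrArg (fun (L : ℂ →L[ℝ] ℂ) => L I) hT0
    have hI : ∀ j, (fderiv ℂ (g j) l) I = I * deriv (g j) l := by
      intro j
      rw [show (I : ℂ) = I • (1:ℂ) by simp, ContinuousLinearMap.map_smul]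
      simp [fderiv_apply_one_eq_deriv, smul_eq_mul]
    have hI' : ∀ j, (fderiv ℂ (β j) l) I = I * deriv (β j) l := by
      intro j
      rw [show (I : ℂ) = I • (1:ℂ) by simp, ContinuousLinearMap.map_smul]
      simp [fderiv_apply_one_eq_deriv, smul_eq_mul]
    simpa [ContinuousLinearMap.sum_apply, hT, ContinuousLinearMap.add_apply,
      ContinuousLinearMap.smul_apply, ContinuousLinearMap.coe_restrictScalars',
      hI, hI', smul_eq_mul] using this
  set X := ∑ j, conj (β j l) * deriv (g j) l with hX
  set Y := ∑ j, g j l * conj (deriv (β j) l) with hY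
  have h1 : Y + X = 0 := by
    rw [hX, hY, ← Finset.sum_add_distrib]; exact e1
  have h2 : I * (X - Y) = 0 := by
    have heq2 : ∑ j, (g j l * conj (I * deriv (β j) l) + conj (β j l) * (I * deriv (g j) l))
        = I * (X - Y) := by
      rw [mul_sub, hX, hY, Finset.mul_sum, Finset.mul_sum, ← Finset.sum_sub_distrib]
      refine Finset.sum_congr rfl fun j _ => ?_
      simp only [map_mul, Complex.conj_I]
      ring
    rw [← heq2]; exact eI
  have hXY : X = Y := by
    have := (mul_eq_zero.mp h2).resolve_left Complex.I_ne_zero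
    exact sub_eq_zero.mp this
  have hX0 : X = 0 := by
    have h2X : (2:ℂ) * X = 0 := by
      rw [two_mul]
      calc X + X = Y + X := by rw [hXY]
        _ = 0 := h1
    exact (mul_eq_zero.mp h2X).resolve_left two_ne_zero
  have : ∑ j, deriv (g j) l * conj (β j l) = X :=
    Finset.sum_congr rfl fun j _ => mul_comm _ _
  rw [this]; exact hX0

lemma iteratedDeriv_differentiableOn {D : Set ℂ} (hD : IsOpen D) {f : ℂ → ℂ}
    (hf : DifferentiableOn ℂ f D) (k : ℕ) :
    DifferentiableOn ℂ (iteratedDeriv k f) D := by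
  induction k with
  | zero => simpa [iteratedDeriv_zero] using hf
  | succ k ih =>
    rw [iteratedDeriv_succ]
    exact ((ih.analyticOnNhd hD).deriv).differentiableOn



lemma iteratedDeriv_pairing_zero {ι : Type*} [Fintype ι] {D : Set ℂ} (hD : IsOpen D)
    {g β : ι → ℂ → ℂ}
    (hg : ∀ j, DifferentiableOn ℂ (g j) D) (hβ : ∀ j, DifferentiableOn ℂ (β j) D)
    (hzero : ∀ l ∈ D, ∑ j, g j l * conj (β j l) = 0) (k : ℕ) :
    ∀ l ∈ D, ∑ j, iteratedDeriv k (g j) l * conj (β j l) = 0 := by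
  induction k with
  | zero => simpa [iteratedDeriv_zero] using hzero
  | succ k ih =>
    have hgk : ∀ j, DifferentiableOn ℂ (iteratedDeriv k (g j)) D := fun j =>
      iteratedDeriv_differentiableOn hD (hg j) k
    have := deriv_pairing_zero hD hgk hβ ih
    intro l hl
    simpa [iteratedDeriv_succ] using this l hl

lemma ball_polarization {ι : Type*} [Fintype ι] {n : ℕ} {Ω : Set (Fin n → ℂ)} (hΩ : IsOpen Ω)
    {a b : ι → (Fin n → ℂ) → ℂ}
    (ha : ∀ j, DifferentiableOn ℂ (a j) Ω) (hb : ∀ j, DifferentiableOn ℂ (b j) Ω)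
    (hdiag : ∀ z ∈ Ω, ∑ j, a j z * conj (b j z) = 0)
    {z0 : Fin n → ℂ} {r : ℝ} (hball : Metric.ball z0 r ⊆ Ω) :
    ∀ w ∈ Metric.ball z0 r, ∑ j, a j w * conj (b j z0) = 0 := by
  intro w hw
  have hz0 : z0 ∈ Ω := hball (Metric.mem_ball_self (lt_of_le_of_lt dist_nonneg hw))
  by_cases hwz : w = z0
  · subst hwz; exact hdiag w hz0
  set v : Fin n → ℂ := w - z0 with hv
  have hvn : 0 < ‖v‖ := by
    rw [norm_pos_iff]
    exact fun hv0 => hwz (by rwa [hv, sub_eq_zero] at hv0)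
  have hvr : ‖v‖ < r := by
    rw [hv, ← dist_eq_norm]; exact hw
  set aff : ℂ → (Fin n → ℂ) := fun l => z0 + l • v with haff
  have haffdiff : Differentiable ℂ aff := by
    exact (differentiable_id.smul_const v).const_add z0
  set D : Set ℂ := aff ⁻¹' Ω with hD
  have hDopen : IsOpen D := hΩ.preimage haffdiff.continuous
  set g : ι → ℂ → ℂ := fun j l => a j (aff l) with hg'
  set βs : ι → ℂ → ℂ := fun j l => b j (aff l) with hβ'
  have hmaps : Set.MapsTo aff D Ω := fun l hl => hl
  have hgD : ∀ j, DifferentiableOn ℂ (g j) D := fun j =>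
    (ha j).comp haffdiff.differentiableOn hmaps
  have hβD : ∀ j, DifferentiableOn ℂ (βs j) D := fun j =>
    (hb j).comp haffdiff.differentiableOn hmaps
  have hdiagD : ∀ l ∈ D, ∑ j, g j l * conj (βs j l) = 0 := fun l hl => hdiag (aff l) hl
  have hk := iteratedDeriv_pairing_zero hDopen hgD hβD hdiagD
  have haff0 : aff 0 = z0 := by simp [haff]
  have h0D : (0 : ℂ) ∈ D := by
    simp only [hD, Set.mem_preimage, haff0]; exact hz0
  have hck : ∀ k, ∑ j, iteratedDeriv k (g j) 0 * conj (b j z0) = 0 := by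
    intro k
    have := hk k 0 h0D
    simpa [hβ', haff0] using this
  set R : ℝ := r / ‖v‖ with hR
  have hR1 : 1 < R := (one_lt_div hvn).mpr hvr
  have hsub : Metric.ball (0 : ℂ) R ⊆ D := by
    intro l hl
    simp only [Metric.mem_ball, dist_zero_right] at hl
    have : aff l ∈ Metric.ball z0 r := by
      simp only [Metric.mem_ball, haff, dist_eq_norm, add_sub_cancel_left]
      calc ‖l • v‖ = ‖l‖ * ‖v‖ := norm_smul l v
        _ < R * ‖v‖ := by exact mul_lt_mul_of_pos_right hl hvn
        _ = r := by rw [hR, div_mul_cancel₀ _ hvn.ne']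
    exact hball this
  have hgball : ∀ j, DifferentiableOn ℂ (g j) (Metric.ball (0:ℂ) R) := fun j =>
    (hgD j).mono hsub
  have h1mem : (1 : ℂ) ∈ Metric.ball (0:ℂ) R := by
    simp only [Metric.mem_ball, dist_zero_right, norm_one]; exact hR1
  have hts : ∀ j, HasSum
      (fun k : ℕ => (k ! : ℂ)⁻¹ • ((1:ℂ) - 0) ^ k • iteratedDeriv k (g j) 0) (g j 1) :=
    fun j => Complex.hasSum_taylorSeries_on_ball (hgball j) h1mem
  have hts2 : HasSum
      (fun k : ℕ => ∑ j, conj (b j z0) * ((k ! : ℂ)⁻¹ • ((1:ℂ) - 0) ^ k • iteratedDeriv k (g j) 0))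
      (∑ j, conj (b j z0) * g j 1) :=
    hasSum_sum fun j _ => (hts j).mul_left _
  have hterm0 : ∀ k : ℕ,
      (∑ j, conj (b j z0) * ((k ! : ℂ)⁻¹ • ((1:ℂ) - 0) ^ k • iteratedDeriv k (g j) 0)) = 0 := by
    intro k
    have : ∀ j ∈ Finset.univ (α := ι),
        conj (b j z0) * ((k ! : ℂ)⁻¹ • ((1:ℂ) - 0) ^ k • iteratedDeriv k (g j) 0)
          = (k ! : ℂ)⁻¹ * (iteratedDeriv k (g j) 0 * conj (b j z0)) := by
      intro j _
      simp only [smul_eq_mul, sub_zero, one_pow, one_mul]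
      ring
    rw [Finset.sum_congr rfl this, ← Finset.mul_sum, hck k, mul_zero]
  have hsum0 : (∑ j, conj (b j z0) * g j 1) = 0 := by
    have h0 : HasSum (fun _ : ℕ => (0:ℂ)) (∑ j, conj (b j z0) * g j 1) := by
      rw [show (fun _ : ℕ => (0:ℂ)) = fun k : ℕ =>
          ∑ j, conj (b j z0) * ((k ! : ℂ)⁻¹ • ((1:ℂ) - 0) ^ k • iteratedDeriv k (g j) 0) from
        funext fun k => (hterm0 k).symm]
      exact hts2
    exact h0.unique hasSum_zero
  have haff1 : aff 1 = w := by
    simp [haff, hv]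
  calc ∑ j, a j w * conj (b j z0) = ∑ j, conj (b j z0) * g j 1 := by
        refine Finset.sum_congr rfl fun j _ => ?_
        show a j w * conj (b j z0) = conj (b j z0) * a j (aff 1)
        rw [haff1, mul_comm]
      _ = 0 := hsum0

/-- Slice lemma: a holomorphic function on `Ω ⊆ ℂⁿ` vanishing near `s` vanishes on any
ball around `s` contained in `Ω`. -/
lemma vanish_on_ball {n : ℕ} {Ω : Set (Fin n → ℂ)} (hΩ : IsOpen Ω)
    {f : (Fin n → ℂ) → ℂ} (hf : DifferentiableOn ℂ f Ω)
    {s : Fin n → ℂ} {ρ : ℝ} (hρ : Metric.ball s ρ ⊆ Ω)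
    (h0 : f =ᶠ[nhds s] 0) : ∀ w ∈ Metric.ball s ρ, f w = 0 := by
  intro w hw
  by_cases hws : w = s
  · rw [hws]; exact h0.self_of_nhds
  set v : Fin n → ℂ := w - s with hv
  have hvn : 0 < ‖v‖ := by
    rw [norm_pos_iff]
    exact fun hv0 => hws (by rwa [hv, sub_eq_zero] at hv0)
  have hvr : ‖v‖ < ρ := by rw [hv, ← dist_eq_norm]; exact hw
  set aff : ℂ → (Fin n → ℂ) := fun l => s + l • v with haff
  have haffdiff : Differentiable ℂ aff := (differentiable_id.smul_const v).const_add s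
  set R : ℝ := ρ / ‖v‖ with hR
  have hR1 : 1 < R := (one_lt_div hvn).mpr hvr
  have hsub : Metric.ball (0 : ℂ) R ⊆ aff ⁻¹' (Metric.ball s ρ) := by
    intro l hl
    simp only [Metric.mem_ball, dist_zero_right] at hl
    simp only [Set.mem_preimage, Metric.mem_ball, haff, dist_eq_norm, add_sub_cancel_left]
    calc ‖l • v‖ = ‖l‖ * ‖v‖ := norm_smul l v
      _ < R * ‖v‖ := mul_lt_mul_of_pos_right hl hvn
      _ = ρ := by rw [hR, div_mul_cancel₀ _ hvn.ne']
  set g : ℂ → ℂ := fun l => f (aff l) with hg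
  have hgd : DifferentiableOn ℂ g (Metric.ball (0:ℂ) R) :=
    hf.comp haffdiff.differentiableOn fun l hl => hρ (hsub hl)
  have hga : AnalyticOnNhd ℂ g (Metric.ball (0:ℂ) R) :=
    hgd.analyticOnNhd Metric.isOpen_ball
  have h0mem : (0:ℂ) ∈ Metric.ball (0:ℂ) R := by
    simp only [Metric.mem_ball, dist_self]; linarith
  have hev : g =ᶠ[nhds 0] 0 := by
    have htend : Filter.Tendsto aff (nhds 0) (nhds s) := by
      have : aff 0 = s := by simp [haff]
      simpa [this] using (haffdiff.continuous.tendsto 0)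
    exact htend.eventually h0
  have := hga.eqOn_zero_of_preconnected_of_eventuallyEq_zero
    (convex_ball (0:ℂ) R).isPreconnected h0mem hev
  have h1mem : (1:ℂ) ∈ Metric.ball (0:ℂ) R := by
    simp only [Metric.mem_ball, dist_zero_right, norm_one]; exact hR1
  have hg1 : g 1 = 0 := this h1mem
  have haff1 : aff 1 = w := by simp [haff, hv]
  show f w = 0
  rw [← haff1]
  exact hg1

/-- Identity theorem for holomorphic functions on a connected open subset of `ℂⁿ`. -/
lemma eq_zero_of_eventuallyEq_zero {n : ℕ} {Ω : Set (Fin n → ℂ)} (hΩo : IsOpen Ω)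
    (hΩc : IsPreconnected Ω) {f : (Fin n → ℂ) → ℂ} (hf : DifferentiableOn ℂ f Ω)
    {z0 : Fin n → ℂ} (hz0 : z0 ∈ Ω) (h0 : f =ᶠ[nhds z0] 0) : ∀ z ∈ Ω, f z = 0 := by
  set S : Set (Fin n → ℂ) := {z | f =ᶠ[nhds z] 0} with hS
  have hSopen : IsOpen S := by
    rw [isOpen_iff_mem_nhds]
    intro z hz
    exact (hz.eventually_nhds).mono fun y hy => hy
  have hkey : ∀ z ∈ Ω, z ∈ closure S → z ∈ S := by
    intro z hzΩ hzc
    obtain ⟨ρ, hρ0, hρ⟩ := Metric.isOpen_iff.mp hΩo z hzΩ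
    obtain ⟨s, hsS, hds⟩ := Metric.mem_closure_iff.mp hzc (ρ/2) (by linarith)
    have hball : Metric.ball s (ρ/2) ⊆ Ω := by
      intro y hy
      apply hρ
      simp only [Metric.mem_ball] at hy ⊢
      calc dist y z ≤ dist y s + dist s z := dist_triangle y s z
        _ < ρ/2 + ρ/2 := add_lt_add hy (by rw [dist_comm]; exact hds)
        _ = ρ := by ring
    have hvan := vanish_on_ball hΩo hf hball hsS
    have hzmem : z ∈ Metric.ball s (ρ/2) := by
      simp only [Metric.mem_ball]; exact hds
    refine Filter.eventually_of_mem (Metric.isOpen_ball.mem_nhds hzmem) ?_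
    intro y hy; exact hvan y hy
  have hsub : Ω ⊆ S ∪ (closure S)ᶜ := by
    intro z hz
    by_cases hc : z ∈ closure S
    · exact Or.inl (hkey z hz hc)
    · exact Or.inr hc
  have hdisj : Disjoint S (closure S)ᶜ :=
    Set.disjoint_compl_right_iff_subset.mpr subset_closure
  have hΩS : Ω ⊆ S := by
    refine hΩc.subset_left_of_subset_union hSopen (isClosed_closure.isOpen_compl) hdisj hsub ?_
    exact ⟨z0, hz0, h0⟩
  intro z hz
  exact (hΩS hz).self_of_nhds

/-- Global polarization: a vanishing holomorphic×antiholomorphic diagonal pairing on a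
connected open set polarizes to all pairs of points. -/
lemma global_polarization {ι : Type*} [Fintype ι] {n : ℕ} {Ω : Set (Fin n → ℂ)}
    (hΩo : IsOpen Ω) (hΩc : IsPreconnected Ω)
    {a b : ι → (Fin n → ℂ) → ℂ}
    (ha : ∀ j, DifferentiableOn ℂ (a j) Ω) (hb : ∀ j, DifferentiableOn ℂ (b j) Ω)
    (hdiag : ∀ z ∈ Ω, ∑ j, a j z * conj (b j z) = 0) :
    ∀ z ∈ Ω, ∀ w ∈ Ω, ∑ j, a j z * conj (b j w) = 0 := by
  intro z hz w hw
  set F : (Fin n → ℂ) → ℂ := fun x => ∑ j, a j x * conj (b j w) with hF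
  have hFd : DifferentiableOn ℂ F Ω := by
    apply DifferentiableOn.fun_sum
    intro j _
    exact (ha j).mul_const _
  obtain ⟨r, hr0, hball⟩ := Metric.isOpen_iff.mp hΩo w hw
  have hvan : ∀ x ∈ Metric.ball w r, F x = 0 :=
    ball_polarization hΩo ha hb hdiag hball
  have hev : F =ᶠ[nhds w] 0 := by
    refine Filter.eventually_of_mem (Metric.isOpen_ball.mem_nhds (Metric.mem_ball_self hr0)) ?_
    intro y hy; exact hvan y hy
  exact eq_zero_of_eventuallyEq_zero hΩo hΩc hFd hw hev z hz

/-- The sesquilinear pairing on `Fin m → ℂ`, bundled as a linear map in the second slot. -/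
noncomputable def ipR {m : ℕ} (v : Fin m → ℂ) : (Fin m → ℂ) →ₗ[ℂ] ℂ where
  toFun y := ∑ k, conj (v k) * y k
  map_add' x y := by
    simp only [Pi.add_apply, mul_add]
    exact Finset.sum_add_distrib
  map_smul' c x := by
    simp only [Pi.smul_apply, smul_eq_mul, RingHom.id_apply, Finset.mul_sum]
    exact Finset.sum_congr rfl fun k _ => by ring

lemma ipR_apply {m : ℕ} (v y : Fin m → ℂ) : ipR v y = ∑ k, conj (v k) * y k := rfl

lemma ipR_zero_left {m : ℕ} (y : Fin m → ℂ) : ipR 0 y = 0 := by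
  simp [ipR_apply]

lemma ipR_add_left {m : ℕ} (v w y : Fin m → ℂ) : ipR (v + w) y = ipR v y + ipR w y := by
  simp only [ipR_apply, Pi.add_apply, map_add, add_mul]
  exact Finset.sum_add_distrib

lemma ipR_smul_left {m : ℕ} (c : ℂ) (v y : Fin m → ℂ) : ipR (c • v) y = conj c * ipR v y := by
  simp only [ipR_apply, Pi.smul_apply, smul_eq_mul, map_mul, Finset.mul_sum]
  exact Finset.sum_congr rfl fun k _ => by ring

lemma ipR_sub_right {m : ℕ} (v y y' : Fin m → ℂ) : ipR v (y - y') = ipR v y - ipR v y' :=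
  map_sub (ipR v) y y'

lemma ipR_self_eq_zero {m : ℕ} {v : Fin m → ℂ} (hv : ipR v v = 0) : v = 0 := by
  have hre : ∑ k, Complex.normSq (v k) = 0 := by
    have hcast : ipR v v = ((∑ k, Complex.normSq (v k) : ℝ) : ℂ) := by
      rw [ipR_apply]
      push_cast
      exact Finset.sum_congr rfl fun k _ => by rw [mul_comm, Complex.mul_conj]
    rw [hv] at hcast
    exact_mod_cast hcast.symm
  funext k
  have hk : Complex.normSq (v k) = 0 := by
    have := (Finset.sum_eq_zero_iff_of_nonneg
      (fun k _ => Complex.normSq_nonneg (v k))).mp hre k (Finset.mem_univ k)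
    exact this
  exact Complex.normSq_eq_zero.mp hk

/-- If the components of `f` are linearly independent as functions on `Ω`, then the
values `(f ⬝ z)_{z ∈ Ω}` span all of `ℂᵐ`. -/
lemma span_values_top {n m : ℕ} {Ω : Set (Fin n → ℂ)} {f : Fin m → (Fin n → ℂ) → ℂ}
    (hli : LinearIndependent ℂ (fun k => fun z : Ω => f k z.1)) :
    Submodule.span ℂ ((fun z => (fun k => f k z)) '' Ω) = ⊤ := by
  by_contra hne
  obtain ⟨φf, hφne, hφ⟩ := Submodule.exists_dual_map_eq_bot_of_lt_top
    (p := Submodule.span ℂ ((fun z => (fun k => f k z)) '' Ω))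
    (lt_top_iff_ne_top.mpr hne) inferInstance
  have hvanish : ∀ z ∈ Ω, φf (fun k => f k z) = 0 := by
    intro z hz
    have hmem : (fun k => f k z) ∈ Submodule.span ℂ ((fun z => (fun k => f k z)) '' Ω) :=
      Submodule.subset_span ⟨z, hz, rfl⟩
    have : φf (fun k => f k z) ∈ Submodule.map φf
        (Submodule.span ℂ ((fun z => (fun k => f k z)) '' Ω)) :=
      Submodule.mem_map_of_mem hmem
    rw [hφ] at this
    exact this
  set c : Fin m → ℂ := fun k => φf (fun j => if k = j then 1 else 0) with hc
  have hrep : ∀ x : Fin m → ℂ, φf x = ∑ k, x k * c k := by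
    intro x
    rw [LinearMap.pi_apply_eq_sum_univ φf x]
    exact Finset.sum_congr rfl fun k _ => by rw [smul_eq_mul]
  have hc0 : ∀ k, c k = 0 := by
    have := Fintype.linearIndependent_iff.mp hli c ?_
    · exact this
    · funext z
      have := hvanish z.1 z.2
      rw [hrep] at this
      simpa [mul_comm] using this
  apply hφne
  apply LinearMap.ext
  intro x
  rw [hrep]
  simp [hc0]


open Matrix in
/-- D'Angelo's lemma (uniqueness up to a unitary matrix): if `h` and `h̃` are holomorphic
mappings `Ω → ℂᵐ` on a connected open set `Ω ⊆ ℂⁿ`, each with linearly independent components,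
and `Σₖ|hₖ(z)|² = Σₖ|h̃ₖ(z)|²` on `Ω`, then `h = U·h̃` for some unitary `m×m` matrix `U`. -/
theorem dAngelo_unitary_uniqueness
    (n m : ℕ) (Ω : Set (Fin n → ℂ))
    (hΩo : IsOpen Ω) (hΩc : IsConnected Ω)
    (h h' : Fin m → (Fin n → ℂ) → ℂ)
    (hh : ∀ k, DifferentiableOn ℂ (h k) Ω)
    (hh' : ∀ k, DifferentiableOn ℂ (h' k) Ω)
    (hli : LinearIndependent ℂ (fun k => fun z : Ω => h k z.1))
    (hli' : LinearIndependent ℂ (fun k => fun z : Ω => h' k z.1))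
    (heq : ∀ z ∈ Ω, ∑ k, ‖h k z‖ ^ 2 = ∑ k, ‖h' k z‖ ^ 2) :
    ∃ U : Matrix.unitaryGroup (Fin m) ℂ,
      ∀ z ∈ Ω, (fun k => h k z) =
        (U : Matrix (Fin m) (Fin m) ℂ) *ᵥ (fun k => h' k z) := by
  classical
  have hΩc' : IsPreconnected Ω := hΩc.isPreconnected
  -- Step A: polarization
  have stepA : ∀ z ∈ Ω, ∀ w ∈ Ω,
      ∑ k, h k z * conj (h k w) = ∑ k, h' k z * conj (h' k w) := by
    set a : (Fin m ⊕ Fin m) → (Fin n → ℂ) → ℂ := Sum.elim h h' with ha'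
    set b : (Fin m ⊕ Fin m) → (Fin n → ℂ) → ℂ := Sum.elim h (fun k x => -(h' k x)) with hb'
    have ha : ∀ j, DifferentiableOn ℂ (a j) Ω := by
      rintro (j | j)
      · exact hh j
      · exact hh' j
    have hb : ∀ j, DifferentiableOn ℂ (b j) Ω := by
      rintro (j | j)
      · exact hh j
      · exact (hh' j).neg
    have hnorm : ∀ (x : ℂ), x * conj x = ((‖x‖ ^ 2 : ℝ) : ℂ) := by
      intro x
      rw [Complex.mul_conj, Complex.normSq_eq_norm_sq]
    have hdiag : ∀ z ∈ Ω, ∑ j, a j z * conj (b j z) = 0 := by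
      intro z hz
      rw [Fintype.sum_sum_type]
      have h1 : ∀ k : Fin m, a (Sum.inl k) z * conj (b (Sum.inl k) z)
          = ((‖h k z‖ ^ 2 : ℝ) : ℂ) := fun k => hnorm (h k z)
      have h2 : ∀ k : Fin m, a (Sum.inr k) z * conj (b (Sum.inr k) z)
          = -((‖h' k z‖ ^ 2 : ℝ) : ℂ) := by
        intro k
        show h' k z * conj (-(h' k z)) = _
        rw [map_neg, mul_neg, hnorm (h' k z)]
      rw [Finset.sum_congr rfl fun k _ => h1 k, Finset.sum_congr rfl fun k _ => h2 k]
      rw [Finset.sum_neg_distrib]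
      rw [← Complex.ofReal_sum, ← Complex.ofReal_sum]
      rw [heq z hz]
      ring
    have hpol := global_polarization hΩo hΩc' ha hb hdiag
    intro z hz w hw
    have hzw := hpol z hz w hw
    rw [Fintype.sum_sum_type] at hzw
    have h1 : ∀ k : Fin m, a (Sum.inl k) z * conj (b (Sum.inl k) w)
        = h k z * conj (h k w) := fun k => rfl
    have h2 : ∀ k : Fin m, a (Sum.inr k) z * conj (b (Sum.inr k) w)
        = -(h' k z * conj (h' k w)) := by
      intro k
      show h' k z * conj (-(h' k w)) = _
      rw [map_neg, mul_neg]
    rw [Finset.sum_congr rfl fun k _ => h1 k, Finset.sum_congr rfl fun k _ => h2 k,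
      Finset.sum_neg_distrib] at hzw
    linear_combination hzw
  -- pairing version
  have P : ∀ z ∈ Ω, ∀ w ∈ Ω,
      ipR (fun k => h k z) (fun k => h k w) = ipR (fun k => h' k z) (fun k => h' k w) := by
    intro z hz w hw
    rw [ipR_apply, ipR_apply]
    have := stepA w hw z hz
    calc ∑ k, conj (h k z) * h k w = ∑ k, h k w * conj (h k z) :=
          Finset.sum_congr rfl fun k _ => mul_comm _ _
      _ = ∑ k, h' k w * conj (h' k z) := this
      _ = ∑ k, conj (h' k z) * h' k w := Finset.sum_congr rfl fun k _ => mul_comm _ _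
  -- spans
  have htop : Submodule.span ℂ ((fun z => (fun k => h k z)) '' Ω) = ⊤ := span_values_top hli
  have htop' : Submodule.span ℂ ((fun z => (fun k => h' k z)) '' Ω) = ⊤ := span_values_top hli'
  -- basis from the values of h'
  obtain ⟨bs, hbsub, hbspan, hbli⟩ :=
    exists_linearIndependent ℂ ((fun z => (fun k => h' k z)) '' Ω)
  have hbs_top : ⊤ ≤ Submodule.span ℂ (Set.range ((↑) : bs → (Fin m → ℂ))) := by
    rw [Subtype.range_coe, hbspan, htop']
  set B := Module.Basis.mk hbli hbs_top with hB
  have hzsel : ∀ e : bs, ∃ z, z ∈ Ω ∧ (fun k => h' k z) = (e : Fin m → ℂ) := by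
    intro e
    obtain ⟨z, hz, hze⟩ := hbsub e.2
    exact ⟨z, hz, hze⟩
  choose zs hzsΩ hzsE using hzsel
  set L : (Fin m → ℂ) →ₗ[ℂ] (Fin m → ℂ) := B.constr ℂ (fun e => (fun k => h k (zs e))) with hL
  have hLbasis : ∀ e : bs, L (e : Fin m → ℂ) = fun k => h k (zs e) := by
    intro e
    conv_lhs => rw [show (e : Fin m → ℂ) = B e from (Module.Basis.mk_apply hbli hbs_top e).symm]
    exact B.constr_basis ℂ _ e
  -- Claim A' : pairing against values of h intertwines L
  have A' : ∀ z ∈ Ω, (ipR (fun k => h k z)).comp L = ipR (fun k => h' k z) := by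
    intro z hz
    apply B.ext
    intro e
    rw [hB, Module.Basis.mk_apply]
    simp only [LinearMap.comp_apply]
    rw [hLbasis e, P z hz (zs e) (hzsΩ e), hzsE e]
  -- Claim A : L maps values of h' to values of h
  have clA : ∀ w ∈ Ω, L (fun k => h' k w) = (fun k => h k w) := by
    intro w hw
    set u : Fin m → ℂ := L (fun k => h' k w) - (fun k => h k w) with hu
    have hvan : ∀ x ∈ Submodule.span ℂ ((fun z => (fun k => h k z)) '' Ω), ipR x u = 0 := by
      intro x hx
      induction hx using Submodule.span_induction with
      | mem x hxm =>
        obtain ⟨z, hz, rfl⟩ := hxm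
        rw [hu, ipR_sub_right]
        have h1 : ipR (fun k => h k z) (L (fun k => h' k w))
            = ipR (fun k => h' k z) (fun k => h' k w) := by
          have := congrArg (fun (g : (Fin m → ℂ) →ₗ[ℂ] ℂ) => g (fun k => h' k w)) (A' z hz)
          simpa using this
        rw [h1, ← P z hz w hw, sub_self]
      | zero => exact ipR_zero_left u
      | add x y hxm hym ihx ihy => rw [ipR_add_left, ihx, ihy, add_zero]
      | smul c x hxm ih => rw [ipR_smul_left, ih, mul_zero]
    have huu : ipR u u = 0 := hvan u (by rw [htop]; exact Submodule.mem_top)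
    have hu0 : u = 0 := ipR_self_eq_zero huu
    rw [hu] at hu0
    exact sub_eq_zero.mp hu0
  -- B1 : one-sided inner product preservation
  have B1 : ∀ w ∈ Ω, ∀ x ∈ Submodule.span ℂ ((fun z => (fun k => h' k z)) '' Ω),
      ipR (L x) (fun k => h k w) = ipR x (fun k => h' k w) := by
    intro w hw x hx
    induction hx using Submodule.span_induction with
    | mem x hxm =>
      obtain ⟨z, hz, rfl⟩ := hxm
      rw [clA z hz]
      exact P z hz w hw
    | zero => rw [_root_.map_zero, ipR_zero_left, ipR_zero_left]
    | add x y hxm hym ihx ihy => rw [map_add, ipR_add_left, ipR_add_left, ihx, ihy]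
    | smul c x hxm ih => rw [_root_.map_smul, ipR_smul_left, ipR_smul_left, ih]
  -- B2 : full inner product preservation
  have B2 : ∀ x y : Fin m → ℂ, ipR (L x) (L y) = ipR x y := by
    intro x y
    have hext : (ipR (L x)).comp L = ipR x := by
      apply B.ext
      intro e
      rw [hB, Module.Basis.mk_apply]
      simp only [LinearMap.comp_apply]
      rw [hLbasis e]
      have hxmem : x ∈ Submodule.span ℂ ((fun z => (fun k => h' k z)) '' Ω) := by
        rw [htop']; exact Submodule.mem_top
      rw [B1 (zs e) (hzsΩ e) x hxmem, hzsE e]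
    have := congrArg (fun (g : (Fin m → ℂ) →ₗ[ℂ] ℂ) => g y) hext
    simpa using this
  -- the unitary matrix
  set U : Matrix (Fin m) (Fin m) ℂ := LinearMap.toMatrix' L with hUdef
  have hU : U ∈ Matrix.unitaryGroup (Fin m) ℂ := by
    rw [Matrix.mem_unitaryGroup_iff']
    ext i j
    rw [Matrix.mul_apply, Matrix.one_apply]
    have hUa : ∀ p q, U p q = L (fun j' => if j' = q then 1 else 0) p := fun p q =>
      (LinearMap.toMatrix'_apply L p q).trans (by rw [show (Pi.single q 1 : Fin m → ℂ) = fun j' => if j' = q then 1 else 0 from funext fun j' => Pi.single_apply q 1 j'])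
    have e1 : ∑ k, (star U) i k * U k j
        = ipR (L (fun j' => if j' = i then 1 else 0)) (L (fun j' => if j' = j then 1 else 0)) := by
      rw [ipR_apply]
      refine Finset.sum_congr rfl fun k _ => ?_
      rw [Matrix.star_apply, hUa k i, hUa k j]
      rfl
    rw [e1, B2]
    rw [ipR_apply]
    by_cases hij : i = j
    · subst hij
      simp [apply_ite (starRingEnd ℂ), ite_mul, one_mul, zero_mul, Finset.sum_ite_eq']
    · simp [apply_ite (starRingEnd ℂ), ite_mul, one_mul, zero_mul, Finset.sum_ite_eq', hij]
      exact fun hji => hij hji.symm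
  refine ⟨⟨U, hU⟩, ?_⟩
  intro z hz
  have hmv : U *ᵥ (fun k => h' k z) = L (fun k => h' k z) := by
    rw [← Matrix.toLin'_apply, hUdef, Matrix.toLin'_toMatrix']
  rw [hmv, clA z hz]
end
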